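/- arXiv:1511.02337 — 7 statements merged into one kernel-verified Lean document; each statement's English description precedes it below -/
import Mathlib

section
/- Let X be a real vector space with a quasi-norm ‖·‖ whose modulus of concavity K ≥ 1 satisfies K = 2^{1/r−1} for 0 < r ≤ 1. Then the following are equivalent: (a) X is complete (i.e. a quasi-Banach space); (b) for every 0 < r′ ≤ r, every sequence (xₙ) ⊆ X with Σₙ ‖xₙ‖^{r′} < ∞ has Σₙ xₙ convergent in X; (c) there exists r′ > 0 such that every sequence (xₙ) ⊆ X with Σₙ ‖xₙ‖^{r′} < ∞ has Σₙ xₙ convergent in X. -/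
open Filter Topology

/-- A quasi-norm on a real vector space `X`: it vanishes exactly at `0`, is absolutely
homogeneous, and satisfies the triangle inequality up to a constant `K ≥ 1`. -/
structure QuasiNorm (X : Type*) [AddCommGroup X] [Module ℝ X] where
  qnorm : X → ℝ
  qnorm_nonneg : ∀ x, 0 ≤ qnorm x
  qnorm_eq_zero_iff : ∀ x, qnorm x = 0 ↔ x = 0
  qnorm_smul : ∀ (a : ℝ) (x : X), qnorm (a • x) = |a| * qnorm x
  K : ℝ
  one_le_K : 1 ≤ K
  qnorm_add_le : ∀ x y, qnorm (x + y) ≤ K * (qnorm x + qnorm y)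

variable {X : Type*} [AddCommGroup X] [Module ℝ X]

/-- `X` is complete for the quasi-norm: every Cauchy sequence converges. -/
def QuasiNorm.IsComplete (N : QuasiNorm X) : Prop :=
  ∀ x : ℕ → X,
    (∀ ε : ℝ, 0 < ε → ∃ M : ℕ, ∀ m ≥ M, ∀ n ≥ M, N.qnorm (x m - x n) < ε) →
    ∃ l : X, Tendsto (fun n => N.qnorm (l - x n)) atTop (𝓝 0)

/-- Convergence of the series `∑ xₙ` in the quasi-norm topology. -/
def QuasiNorm.SeriesConv (N : QuasiNorm X) (x : ℕ → X) : Prop :=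
  ∃ l : X, Tendsto (fun k => N.qnorm (l - ∑ j ∈ Finset.range k, x j)) atTop (𝓝 0)

section KPR

/-- Auxiliary lemma A: if the levels are pairwise distinct and bounded below by `b`,
then `H` of the sum is at most `2^(1-b)`. -/
private lemma kpr_lemA (H : X → ℝ) (h0 : H 0 = 0)
    (hmax : ∀ v w, H (v + w) ≤ 2 * max (H v) (H w)) :
    ∀ (n : ℕ) (m : Multiset (X × ℤ)), Multiset.card m = n →
      (m.map Prod.snd).Nodup →
      (∀ p ∈ m, H p.1 ≤ (2:ℝ) ^ (-p.2)) →
      ∀ b : ℤ, (∀ p ∈ m, b ≤ p.2) →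
      H (m.map Prod.fst).sum ≤ (2:ℝ) ^ (1 - b) := by
  classical
  intro n
  induction n using Nat.strong_induction_on with
  | _ n ih =>
    intro m hcard hnd hH b hb
    rcases eq_or_ne m 0 with rfl | hm
    · simpa [h0] using (zpow_pos (by norm_num : (0:ℝ) < 2) (1 - b)).le
    · have hmapne : m.map Prod.snd ≠ 0 := by simpa [Multiset.map_eq_zero]
      have htne : (m.map Prod.snd).toFinset.Nonempty := by
        rw [Multiset.toFinset_nonempty]; exact hmapne
      obtain ⟨p, hpm, hpa⟩ := Multiset.mem_map.1 (show
        (m.map Prod.snd).toFinset.min' htne ∈ m.map Prod.snd by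
        simpa [Multiset.mem_toFinset] using (m.map Prod.snd).toFinset.min'_mem htne)
      have hamin : ∀ c ∈ m.map Prod.snd, p.2 ≤ c := fun c hc => by
        rw [hpa]; exact Finset.min'_le _ _ (Multiset.mem_toFinset.2 hc)
      have hm' : m = p ::ₘ m.erase p := (Multiset.cons_erase hpm).symm
      set rest := m.erase p with hrestdef
      have hrm : ∀ q, q ∈ rest → q ∈ m := fun q hq =>
        Multiset.mem_of_mem_erase (hrestdef ▸ hq)
      have hndc : p.2 ∉ rest.map Prod.snd ∧ (rest.map Prod.snd).Nodup := by
        rw [hm', Multiset.map_cons, Multiset.nodup_cons] at hnd; exact hnd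
      have hrestlev : ∀ q ∈ rest, p.2 + 1 ≤ q.2 := by
        intro q hq
        have h1 : p.2 ≤ q.2 :=
          hamin _ (Multiset.mem_map_of_mem _ (hrm _ hq))
        have h2 : q.2 ≠ p.2 := fun he =>
          hndc.1 (he ▸ Multiset.mem_map_of_mem _ hq)
        omega
      have hcards : Multiset.card m = Multiset.card rest + 1 := by
        rw [hm']; simp
      have hIH : H (rest.map Prod.fst).sum ≤ (2:ℝ) ^ (1 - (p.2 + 1)) :=
        ih (Multiset.card rest) (by omega) rest rfl hndc.2
          (fun q hq => hH q (hrm _ hq)) (p.2 + 1) hrestlev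
      have hexp : (1 : ℤ) - (p.2 + 1) = -p.2 := by ring
      rw [hexp] at hIH
      have hsum : (m.map Prod.fst).sum = p.1 + (rest.map Prod.fst).sum := by
        rw [hm']; simp
      rw [hsum]
      calc H (p.1 + (rest.map Prod.fst).sum)
          ≤ 2 * max (H p.1) (H (rest.map Prod.fst).sum) := hmax _ _
        _ ≤ 2 * (2:ℝ) ^ (-p.2) := by
            have := hH p hpm
            gcongr
            exact max_le this hIH
        _ = (2:ℝ) ^ (1 - p.2) := by
            rw [sub_eq_add_neg, zpow_add₀ (two_ne_zero), zpow_one]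
        _ ≤ (2:ℝ) ^ (1 - b) := by
            have hbp : b ≤ p.2 := hb p hpm
            exact zpow_le_zpow_right₀ one_le_two (by omega)

/-- Auxiliary lemma M: the merging argument. -/
private lemma kpr_lemM (H : X → ℝ) (h0 : H 0 = 0)
    (hmax : ∀ v w, H (v + w) ≤ 2 * max (H v) (H w)) :
    ∀ (n : ℕ) (m : Multiset (X × ℤ)), Multiset.card m = n →
      (∀ p ∈ m, H p.1 ≤ (2:ℝ) ^ (-p.2)) →
      H (m.map Prod.fst).sum ≤ 2 * (m.map (fun p => (2:ℝ) ^ (-p.2))).sum := by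
  classical
  intro n
  induction n using Nat.strong_induction_on with
  | _ n ih =>
    intro m hcard hH
    rcases eq_or_ne m 0 with rfl | hm
    · simp [h0]
    have hwnn : ∀ s : Multiset (X × ℤ), 0 ≤ (s.map (fun p => (2:ℝ) ^ (-p.2))).sum := by
      intro s
      refine Multiset.sum_nonneg ?_
      intro a ha
      obtain ⟨q, _, rfl⟩ := Multiset.mem_map.1 ha
      positivity
    by_cases hnd : (m.map Prod.snd).Nodup
    · -- distinct levels: use lemma A with the minimal level
      have hmapne : m.map Prod.snd ≠ 0 := by simpa [Multiset.map_eq_zero]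
      have htne : (m.map Prod.snd).toFinset.Nonempty := by
        rw [Multiset.toFinset_nonempty]; exact hmapne
      obtain ⟨p, hpm, hpa⟩ := Multiset.mem_map.1 (show
        (m.map Prod.snd).toFinset.min' htne ∈ m.map Prod.snd by
        simpa [Multiset.mem_toFinset] using (m.map Prod.snd).toFinset.min'_mem htne)
      have hamin : ∀ q ∈ m, p.2 ≤ q.2 := fun q hq => by
        rw [hpa]; exact Finset.min'_le _ _ (Multiset.mem_toFinset.2
          (Multiset.mem_map_of_mem _ hq))
      have hA := kpr_lemA H h0 hmax (Multiset.card m) m rfl hnd hH p.2 hamin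
      have hws : (2:ℝ) ^ (-p.2) ≤ (m.map (fun p => (2:ℝ) ^ (-p.2))).sum := by
        have hm' : m = p ::ₘ m.erase p := (Multiset.cons_erase hpm).symm
        rw [hm', Multiset.map_cons, Multiset.sum_cons]
        have := hwnn (m.erase p)
        linarith
      calc H (m.map Prod.fst).sum ≤ (2:ℝ) ^ (1 - p.2) := hA
        _ = 2 * (2:ℝ) ^ (-p.2) := by
            rw [sub_eq_add_neg, zpow_add₀ (two_ne_zero), zpow_one]
        _ ≤ 2 * (m.map (fun p => (2:ℝ) ^ (-p.2))).sum := by linarith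
    · -- a duplicate level: merge two elements with the same level
      obtain ⟨a, hacount⟩ : ∃ a, 1 < (m.map Prod.snd).count a := by
        rw [Multiset.nodup_iff_count_le_one] at hnd; push_neg at hnd; exact hnd
      have hamem : a ∈ m.map Prod.snd := Multiset.count_pos.1 (by omega)
      obtain ⟨p, hpm, hpa⟩ := Multiset.mem_map.1 hamem
      have hm1 : m = p ::ₘ m.erase p := (Multiset.cons_erase hpm).symm
      set rest := m.erase p with hrestdef
      have hrm : ∀ s, s ∈ rest → s ∈ m := fun s hs =>
        Multiset.mem_of_mem_erase (hrestdef ▸ hs)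
      have hacount2 : 0 < (rest.map Prod.snd).count a := by
        have hcc : (m.map Prod.snd).count a = (rest.map Prod.snd).count a + 1 := by
          conv_lhs => rw [hm1]
          rw [Multiset.map_cons, hpa, Multiset.count_cons_self]
        omega
      obtain ⟨q, hqr, hqa⟩ := Multiset.mem_map.1 (Multiset.count_pos.1 hacount2)
      have hm2 : rest = q ::ₘ rest.erase q := (Multiset.cons_erase hqr).symm
      set rest2 := rest.erase q with hrest2def
      have hrm2 : ∀ s, s ∈ rest2 → s ∈ rest := fun s hs =>
        Multiset.mem_of_mem_erase (hrest2def ▸ hs)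
      set pq : X × ℤ := (p.1 + q.1, a - 1) with hpqdef
      have hqm : q ∈ m := hrm _ hqr
      have hcards : Multiset.card m = Multiset.card rest2 + 2 := by
        conv_lhs => rw [hm1]
        rw [Multiset.card_cons]
        conv_lhs => rw [hm2]
        rw [Multiset.card_cons]
      -- the merged head satisfies the level bound
      have hhead : H pq.1 ≤ (2:ℝ) ^ (-pq.2) := by
        have hp' : H p.1 ≤ (2:ℝ) ^ (-a) := by
          have := hH p hpm; rwa [hpa] at this
        have hq' : H q.1 ≤ (2:ℝ) ^ (-a) := by
          have := hH q hqm; rwa [hqa] at this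
        have h2a : (2:ℝ) ^ (-(a - 1)) = 2 * (2:ℝ) ^ (-a) := by
          have he : -(a - 1) = 1 + -a := by ring
          rw [he, zpow_add₀ (two_ne_zero : (2:ℝ) ≠ 0), zpow_one]
        calc H (p.1 + q.1) ≤ 2 * max (H p.1) (H q.1) := hmax _ _
          _ ≤ 2 * (2:ℝ) ^ (-a) := by
              gcongr
              exact max_le hp' hq'
          _ = (2:ℝ) ^ (-pq.2) := by rw [hpqdef]; exact h2a.symm
      have hIH := ih (Multiset.card rest2 + 1) (by omega) (pq ::ₘ rest2) (by simp)
        (by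
          intro s hs
          rcases Multiset.mem_cons.1 hs with rfl | hs2
          · exact hhead
          · exact hH s (hrm _ (hrm2 _ hs2)))
      -- sums of vectors agree
      have hvec : ((pq ::ₘ rest2).map Prod.fst).sum = (m.map Prod.fst).sum := by
        conv_rhs => rw [hm1, Multiset.map_cons, Multiset.sum_cons, hm2,
          Multiset.map_cons, Multiset.sum_cons]
        rw [Multiset.map_cons, Multiset.sum_cons, hpqdef]
        exact add_assoc _ _ _
      -- sums of weights agree
      have hwt : ((pq ::ₘ rest2).map (fun s => (2:ℝ) ^ (-s.2))).sum
          = (m.map (fun s => (2:ℝ) ^ (-s.2))).sum := by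
        conv_rhs => rw [hm1, Multiset.map_cons, Multiset.sum_cons, hm2,
          Multiset.map_cons, Multiset.sum_cons]
        rw [Multiset.map_cons, Multiset.sum_cons, hpqdef, hpa, hqa]
        have he : -((a : ℤ) - 1) = 1 + -a := by ring
        rw [he, zpow_add₀ (two_ne_zero : (2:ℝ) ≠ 0), zpow_one]
        ring
      rw [hvec, hwt] at hIH
      exact hIH

/-- The Kalton–Peck–Roberts inequality with constant 4, for an abstract functional `H`
satisfying `H (x + y) ≤ 2 max (H x) (H y)`. -/
private lemma kpr_finset (H : X → ℝ) (h0 : H 0 = 0) (hnn : ∀ v, 0 ≤ H v)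
    (hpos : ∀ v : X, v ≠ 0 → 0 < H v)
    (hmax : ∀ v w, H (v + w) ≤ 2 * max (H v) (H w))
    (F : Finset ℕ) (x : ℕ → X) :
    H (∑ j ∈ F, x j) ≤ 4 * ∑ j ∈ F, H (x j) := by
  classical
  set G := F.filter (fun j => x j ≠ 0) with hGdef
  have hGsum : ∑ j ∈ G, x j = ∑ j ∈ F, x j := Finset.sum_filter_ne_zero F
  set lev : ℕ → ℤ := fun j => -(Int.log 2 (H (x j)) + 1) with hlevdef
  set m : Multiset (X × ℤ) := G.val.map (fun j => (x j, lev j)) with hmdef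
  have hHm : ∀ p ∈ m, H p.1 ≤ (2:ℝ) ^ (-p.2) := by
    intro p hp
    obtain ⟨j, hj, rfl⟩ := Multiset.mem_map.1 hp
    have he : -lev j = Int.log 2 (H (x j)) + 1 := by simp [hlevdef]
    rw [he]
    exact (Int.lt_zpow_succ_log_self (by norm_num) (H (x j))).le
  have key := kpr_lemM H h0 hmax (Multiset.card m) m rfl hHm
  have hvec : (m.map Prod.fst).sum = ∑ j ∈ G, x j := by
    rw [hmdef, Multiset.map_map]
    rfl
  have hwt : (m.map (fun p => (2:ℝ) ^ (-p.2))).sum ≤ ∑ j ∈ G, 2 * H (x j) := by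
    rw [hmdef, Multiset.map_map]
    have hbd : ∀ j ∈ G, (2:ℝ) ^ (-lev j) ≤ 2 * H (x j) := by
      intro j hj
      have hxj : x j ≠ 0 := by
        have := (Finset.mem_filter.1 (hGdef ▸ hj)).2
        simpa using this
      have hHpos : 0 < H (x j) := hpos _ hxj
      have he : -lev j = Int.log 2 (H (x j)) + 1 := by simp [hlevdef]
      rw [he, zpow_add₀ (two_ne_zero : (2:ℝ) ≠ 0), zpow_one]
      have hlog := Int.zpow_log_le_self (b := 2) (R := ℝ) (by norm_num) hHpos
      push_cast at hlog ⊢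
      nlinarith
    calc (G.val.map (fun j => ((fun k => ((x k, lev k) : X × ℤ)) j).2 |>
          (fun t => (2:ℝ) ^ (-t)))).sum
        = ∑ j ∈ G, (2:ℝ) ^ (-lev j) := rfl
      _ ≤ ∑ j ∈ G, 2 * H (x j) := Finset.sum_le_sum hbd
  rw [hvec, hGsum] at key
  have hsub : ∑ j ∈ G, H (x j) ≤ ∑ j ∈ F, H (x j) :=
    Finset.sum_le_sum_of_subset_of_nonneg (hGdef ▸ Finset.filter_subset _ _)
      (fun j _ _ => hnn _)
  calc H (∑ j ∈ F, x j) ≤ 2 * (m.map (fun p => (2:ℝ) ^ (-p.2))).sum := key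
    _ ≤ 2 * ∑ j ∈ G, 2 * H (x j) := by linarith
    _ = 4 * ∑ j ∈ G, H (x j) := by
        rw [Finset.mul_sum, Finset.mul_sum]
        exact Finset.sum_congr rfl fun j _ => by ring
    _ ≤ 4 * ∑ j ∈ F, H (x j) := by linarith

end KPR

section Main

variable (N : QuasiNorm X)

private lemma qn_zero : N.qnorm 0 = 0 := (N.qnorm_eq_zero_iff 0).2 rfl

private lemma qn_pos {v : X} (hv : v ≠ 0) : 0 < N.qnorm v :=
  lt_of_le_of_ne (N.qnorm_nonneg v) fun h => hv ((N.qnorm_eq_zero_iff v).1 h.symm)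

private lemma qn_neg (v : X) : N.qnorm (-v) = N.qnorm v := by
  have h := N.qnorm_smul (-1) v
  rw [neg_one_smul] at h
  simpa using h

/-- (a) ⇒ (b): completeness gives the summability criterion for all `r' ≤ r`. -/
private lemma key_forward (r : ℝ) (hr0 : 0 < r) (hr1 : r ≤ 1)
    (hK : N.K = 2 ^ (1 / r - 1)) (hc : N.IsComplete) :
    ∀ r' : ℝ, 0 < r' → r' ≤ r → ∀ x : ℕ → X,
      Summable (fun n => N.qnorm (x n) ^ r') → N.SeriesConv x := by
  intro r' hr' hr'r x hsum
  set H : X → ℝ := fun v => N.qnorm v ^ r' with hHdef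
  have h0 : H 0 = 0 := by
    simp only [hHdef, qn_zero]
    exact Real.zero_rpow (ne_of_gt hr')
  have hnn : ∀ v, 0 ≤ H v := fun v => Real.rpow_nonneg (N.qnorm_nonneg v) r'
  have hposH : ∀ v : X, v ≠ 0 → 0 < H v := fun v hv =>
    Real.rpow_pos_of_pos (qn_pos N hv) r'
  have hmaxpow : ∀ a b : ℝ, 0 ≤ a → 0 ≤ b →
      (max a b) ^ r' = max (a ^ r') (b ^ r') := by
    intro a b ha hb
    rcases le_total a b with h | h
    · rw [max_eq_right h, max_eq_right (Real.rpow_le_rpow ha h hr'.le)]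
    · rw [max_eq_left h, max_eq_left (Real.rpow_le_rpow hb h hr'.le)]
  have hmax : ∀ v w, H (v + w) ≤ 2 * max (H v) (H w) := by
    intro v w
    have hannn : 0 ≤ N.qnorm v := N.qnorm_nonneg v
    have hbnnn : 0 ≤ N.qnorm w := N.qnorm_nonneg w
    have hmnn : 0 ≤ max (N.qnorm v) (N.qnorm w) := le_max_of_le_left hannn
    have h2K : 2 * N.K = (2:ℝ) ^ (1 / r) := by
      rw [hK]
      rw [show (2:ℝ) * 2 ^ (1/r - 1) = 2 ^ (1:ℝ) * 2 ^ (1/r - 1) by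
        rw [Real.rpow_one]]
      rw [← Real.rpow_add (by norm_num : (0:ℝ) < 2)]
      norm_num
    have h1 : N.qnorm (v + w) ≤ (2:ℝ) ^ (1 / r) * max (N.qnorm v) (N.qnorm w) := by
      calc N.qnorm (v + w) ≤ N.K * (N.qnorm v + N.qnorm w) := N.qnorm_add_le v w
        _ ≤ N.K * (2 * max (N.qnorm v) (N.qnorm w)) := by
            have hKnn : 0 ≤ N.K := le_trans zero_le_one N.one_le_K
            have : N.qnorm v + N.qnorm w ≤ 2 * max (N.qnorm v) (N.qnorm w) := by
              have h1 := le_max_left (N.qnorm v) (N.qnorm w)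
              have h2 := le_max_right (N.qnorm v) (N.qnorm w)
              linarith
            exact mul_le_mul_of_nonneg_left this hKnn
        _ = (2:ℝ) ^ (1 / r) * max (N.qnorm v) (N.qnorm w) := by rw [← h2K]; ring
    have hexp : (1 / r) * r' ≤ 1 := by
      rw [div_mul_eq_mul_div, one_mul, div_le_one hr0]
      exact hr'r
    calc H (v + w) = N.qnorm (v + w) ^ r' := rfl
      _ ≤ ((2:ℝ) ^ (1 / r) * max (N.qnorm v) (N.qnorm w)) ^ r' :=
          Real.rpow_le_rpow (N.qnorm_nonneg _) h1 hr'.le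
      _ = ((2:ℝ) ^ (1 / r)) ^ r' * (max (N.qnorm v) (N.qnorm w)) ^ r' :=
          Real.mul_rpow (Real.rpow_nonneg (by norm_num) _) hmnn
      _ = (2:ℝ) ^ ((1 / r) * r') * (max (N.qnorm v) (N.qnorm w)) ^ r' := by
          rw [← Real.rpow_mul (by norm_num : (0:ℝ) ≤ 2)]
      _ ≤ (2:ℝ) ^ (1:ℝ) * (max (N.qnorm v) (N.qnorm w)) ^ r' := by
          refine mul_le_mul_of_nonneg_right
            (Real.rpow_le_rpow_of_exponent_le one_le_two hexp)
            (Real.rpow_nonneg hmnn _)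
      _ = 2 * max (H v) (H w) := by
          rw [Real.rpow_one, hmaxpow _ _ hannn hbnnn]
  -- the partial sums
  set S : ℕ → X := fun k => ∑ j ∈ Finset.range k, x j with hSdef
  have hf : Summable (fun n => H (x n)) := hsum
  -- tail control
  have htail : ∀ δ : ℝ, 0 < δ → ∃ M : ℕ, ∀ m n : ℕ, M ≤ n → n ≤ m →
      ∑ j ∈ Finset.Ico n m, H (x j) < δ := by
    intro δ hδ
    have hT := hf.hasSum.tendsto_sum_nat
    have hCS : CauchySeq (fun k => ∑ j ∈ Finset.range k, H (x j)) := hT.cauchySeq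
    rw [Metric.cauchySeq_iff] at hCS
    obtain ⟨M, hM⟩ := hCS δ hδ
    refine ⟨M, fun m n hn hnm => ?_⟩
    have hd := hM m (le_trans hn hnm) n hn
    rw [Real.dist_eq] at hd
    rw [Finset.sum_Ico_eq_sub _ hnm]
    calc ∑ j ∈ Finset.range m, H (x j) - ∑ j ∈ Finset.range n, H (x j)
        ≤ |∑ j ∈ Finset.range m, H (x j) - ∑ j ∈ Finset.range n, H (x j)| :=
          le_abs_self _
      _ < δ := hd
  have hcauchy : ∀ ε : ℝ, 0 < ε → ∃ M : ℕ, ∀ m ≥ M, ∀ n ≥ M,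
      N.qnorm (S m - S n) < ε := by
    intro ε hε
    have hεr : 0 < ε ^ r' := Real.rpow_pos_of_pos hε r'
    obtain ⟨M, hM⟩ := htail (ε ^ r' / 4) (by positivity)
    refine ⟨M, ?_⟩
    have hkey : ∀ m n : ℕ, M ≤ n → n ≤ m → N.qnorm (S m - S n) < ε := by
      intro m n hn hnm
      have hdiff : S m - S n = ∑ j ∈ Finset.Ico n m, x j := by
        rw [hSdef]
        simp only
        rw [Finset.sum_Ico_eq_sub _ hnm]
      have hb : H (S m - S n) ≤ 4 * ∑ j ∈ Finset.Ico n m, H (x j) := by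
        rw [hdiff]
        exact kpr_finset H h0 hnn hposH hmax _ x
      have hlt : H (S m - S n) < ε ^ r' := by
        have := hM m n hn hnm
        linarith
      by_contra hge
      push_neg at hge
      have : ε ^ r' ≤ H (S m - S n) :=
        Real.rpow_le_rpow hε.le hge hr'.le
      linarith
    intro m hm n hn
    rcases le_total n m with h | h
    · exact hkey m n hn h
    · have h' := hkey n m hm h
      have heq : N.qnorm (S m - S n) = N.qnorm (S n - S m) := by
        rw [show S m - S n = -(S n - S m) by abel, qn_neg]
      rw [heq]; exact h'
  exact hc S hcauchy

/-- (c) ⇒ (a): any single summability criterion implies completeness. -/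
private lemma key_backward
    (h : ∃ r' : ℝ, 0 < r' ∧ ∀ x : ℕ → X,
      Summable (fun n => N.qnorm (x n) ^ r') → N.SeriesConv x) :
    N.IsComplete := by
  obtain ⟨r', hr', hcrit⟩ := h
  intro x hx
  have Kpos : (0:ℝ) < N.K := lt_of_lt_of_le one_pos N.one_le_K
  choose M hM using fun k : ℕ => hx ((1/2 : ℝ) ^ k) (by positivity)
  set nn : ℕ → ℕ := fun k => Nat.rec (M 0) (fun k ih => max (ih + 1) (M (k+1))) k
    with hnndef
  have hnn0 : nn 0 = M 0 := rfl
  have hnns : ∀ k, nn (k+1) = max (nn k + 1) (M (k+1)) := fun k => rfl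
  have hnnM : ∀ k, M k ≤ nn k := by
    intro k
    cases k with
    | zero => exact le_of_eq hnn0.symm
    | succ k => rw [hnns]; exact le_max_right _ _
  have hnnsucc : ∀ k, nn k + 1 ≤ nn (k+1) := fun k => by
    rw [hnns]; exact le_max_left _ _
  have hnnk : ∀ k, k ≤ nn k := by
    intro k
    induction k with
    | zero => exact Nat.zero_le _
    | succ k ih => have := hnnsucc k; omega
  set y : ℕ → X := fun k => match k with
    | 0 => x (nn 0)
    | (k+1) => x (nn (k+1)) - x (nn k) with hydef
  have hy0 : y 0 = x (nn 0) := rfl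
  have hys : ∀ k, y (k+1) = x (nn (k+1)) - x (nn k) := fun k => rfl
  have hyq : ∀ k, N.qnorm (y (k+1)) < (1/2 : ℝ) ^ k := by
    intro k
    rw [hys]
    exact hM k (nn (k+1)) (le_trans (hnnM k) (by have := hnnsucc k; omega))
      (nn k) (hnnM k)
  have hps : ∀ k, ∑ j ∈ Finset.range (k+1), y j = x (nn k) := by
    intro k
    induction k with
    | zero => simpa using hy0
    | succ k ih =>
        rw [Finset.sum_range_succ, ih, hys]
        abel
  -- summability of the r'-powers
  set w : ℝ := (1/2 : ℝ) ^ r' with hwdef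
  have hw0 : 0 < w := Real.rpow_pos_of_pos (by norm_num) r'
  have hw1 : w < 1 := Real.rpow_lt_one (by norm_num) (by norm_num) hr'
  set C : ℝ := max (N.qnorm (y 0) ^ r') w⁻¹ with hCdef
  have hsumy : Summable (fun k => N.qnorm (y k) ^ r') := by
    refine Summable.of_nonneg_of_le
      (fun k => Real.rpow_nonneg (N.qnorm_nonneg _) r') ?_
      ((summable_geometric_of_lt_one hw0.le hw1).mul_left C)
    intro k
    cases k with
    | zero =>
        have hone : C * w ^ 0 = C := by rw [pow_zero, mul_one]
        rw [hone, hCdef]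
        exact le_max_left _ _
    | succ k =>
        have h1 : N.qnorm (y (k+1)) ^ r' ≤ ((1/2 : ℝ) ^ k) ^ r' :=
          Real.rpow_le_rpow (N.qnorm_nonneg _) (hyq k).le hr'.le
        have h2 : ((1/2 : ℝ) ^ k) ^ r' = w ^ k := by
          rw [← Real.rpow_natCast (1/2 : ℝ) k, ← Real.rpow_mul (by norm_num),
            mul_comm, Real.rpow_mul (by norm_num), Real.rpow_natCast]
        have h3 : w ^ k = w⁻¹ * w ^ (k+1) := by
          rw [pow_succ]
          field_simp
        calc N.qnorm (y (k+1)) ^ r' ≤ w ^ k := h1.trans_eq h2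
          _ = w⁻¹ * w ^ (k+1) := h3
          _ ≤ C * w ^ (k+1) :=
              mul_le_mul_of_nonneg_right (le_max_right _ _) (pow_nonneg hw0.le _)
  obtain ⟨l, hl⟩ := hcrit y hsumy
  -- convergence along the subsequence
  have hsubconv : Tendsto (fun k => N.qnorm (l - x (nn k))) atTop (𝓝 0) := by
    have hcomp := hl.comp (tendsto_add_atTop_nat 1)
    have heq : (fun k => N.qnorm (l - ∑ j ∈ Finset.range (k+1), y j))
        = fun k => N.qnorm (l - x (nn k)) := by
      funext k; rw [hps k]
    simpa [Function.comp_def, heq] using hcomp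
  refine ⟨l, ?_⟩
  rw [Metric.tendsto_atTop]
  intro ε hε
  set δ : ℝ := ε / (2 * N.K) with hδdef
  have hδ : 0 < δ := by positivity
  obtain ⟨M₀, hM₀⟩ := hx δ hδ
  obtain ⟨k₀, hk₀⟩ := Metric.tendsto_atTop.1 hsubconv δ hδ
  set k := max k₀ M₀ with hkdef
  have h1 : N.qnorm (l - x (nn k)) < δ := by
    have := hk₀ k (le_max_left _ _)
    rwa [Real.dist_eq, sub_zero, abs_of_nonneg (N.qnorm_nonneg _)] at this
  refine ⟨M₀, ?_⟩
  intro mIdx hm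
  rw [Real.dist_eq, sub_zero, abs_of_nonneg (N.qnorm_nonneg _)]
  have h2 : N.qnorm (x (nn k) - x mIdx) < δ :=
    hM₀ (nn k) (le_trans (le_max_right k₀ M₀) (hnnk k)) mIdx hm
  have h3 : l - x mIdx = (l - x (nn k)) + (x (nn k) - x mIdx) := by abel
  calc N.qnorm (l - x mIdx)
      ≤ N.K * (N.qnorm (l - x (nn k)) + N.qnorm (x (nn k) - x mIdx)) := by
        rw [h3]; exact N.qnorm_add_le _ _
    _ < N.K * (δ + δ) := by
        have := N.qnorm_nonneg (l - x (nn k))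
        have := N.qnorm_nonneg (x (nn k) - x mIdx)
        nlinarith
    _ = ε := by
        rw [hδdef]
        field_simp
        ring
  done

end Main

/-- Equivalence of completeness with the two summability criteria. -/
theorem completeness_iff_summability_criteria
    (N : QuasiNorm X) (r : ℝ) (hr0 : 0 < r) (hr1 : r ≤ 1)
    (hK : N.K = 2 ^ (1 / r - 1)) :
    (N.IsComplete ↔
      ∀ r' : ℝ, 0 < r' → r' ≤ r → ∀ x : ℕ → X,
        Summable (fun n => N.qnorm (x n) ^ r') → N.SeriesConv x) ∧
    (N.IsComplete ↔
      ∃ r' : ℝ, 0 < r' ∧ ∀ x : ℕ → X,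
        Summable (fun n => N.qnorm (x n) ^ r') → N.SeriesConv x) := by
  constructor
  · constructor
    · exact key_forward N r hr0 hr1 hK
    · intro hall
      exact key_backward N ⟨r, hr0, hall r hr0 le_rfl⟩
  · constructor
    · intro hc
      exact ⟨r, hr0, key_forward N r hr0 hr1 hK hc r hr0 le_rfl⟩
    · exact key_backward N
end

section
/- Let X be a real vector space with a quasi-norm ‖·‖ with constant K ≥ 1, and let 0 < r ≤ 1 satisfy K = 2^{1/r−1}. If a series Σₙ xₙ converges in X, then ‖Σₙ xₙ‖ ≤ 4^{1/r} K (Σₙ ‖xₙ‖^r)^{1/r}. -/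
open Filter Topology

variable {X : Type*} [AddCommGroup X] [Module ℝ X]


section helpers

lemma qn_zero_s1 (N : QuasiNorm X) : N.qnorm 0 = 0 := (N.qnorm_eq_zero_iff 0).2 rfl

lemma rpow_le_inv {r u b : ℝ} (hr0 : 0 < r) (hu : 0 ≤ u) (h : u ^ r ≤ b) :
    u ≤ b ^ (1 / r) := by
  have hb : 0 ≤ b := le_trans (Real.rpow_nonneg hu r) h
  have h2 := Real.rpow_le_rpow (Real.rpow_nonneg hu r) h (by positivity : (0:ℝ) ≤ 1/r)
  have h3 : (u ^ r) ^ (1/r) = u := by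
    rw [← Real.rpow_mul hu, mul_one_div_cancel hr0.ne', Real.rpow_one]
  rwa [h3] at h2

lemma K_pow {r : ℝ} (N : QuasiNorm X) (hr0 : 0 < r) (hK : N.K = 2 ^ (1 / r - 1)) :
    N.K ^ r = 2 ^ (1 - r) := by
  rw [hK, ← Real.rpow_mul (by norm_num : (0:ℝ) ≤ 2)]
  congr 1
  field_simp

lemma merge_bound {r : ℝ} (N : QuasiNorm X) (hr0 : 0 < r)
    (hK : N.K = 2 ^ (1 / r - 1)) {x y : X} {a : ℝ}
    (hx : N.qnorm x ^ r ≤ a) (hy : N.qnorm y ^ r ≤ a) :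
    N.qnorm (x + y) ^ r ≤ 2 * a := by
  have ha : 0 ≤ a := le_trans (Real.rpow_nonneg (N.qnorm_nonneg x) r) hx
  have hK0 : (0:ℝ) < N.K := lt_of_lt_of_le one_pos N.one_le_K
  have hxa : N.qnorm x ≤ a ^ (1/r) := rpow_le_inv hr0 (N.qnorm_nonneg x) hx
  have hya : N.qnorm y ≤ a ^ (1/r) := rpow_le_inv hr0 (N.qnorm_nonneg y) hy
  have h1 : N.qnorm (x + y) ≤ N.K * (2 * a ^ (1/r)) := by
    calc N.qnorm (x+y) ≤ N.K * (N.qnorm x + N.qnorm y) := N.qnorm_add_le x y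
    _ ≤ N.K * (2 * a ^ (1/r)) := by nlinarith
  have h2 : N.qnorm (x+y) ^ r ≤ (N.K * (2 * a ^ (1/r))) ^ r :=
    Real.rpow_le_rpow (N.qnorm_nonneg _) h1 hr0.le
  refine h2.trans (le_of_eq ?_)
  rw [Real.mul_rpow hK0.le (by positivity), Real.mul_rpow (by norm_num) (by positivity),
    ← Real.rpow_mul ha, one_div_mul_cancel hr0.ne', Real.rpow_one,
    K_pow N hr0 hK, ← mul_assoc]
  have : (2:ℝ) ^ (1 - r) * 2 ^ r = 2 := by
    rw [← Real.rpow_add (by norm_num : (0:ℝ) < 2)]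
    norm_num
  rw [this]

end helpers

section chain

lemma qn_chain {r : ℝ} (N : QuasiNorm X) (hr0 : 0 < r)
    (hK : N.K = 2 ^ (1 / r - 1)) :
    ∀ (n : ℕ) (L : List (X × ℤ)), L.length ≤ n →
    (∀ p ∈ L, N.qnorm p.1 ^ r ≤ (2:ℝ) ^ (-(p.2:ℝ))) →
    L.Pairwise (fun p q => p.2 ≠ q.2) →
    ∀ m : ℤ, (∀ p ∈ L, m ≤ p.2) →
    N.qnorm (L.map Prod.fst).sum ≤ 2 ^ ((1:ℝ)/r) * 2 ^ (-(m:ℝ)/r) := by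
  intro n
  induction n with
  | zero =>
    intro L hL _ _ m _
    rw [Nat.le_zero, List.length_eq_zero_iff] at hL
    subst hL
    simp [qn_zero_s1]
    positivity
  | succ n ih =>
    intro L hL hb hpw m hm
    haveI := Classical.decEq (X × ℤ)
    rcases eq_or_ne L [] with he | hne
    · subst he
      simp [qn_zero_s1]
      positivity
    obtain ⟨p, hargp⟩ : ∃ p, p ∈ List.argmin Prod.snd L := by
      cases h : List.argmin Prod.snd L with
      | none => exact absurd (List.argmin_eq_none.mp h) hne
      | some p => exact ⟨p, by simp [h]⟩
    have hpmem : p ∈ L := List.argmin_mem hargp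
    have hmin : ∀ q ∈ L, p.2 ≤ q.2 := fun q hq => List.le_of_mem_argmin hq hargp
    set rest := L.erase p with hrest
    have hperm : L.Perm (p :: rest) := List.perm_cons_erase hpmem
    have hpw2 : (p :: rest).Pairwise (fun p q => p.2 ≠ q.2) :=
      (hperm.pairwise_iff (fun h => Ne.symm h)).mp hpw
    have hne' : ∀ q ∈ rest, p.2 ≠ q.2 := (List.pairwise_cons.mp hpw2).1
    have hpwrest : rest.Pairwise (fun p q => p.2 ≠ q.2) := (List.pairwise_cons.mp hpw2).2
    have hrestsub : ∀ q ∈ rest, q ∈ L := fun q hq => List.erase_sublist.subset hq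
    have hlen : rest.length ≤ n := by
      have := hperm.length_eq
      simp only [List.length_cons] at this
      omega
    have hmr : ∀ q ∈ rest, p.2 + 1 ≤ q.2 := fun q hq =>
      Int.add_one_le_iff.mpr (lt_of_le_of_ne (hmin q (hrestsub q hq)) (hne' q hq))
    have IH := ih rest hlen (fun q hq => hb q (hrestsub q hq)) hpwrest (p.2 + 1) hmr
    have hsum : (L.map Prod.fst).sum = p.1 + (rest.map Prod.fst).sum := by
      rw [(hperm.map Prod.fst).sum_eq, List.map_cons, List.sum_cons]
    have hp1 : N.qnorm p.1 ≤ (2:ℝ) ^ (-(p.2:ℝ)/r) := by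
      have h2 := rpow_le_inv hr0 (N.qnorm_nonneg p.1) (hb p hpmem)
      have e : ((2:ℝ) ^ (-(p.2:ℝ))) ^ ((1:ℝ)/r) = 2 ^ (-(p.2:ℝ)/r) := by
        rw [← Real.rpow_mul (by norm_num : (0:ℝ) ≤ 2)]; congr 1; ring
      rwa [e] at h2
    have IH' : N.qnorm (rest.map Prod.fst).sum ≤ 2 ^ ((1:ℝ)/r) * 2 ^ ((-(p.2:ℝ)-1)/r) := by
      convert IH using 3
      push_cast; ring
    have e1 : (2:ℝ) ^ ((1:ℝ)/r) * 2 ^ ((-(p.2:ℝ)-1)/r) = 2 ^ (-(p.2:ℝ)/r) := by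
      rw [← Real.rpow_add (by norm_num : (0:ℝ) < 2)]
      congr 1; field_simp; ring
    have e2 : (2:ℝ) ^ ((1:ℝ)/r - 1) * 2 = 2 ^ ((1:ℝ)/r) := by
      rw [Real.rpow_sub (by norm_num : (0:ℝ) < 2), Real.rpow_one]
      field_simp
    have hK0 : (0:ℝ) ≤ N.K := le_trans zero_le_one N.one_le_K
    calc N.qnorm (L.map Prod.fst).sum
        = N.qnorm (p.1 + (rest.map Prod.fst).sum) := by rw [hsum]
      _ ≤ N.K * (N.qnorm p.1 + N.qnorm (rest.map Prod.fst).sum) := N.qnorm_add_le _ _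
      _ ≤ N.K * ((2:ℝ) ^ (-(p.2:ℝ)/r) + 2 ^ ((1:ℝ)/r) * 2 ^ ((-(p.2:ℝ)-1)/r)) := by
          exact mul_le_mul_of_nonneg_left (add_le_add hp1 IH') hK0
      _ = 2 ^ ((1:ℝ)/r) * 2 ^ (-(p.2:ℝ)/r) := by
          rw [e1, hK, ← e2]; ring
      _ ≤ 2 ^ ((1:ℝ)/r) * 2 ^ (-(m:ℝ)/r) := by
          have hcast : (m:ℝ) ≤ (p.2:ℝ) := Int.cast_le.mpr (hm p hpmem)
          gcongr <;>
            first
              | norm_num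
              | exact (div_le_div_iff_of_pos_right hr0).mpr (neg_le_neg hcast)

end chain

section mainlist

lemma qn_list {r : ℝ} (N : QuasiNorm X) (hr0 : 0 < r)
    (hK : N.K = 2 ^ (1 / r - 1)) :
    ∀ (n : ℕ) (L : List (X × ℤ)), L.length ≤ n →
    (∀ p ∈ L, N.qnorm p.1 ^ r ≤ (2:ℝ) ^ (-(p.2:ℝ))) →
    N.qnorm (L.map Prod.fst).sum ≤
      4 ^ ((1:ℝ)/r) * ((L.map (fun p => (2:ℝ) ^ (-(p.2:ℝ) - 1))).sum) ^ ((1:ℝ)/r) := by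
  intro n
  induction n with
  | zero =>
    intro L hL _
    rw [Nat.le_zero, List.length_eq_zero_iff] at hL
    subst hL
    simp [qn_zero_s1]
    positivity
  | succ n ih =>
    intro L hL hb
    haveI := Classical.decEq (X × ℤ)
    haveI : LawfulBEq (X × ℤ) := instLawfulBEq
    by_cases hpw : L.Pairwise (fun p q => p.2 ≠ q.2)
    · -- distinct levels: use the chain lemma
      rcases eq_or_ne L [] with he | hne
      · subst he
        simp [qn_zero_s1]
        positivity
      obtain ⟨p, hargp⟩ : ∃ p, p ∈ List.argmin Prod.snd L := by
        cases h : List.argmin Prod.snd L with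
        | none => exact absurd (List.argmin_eq_none.mp h) hne
        | some p => exact ⟨p, by simp [h]⟩
      have hpmem : p ∈ L := List.argmin_mem hargp
      have hmin : ∀ q ∈ L, p.2 ≤ q.2 := fun q hq => List.le_of_mem_argmin hq hargp
      have hchain := qn_chain N hr0 hK L.length L le_rfl hb hpw p.2 hmin
      refine hchain.trans ?_
      -- 2^(1/r) * 2^(-p.2/r) ≤ 4^(1/r) * W^(1/r), where W ≥ 2^(-p.2-1)
      have hWlb : (2:ℝ) ^ (-(p.2:ℝ) - 1) ≤
          ((L.map (fun p => (2:ℝ) ^ (-(p.2:ℝ) - 1))).sum) := by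
        refine List.single_le_sum (fun y hy => ?_) _ (List.mem_map_of_mem hpmem)
        obtain ⟨q, _, rfl⟩ := List.mem_map.mp hy
        positivity
      have h4 : (4:ℝ) ^ ((1:ℝ)/r) = 2 ^ ((2:ℝ)/r) := by
        rw [show (4:ℝ) = 2 ^ (2:ℝ) by
          rw [show (2:ℝ) = ((2:ℕ):ℝ) from by norm_num, Real.rpow_natCast]; norm_num]
        rw [← Real.rpow_mul (by norm_num : (0:ℝ) ≤ 2)]
        congr 1; ring
      calc (2:ℝ) ^ ((1:ℝ)/r) * 2 ^ (-(p.2:ℝ)/r)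
          = 2 ^ ((2:ℝ)/r) * 2 ^ ((-(p.2:ℝ) - 1)/r) := by
            rw [← Real.rpow_add (by norm_num : (0:ℝ) < 2),
              ← Real.rpow_add (by norm_num : (0:ℝ) < 2)]
            congr 1; field_simp; ring
        _ = 2 ^ ((2:ℝ)/r) * ((2:ℝ) ^ (-(p.2:ℝ) - 1)) ^ ((1:ℝ)/r) := by
            rw [← Real.rpow_mul (by norm_num : (0:ℝ) ≤ 2), mul_one_div]
        _ ≤ 4 ^ ((1:ℝ)/r) * ((L.map (fun p => (2:ℝ) ^ (-(p.2:ℝ) - 1))).sum) ^ ((1:ℝ)/r) := by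
            rw [h4]
            gcongr
        _ = _ := rfl
    · -- two entries share a level: merge them
      have hex : ¬ ∀ (a b : X × ℤ), [a, b].Sublist L → a.2 ≠ b.2 := fun h =>
        hpw (List.pairwise_iff_forall_sublist.mpr (fun {a b} hs => h a b hs))
      push_neg at hex
      obtain ⟨a, b, hab, heq⟩ := hex
      have hamem : a ∈ L := hab.subset (by simp)
      have hbmem' : b ∈ L.erase a := by
        rcases eq_or_ne b a with rfl | hne
        · have hc : 2 ≤ List.count b L := by
            have := hab.count_le b
            simpa using this
          have : 0 < List.count b (L.erase b) := by
            rw [List.count_erase_self]; omega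
          exact List.count_pos_iff.mp this
        · exact (List.mem_erase_of_ne hne).mpr (hab.subset (by simp))
      set rest := (L.erase a).erase b with hrestdef
      have hperm : L.Perm (a :: b :: rest) :=
        (List.perm_cons_erase hamem).trans ((List.perm_cons_erase hbmem').cons a)
      set L' := (a.1 + b.1, a.2 - 1) :: rest with hL'def
      have hlen' : L'.length ≤ n := by
        have := hperm.length_eq
        simp only [List.length_cons] at this
        simp only [hL'def, List.length_cons]
        omega
      have hrestsub : ∀ q ∈ rest, q ∈ L := fun q hq =>
        List.erase_sublist.subset (List.erase_sublist.subset hq)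
      have hb' : ∀ p ∈ L', N.qnorm p.1 ^ r ≤ (2:ℝ) ^ (-(p.2:ℝ)) := by
        intro p hp
        rcases List.mem_cons.mp hp with rfl | hp
        · have hbb : N.qnorm b.1 ^ r ≤ (2:ℝ) ^ (-(a.2:ℝ)) := by
            have := hb b (hab.subset (by simp))
            rwa [← heq] at this
          have hm := merge_bound N hr0 hK (hb a hamem) hbb
          refine hm.trans (le_of_eq ?_)
          rw [show (2:ℝ) * 2 ^ (-(a.2:ℝ)) = 2 ^ (1 + -(a.2:ℝ)) by
            rw [Real.rpow_add (by norm_num : (0:ℝ) < 2), Real.rpow_one]]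
          congr 1
          push_cast
          ring
        · exact hb p (hrestsub p hp)
      have IH := ih L' hlen' hb'
      have hsum : (L.map Prod.fst).sum = (L'.map Prod.fst).sum := by
        rw [(hperm.map Prod.fst).sum_eq]
        simp [hL'def, add_assoc]
      have hwsum : ((L.map (fun p => (2:ℝ) ^ (-(p.2:ℝ) - 1))).sum) =
          ((L'.map (fun p => (2:ℝ) ^ (-(p.2:ℝ) - 1))).sum) := by
        rw [(hperm.map (fun p => (2:ℝ) ^ (-(p.2:ℝ) - 1))).sum_eq]
        simp only [hL'def, List.map_cons, List.sum_cons, ← heq, ← add_assoc]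
        congr 1
        rw [show (2:ℝ) ^ (-(a.2:ℝ) - 1) + 2 ^ (-(a.2:ℝ) - 1) = 2 ^ (1 + (-(a.2:ℝ) - 1)) by
          rw [Real.rpow_add (by norm_num : (0:ℝ) < 2), Real.rpow_one]; ring]
        congr 1
        push_cast
        ring
      rw [hsum, hwsum]
      exact IH

end mainlist

section listF

lemma filter_sum_eq (p : X → Bool) (h0 : ∀ z : X, ¬ p z → z = 0) :
    ∀ v : List X, (v.filter p).sum = v.sum := by
  intro v
  induction v with
  | nil => rfl
  | cons a t iht =>
    rw [List.filter_cons]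
    by_cases hpa : p a
    · simp [hpa, iht]
    · rw [if_neg hpa, iht, List.sum_cons, h0 a hpa, zero_add]

lemma filter_map_sum_eq (p : X → Bool) (h : X → ℝ) (h0 : ∀ z : X, ¬ p z → h z = 0) :
    ∀ v : List X, ((v.filter p).map h).sum = (v.map h).sum := by
  intro v
  induction v with
  | nil => rfl
  | cons a t iht =>
    rw [List.filter_cons]
    by_cases hpa : p a
    · simp [hpa, iht]
    · rw [if_neg hpa, iht, List.map_cons, List.sum_cons, h0 a hpa, zero_add]

lemma qn_listF {r : ℝ} (N : QuasiNorm X) (hr0 : 0 < r)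
    (hK : N.K = 2 ^ (1 / r - 1)) (v : List X) :
    N.qnorm v.sum ≤
      4 ^ ((1:ℝ)/r) * ((v.map (fun z => N.qnorm z ^ r)).sum) ^ ((1:ℝ)/r) := by
  classical
  set h : X → ℝ := fun z => N.qnorm z ^ r with hh
  set p : X → Bool := fun z => decide (N.qnorm z ≠ 0) with hp
  have hp0 : ∀ z : X, ¬ p z → z = 0 := by
    intro z hz
    simp only [hp, decide_not, Bool.not_eq_true, decide_eq_false_iff_not, not_not] at hz
    exact (N.qnorm_eq_zero_iff z).mp (by simpa using hz)
  have hph0 : ∀ z : X, ¬ p z → h z = 0 := by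
    intro z hz
    have : N.qnorm z = 0 := by rw [hp0 z hz]; exact qn_zero_s1 N
    simp [hh, this, Real.zero_rpow hr0.ne']
  set u := v.filter p with hu
  set lev : X → ℤ := fun z => -⌈Real.logb 2 (h z)⌉ with hlev
  set L := u.map (fun z => (z, lev z)) with hL
  have hupos : ∀ z ∈ u, 0 < N.qnorm z := by
    intro z hz
    have := (List.mem_filter.mp hz).2
    simp only [hp, decide_eq_true_eq] at this
    exact lt_of_le_of_ne (N.qnorm_nonneg z) (Ne.symm this)
  have hhpos : ∀ z ∈ u, 0 < h z := fun z hz => Real.rpow_pos_of_pos (hupos z hz) r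
  have hb : ∀ q ∈ L, N.qnorm q.1 ^ r ≤ (2:ℝ) ^ (-(q.2:ℝ)) := by
    intro q hq
    obtain ⟨z, hz, rfl⟩ := List.mem_map.mp hq
    have hzpos := hhpos z hz
    have e1 : (2:ℝ) ^ (Real.logb 2 (h z)) = h z :=
      Real.rpow_logb (by norm_num) (by norm_num) hzpos
    have e2 : -((lev z : ℝ)) = ((⌈Real.logb 2 (h z)⌉ : ℤ) : ℝ) := by
      have : lev z = -⌈Real.logb 2 (h z)⌉ := rfl
      rw [this]
      push_cast
      ring
    rw [show N.qnorm z ^ r = h z from rfl, ← e1, e2]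
    exact Real.rpow_le_rpow_of_exponent_le (by norm_num) (Int.le_ceil _)
  have hfst : L.map Prod.fst = u := by
    rw [hL, List.map_map]
    have : (Prod.fst ∘ fun z : X => (z, lev z)) = id := rfl
    rw [this, List.map_id]
  have key := qn_list N hr0 hK L.length L le_rfl hb
  rw [hfst] at key
  have hwle : ((L.map (fun q => (2:ℝ) ^ (-(q.2:ℝ) - 1))).sum) ≤ (u.map h).sum := by
    rw [hL, List.map_map]
    refine List.sum_le_sum (fun z hz => ?_)
    have hzpos := hhpos z hz
    have e1 : (2:ℝ) ^ (Real.logb 2 (h z)) = h z :=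
      Real.rpow_logb (by norm_num) (by norm_num) hzpos
    have e2 : (-(((lev z : ℤ)):ℝ) - 1) ≤ Real.logb 2 (h z) := by
      have h1 := Int.ceil_lt_add_one (Real.logb 2 (h z))
      have h2 : lev z = -⌈Real.logb 2 (h z)⌉ := rfl
      rw [h2]
      push_cast
      linarith
    calc (2:ℝ) ^ (-(((lev z : ℤ)):ℝ) - 1) ≤ 2 ^ (Real.logb 2 (h z)) :=
          Real.rpow_le_rpow_of_exponent_le (by norm_num) e2
      _ = h z := e1
  have husum : u.sum = v.sum := filter_sum_eq p hp0 v
  have hmsum : (u.map h).sum = (v.map h).sum := filter_map_sum_eq p h hph0 v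
  rw [husum] at key
  refine key.trans ?_
  have hW0 : (0:ℝ) ≤ ((L.map (fun q => (2:ℝ) ^ (-(q.2:ℝ) - 1))).sum) := by
    refine List.sum_nonneg (fun y hy => ?_)
    obtain ⟨q, _, rfl⟩ := List.mem_map.mp hy
    positivity
  have h1 : ((L.map (fun q => (2:ℝ) ^ (-(q.2:ℝ) - 1))).sum) ≤ (v.map h).sum :=
    hwle.trans (le_of_eq hmsum)
  exact mul_le_mul_of_nonneg_left
    (Real.rpow_le_rpow hW0 h1 (by positivity)) (by positivity)

end listF

lemma list_range_sum {M : Type*} [AddCommMonoid M] (f : ℕ → M) (k : ℕ) :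
    ((List.range k).map f).sum = ∑ j ∈ Finset.range k, f j := by
  induction k with
  | zero => simp
  | succ k ih =>
    rw [List.range_succ, List.map_append, List.sum_append, Finset.sum_range_succ, ih]
    simp

lemma qn_range {r : ℝ} (N : QuasiNorm X) (hr0 : 0 < r)
    (hK : N.K = 2 ^ (1 / r - 1)) (x : ℕ → X) (k : ℕ) :
    N.qnorm (∑ j ∈ Finset.range k, x j) ≤
      4 ^ ((1:ℝ)/r) * (∑ j ∈ Finset.range k, N.qnorm (x j) ^ r) ^ ((1:ℝ)/r) := by
  have key := qn_listF N hr0 hK ((List.range k).map x)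
  rw [List.map_map, list_range_sum, list_range_sum] at key
  exact key


/-- If the series `∑ xₙ` converges (to `l`) in the quasi-norm topology, then
`‖∑ xₙ‖ ≤ 4^{1/r} K (∑ ‖xₙ‖^r)^{1/r}` (stated in `ℝ≥0∞` so that the divergent
case is included). -/
theorem qnorm_tsum_le (N : QuasiNorm X) (r : ℝ) (hr0 : 0 < r) (hr1 : r ≤ 1)
    (hK : N.K = 2 ^ (1 / r - 1)) (x : ℕ → X) (l : X)
    (hconv : Tendsto (fun k => N.qnorm (l - ∑ j ∈ Finset.range k, x j)) atTop (𝓝 0)) :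
    ENNReal.ofReal (N.qnorm l) ≤
      ENNReal.ofReal (4 ^ (1 / r) * N.K) *
        (∑' n : ℕ, ENNReal.ofReal (N.qnorm (x n) ^ r)) ^ (1 / r) := by
  have hK0 : (0:ℝ) < N.K := lt_of_lt_of_le one_pos N.one_le_K
  have hc0 : (0:ℝ) < 4 ^ ((1:ℝ) / r) * N.K := mul_pos (by positivity) hK0
  set T := ∑' n : ℕ, ENNReal.ofReal (N.qnorm (x n) ^ r) with hT
  by_cases hTtop : T = ⊤
  · rw [hTtop, ENNReal.top_rpow_of_pos (one_div_pos.mpr hr0),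
      ENNReal.mul_top (by 
        simp only [ne_eq, ENNReal.ofReal_eq_zero, not_le]
        exact hc0)]
    exact le_top
  · -- finite case
    have hTr : ∀ k : ℕ, (∑ j ∈ Finset.range k, N.qnorm (x j) ^ r) ≤ T.toReal := by
      intro k
      have h1 : ENNReal.ofReal (∑ j ∈ Finset.range k, N.qnorm (x j) ^ r) =
          ∑ j ∈ Finset.range k, ENNReal.ofReal (N.qnorm (x j) ^ r) :=
        ENNReal.ofReal_sum_of_nonneg (fun j _ => Real.rpow_nonneg (N.qnorm_nonneg _) r)
      have h2 := (ENNReal.sum_le_tsum (f := fun n => ENNReal.ofReal (N.qnorm (x n) ^ r))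
        (Finset.range k))
      rw [← h1] at h2
      exact (ENNReal.ofReal_le_iff_le_toReal hTtop).mp h2
    have hpartial : ∀ k : ℕ, N.qnorm (∑ j ∈ Finset.range k, x j) ≤
        4 ^ ((1:ℝ)/r) * (T.toReal) ^ ((1:ℝ)/r) := by
      intro k
      refine (qn_range N hr0 hK x k).trans ?_
      have hs0 : (0:ℝ) ≤ ∑ j ∈ Finset.range k, N.qnorm (x j) ^ r :=
        Finset.sum_nonneg (fun j _ => Real.rpow_nonneg (N.qnorm_nonneg _) r)
      exact mul_le_mul_of_nonneg_left
        (Real.rpow_le_rpow hs0 (hTr k) (one_div_pos.mpr hr0).le) (by positivity)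
    have key : N.qnorm l ≤ (4 ^ ((1:ℝ)/r) * N.K) * (T.toReal) ^ ((1:ℝ)/r) := by
      refine le_of_forall_pos_le_add (fun ε hε => ?_)
      obtain ⟨k, hk⟩ := (hconv.eventually_lt_const (div_pos hε hK0)).exists
      calc N.qnorm l = N.qnorm ((l - ∑ j ∈ Finset.range k, x j) + ∑ j ∈ Finset.range k, x j) := by
            rw [sub_add_cancel]
        _ ≤ N.K * (N.qnorm (l - ∑ j ∈ Finset.range k, x j) +
              N.qnorm (∑ j ∈ Finset.range k, x j)) := N.qnorm_add_le _ _
        _ ≤ N.K * (ε / N.K + 4 ^ ((1:ℝ)/r) * (T.toReal) ^ ((1:ℝ)/r)) := by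
            exact mul_le_mul_of_nonneg_left (add_le_add hk.le (hpartial k)) hK0.le
        _ = (4 ^ ((1:ℝ)/r) * N.K) * (T.toReal) ^ ((1:ℝ)/r) + ε := by
            field_simp
            ring
    calc ENNReal.ofReal (N.qnorm l)
        ≤ ENNReal.ofReal ((4 ^ ((1:ℝ)/r) * N.K) * (T.toReal) ^ ((1:ℝ)/r)) :=
          ENNReal.ofReal_le_ofReal key
      _ = ENNReal.ofReal (4 ^ ((1:ℝ)/r) * N.K) * ENNReal.ofReal ((T.toReal) ^ ((1:ℝ)/r)) :=
          ENNReal.ofReal_mul hc0.le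
      _ = ENNReal.ofReal (4 ^ ((1:ℝ)/r) * N.K) * T ^ ((1:ℝ)/r) := by
          rw [← ENNReal.ofReal_rpow_of_nonneg ENNReal.toReal_nonneg (one_div_pos.mpr hr0).le,
            ENNReal.ofReal_toReal hTtop]
      _ = _ := by norm_num
end

section
/- Let X be a real vector space with a quasi-norm ‖·‖ with constant K ≥ 1, and let 0 < r ≤ 1 satisfy K = 2^{1/r−1}. If xₙ → x in X (i.e. ‖x−xₙ‖ → 0), then 4^{−1/r} · limsupₙ ‖xₙ‖ ≤ ‖x‖ ≤ 4^{1/r} · liminfₙ ‖xₙ‖. -/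
open Filter Topology

variable {X : Type*} [AddCommGroup X] [Module ℝ X]

theorem liminf_const_mul_of_ne_top' {α : Type*} {f : Filter α} {u : α → ENNReal} {a : ENNReal}
    (ha0 : a ≠ 0) (ha_top : a ≠ ⊤) :
    (f.liminf fun x : α => a * u x) = a * f.liminf u := by
  let g := fun x : ENNReal => a * x
  have hg_bij : Function.Bijective g :=
    Function.bijective_iff_has_inverse.mpr
      ⟨fun x => a⁻¹ * x,
        ⟨fun x => by simp [g, ← mul_assoc, ENNReal.inv_mul_cancel ha0 ha_top], fun x => by
          simp [g, ← mul_assoc, ENNReal.mul_inv_cancel ha0 ha_top]⟩⟩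
  have hg_mono : StrictMono g :=
    Monotone.strictMono_of_injective
      (fun _ _ _ => by rwa [ENNReal.mul_le_mul_iff_right ha0 ha_top]) hg_bij.1
  let g_iso := StrictMono.orderIsoOfSurjective g hg_mono hg_bij.2
  exact (OrderIso.liminf_apply g_iso).symm

theorem liminf_add_le_of_tendsto_zero' (u v : ℕ → ENNReal)
    (hu : Tendsto u atTop (𝓝 0)) :
    Filter.liminf (fun n => u n + v n) atTop ≤ Filter.liminf v atTop := by
  apply ENNReal.le_of_forall_pos_le_add
  intro ε hε _
  have hev : ∀ᶠ n in atTop, u n < (ε : ENNReal) :=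
    hu.eventually (gt_mem_nhds (by exact_mod_cast hε))
  calc Filter.liminf (fun n => u n + v n) atTop
      ≤ Filter.liminf (fun n => v n + (ε : ENNReal)) atTop := by
        refine liminf_le_liminf ?_
        filter_upwards [hev] with n hn
        rw [add_comm (v n)]
        exact add_le_add_left hn.le _
    _ = Filter.liminf v atTop + (ε : ENNReal) :=
        liminf_add_const atTop v (ε : ENNReal) (by isBoundedDefault) (by isBoundedDefault)

/-- If `xₙ → x` in the quasi-norm topology, then
`4^{-1/r} limsup ‖xₙ‖ ≤ ‖x‖ ≤ 4^{1/r} liminf ‖xₙ‖` (stated in `ℝ≥0∞`). -/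
theorem qnorm_limit_bounds (N : QuasiNorm X) (r : ℝ) (hr0 : 0 < r) (hr1 : r ≤ 1)
    (hK : N.K = 2 ^ (1 / r - 1)) (x : ℕ → X) (l : X)
    (hconv : Tendsto (fun n => N.qnorm (l - x n)) atTop (𝓝 0)) :
    (4 : ENNReal) ^ (-(1 / r)) *
        Filter.limsup (fun n => ENNReal.ofReal (N.qnorm (x n))) atTop ≤
      ENNReal.ofReal (N.qnorm l) ∧
    ENNReal.ofReal (N.qnorm l) ≤
      (4 : ENNReal) ^ (1 / r) *
        Filter.liminf (fun n => ENNReal.ofReal (N.qnorm (x n))) atTop := by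
  have hK0 : (0:ℝ) ≤ N.K := le_trans zero_le_one N.one_le_K
  have hqneg : ∀ y : X, N.qnorm (-y) = N.qnorm y := fun y => by
    rw [← neg_one_smul ℝ y, N.qnorm_smul]; simp
  have h1 : ∀ n, N.qnorm (x n) ≤ N.K * (N.qnorm l + N.qnorm (l - x n)) := fun n => by
    have hxn : x n = l + (x n - l) := by abel
    calc N.qnorm (x n) = N.qnorm (l + (x n - l)) := by rw [← hxn]
    _ ≤ N.K * (N.qnorm l + N.qnorm (x n - l)) := N.qnorm_add_le _ _
    _ = N.K * (N.qnorm l + N.qnorm (l - x n)) := by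
        rw [← hqneg (x n - l), neg_sub]
  have h2 : ∀ n, N.qnorm l ≤ N.K * (N.qnorm (x n) + N.qnorm (l - x n)) := fun n => by
    have hl : l = x n + (l - x n) := by abel
    calc N.qnorm l = N.qnorm (x n + (l - x n)) := by rw [← hl]
    _ ≤ N.K * (N.qnorm (x n) + N.qnorm (l - x n)) := N.qnorm_add_le _ _
  have hinvr : (0:ℝ) < 1 / r := by positivity
  have hKe : ENNReal.ofReal N.K = (2 : ENNReal) ^ (1 / r - 1) := by
    rw [hK, ← ENNReal.ofReal_rpow_of_pos two_pos]
    norm_num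
  have h4 : (4 : ENNReal) = (2 : ENNReal) ^ (2:ℝ) := by
    rw [show (2:ℝ) = ((2:ℕ):ℝ) by norm_num, ENNReal.rpow_natCast]; norm_num
  have hconvE : Tendsto (fun n => ENNReal.ofReal (N.qnorm (l - x n))) atTop (𝓝 0) := by
    have := (ENNReal.continuous_ofReal.tendsto _).comp hconv
    simpa [Function.comp_def] using this
  constructor
  · -- first inequality
    have hS : Filter.limsup (fun n => ENNReal.ofReal (N.qnorm (x n))) atTop ≤
        ENNReal.ofReal N.K * ENNReal.ofReal (N.qnorm l) := by
      have htend : Tendsto (fun n => ENNReal.ofReal (N.K * (N.qnorm l + N.qnorm (l - x n))))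
          atTop (𝓝 (ENNReal.ofReal (N.K * (N.qnorm l + 0)))) :=
        (ENNReal.continuous_ofReal.tendsto _).comp
          ((tendsto_const_nhds.add hconv).const_mul N.K)
      calc Filter.limsup (fun n => ENNReal.ofReal (N.qnorm (x n))) atTop
          ≤ Filter.limsup (fun n => ENNReal.ofReal (N.K * (N.qnorm l + N.qnorm (l - x n))))
              atTop :=
            limsup_le_limsup (Eventually.of_forall fun n => ENNReal.ofReal_le_ofReal (h1 n))
        _ = ENNReal.ofReal (N.K * (N.qnorm l + 0)) := htend.limsup_eq
        _ = ENNReal.ofReal N.K * ENNReal.ofReal (N.qnorm l) := by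
            rw [add_zero, ENNReal.ofReal_mul hK0]
    have key1 : (4 : ENNReal) ^ (-(1 / r)) * ENNReal.ofReal N.K ≤ 1 := by
      rw [hKe, h4, ← ENNReal.rpow_mul, ← ENNReal.rpow_add _ _ two_ne_zero ENNReal.ofNat_ne_top]
      apply ENNReal.rpow_le_one_of_one_le_of_neg one_le_two
      nlinarith
    calc (4 : ENNReal) ^ (-(1 / r)) * Filter.limsup (fun n => ENNReal.ofReal (N.qnorm (x n))) atTop
        ≤ (4 : ENNReal) ^ (-(1 / r)) * (ENNReal.ofReal N.K * ENNReal.ofReal (N.qnorm l)) :=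
          mul_le_mul_right hS _
      _ = ((4 : ENNReal) ^ (-(1 / r)) * ENNReal.ofReal N.K) * ENNReal.ofReal (N.qnorm l) :=
          (mul_assoc _ _ _).symm
      _ ≤ 1 * ENNReal.ofReal (N.qnorm l) := mul_le_mul_left key1 _
      _ = ENNReal.ofReal (N.qnorm l) := one_mul _
  · -- second inequality
    have hKne0 : ENNReal.ofReal N.K ≠ 0 := by
      simp only [ne_eq, ENNReal.ofReal_eq_zero, not_le]
      linarith [N.one_le_K]
    have step : ENNReal.ofReal (N.qnorm l) ≤ ENNReal.ofReal N.K *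
        Filter.liminf (fun n => ENNReal.ofReal (N.qnorm (x n))) atTop := by
      calc ENNReal.ofReal (N.qnorm l)
          ≤ Filter.liminf (fun n => ENNReal.ofReal N.K *
              (ENNReal.ofReal (N.qnorm (l - x n)) + ENNReal.ofReal (N.qnorm (x n)))) atTop := by
            refine le_liminf_of_le (by isBoundedDefault) ?_
            apply Eventually.of_forall
            intro n
            rw [← ENNReal.ofReal_add (N.qnorm_nonneg _) (N.qnorm_nonneg _),
              ← ENNReal.ofReal_mul hK0]
            exact ENNReal.ofReal_le_ofReal (by rw [add_comm]; exact h2 n)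
        _ = ENNReal.ofReal N.K * Filter.liminf (fun n =>
              ENNReal.ofReal (N.qnorm (l - x n)) + ENNReal.ofReal (N.qnorm (x n))) atTop :=
            liminf_const_mul_of_ne_top' hKne0 ENNReal.ofReal_ne_top
        _ ≤ ENNReal.ofReal N.K *
              Filter.liminf (fun n => ENNReal.ofReal (N.qnorm (x n))) atTop :=
            mul_le_mul_right (liminf_add_le_of_tendsto_zero' _ _ hconvE) _
    have key2 : ENNReal.ofReal N.K ≤ (4 : ENNReal) ^ (1 / r) := by
      rw [hKe, h4, ← ENNReal.rpow_mul]
      apply ENNReal.rpow_le_rpow_of_exponent_le one_le_two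
      nlinarith
    exact step.trans (mul_le_mul_left key2 _)
end

section
/- Let q ∈ (0,∞). If X(μ) is a q-concave quasi-Banach function space, then X(μ) is σ-order continuous. -/
open MeasureTheory Filter Topology

variable {Ω : Type*} [MeasurableSpace Ω]

/-- A quasi-Banach function space over the measure `μ`: a complete quasi-normed ideal of
(a.e.-classes of) measurable real functions.  Membership and the quasi-norm are given on
raw functions and are invariant under `μ`-a.e. equality. -/
structure QBFS (μ : Measure Ω) where
  Mem : (Ω → ℝ) → Prop
  nrm : (Ω → ℝ) → ℝ
  mem_congr : ∀ {f g : Ω → ℝ}, Mem f → f =ᵐ[μ] g → Mem g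
  nrm_congr : ∀ {f g : Ω → ℝ}, f =ᵐ[μ] g → nrm f = nrm g
  mem_meas : ∀ {f : Ω → ℝ}, Mem f → AEStronglyMeasurable f μ
  zero_mem : Mem 0
  add_mem : ∀ {f g : Ω → ℝ}, Mem f → Mem g → Mem (f + g)
  smul_mem : ∀ (c : ℝ) {f : Ω → ℝ}, Mem f → Mem (c • f)
  nrm_nonneg : ∀ f : Ω → ℝ, 0 ≤ nrm f
  nrm_eq_zero_iff : ∀ {f : Ω → ℝ}, Mem f → (nrm f = 0 ↔ f =ᵐ[μ] 0)
  nrm_smul : ∀ (c : ℝ) {f : Ω → ℝ}, Mem f → nrm (c • f) = |c| * nrm f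
  K : ℝ
  one_le_K : 1 ≤ K
  nrm_add_le : ∀ {f g : Ω → ℝ}, Mem f → Mem g → nrm (f + g) ≤ K * (nrm f + nrm g)
  ideal_mem : ∀ {f g : Ω → ℝ}, Mem f → AEStronglyMeasurable g μ →
    (∀ᵐ ω ∂μ, |g ω| ≤ |f ω|) → Mem g
  ideal_nrm : ∀ {f g : Ω → ℝ}, Mem f → Mem g → (∀ᵐ ω ∂μ, |g ω| ≤ |f ω|) → nrm g ≤ nrm f
  complete : ∀ F : ℕ → Ω → ℝ, (∀ n, Mem (F n)) →
    (∀ ε : ℝ, 0 < ε → ∃ N : ℕ, ∀ m ≥ N, ∀ n ≥ N, nrm (F m - F n) < ε) →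
    ∃ f : Ω → ℝ, Mem f ∧ Tendsto (fun n => nrm (f - F n)) atTop (𝓝 0)

/-- σ-order continuity: if `fₙ ↓ 0` μ-a.e. then `‖fₙ‖ → 0`. -/
def SigmaOC (μ : Measure Ω) (Mem : (Ω → ℝ) → Prop) (nrm : (Ω → ℝ) → ℝ) : Prop :=
  ∀ F : ℕ → Ω → ℝ, (∀ n, Mem (F n)) →
    (∀ᵐ ω ∂μ, Antitone fun n => F n ω) →
    (∀ᵐ ω ∂μ, Tendsto (fun n => F n ω) atTop (𝓝 0)) →
    Tendsto (fun n => nrm (F n)) atTop (𝓝 0)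

/-- `q`-concavity of a space given by membership predicate `Mem` and quasi-norm `nrm`. -/
def SpaceQConcave (Mem : (Ω → ℝ) → Prop) (nrm : (Ω → ℝ) → ℝ) (q : ℝ) : Prop :=
  ∃ C : ℝ, 0 < C ∧ ∀ (n : ℕ) (f : Fin n → Ω → ℝ), (∀ j, Mem (f j)) →
    (∑ j, nrm (f j) ^ q) ^ (1 / q) ≤
      C * nrm (fun ω => (∑ j, |f j ω| ^ q) ^ (1 / q))

/- AUXILIARY -/

/-- power-sum bound -/
lemma qbfs_sum_rpow_aux {q : ℝ} (hq : 0 < q) {N : ℕ} (a : Fin N → ℝ)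
    (ha : ∀ k, 0 ≤ a k) {S : ℝ} (hS : 0 ≤ S) (hsum : ∑ k, a k ≤ S) :
    ∑ k, a k ^ q ≤ ((N : ℝ) ^ (max (1/q - 1) 0) * S) ^ q := by
  rcases le_or_gt 1 q with h1 | h1
  · have hm : max (1/q - 1) 0 = 0 := max_eq_right (by
      have : 1/q ≤ 1 := by
        rw [div_le_one hq]; exact h1
      linarith)
    rw [hm, Real.rpow_zero, one_mul]
    have hS1 : S ^ q = S ^ (q - 1) * S := by
      have := Real.rpow_add' hS (show (q-1) + 1 ≠ 0 by linarith) (y := q - 1) (z := 1)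
      rw [sub_add_cancel] at this
      simpa [Real.rpow_one] using this
    calc ∑ k, a k ^ q ≤ ∑ k, S ^ (q-1) * a k := by
          refine Finset.sum_le_sum fun k _ => ?_
          have hak : a k ≤ S :=
            le_trans (Finset.single_le_sum (fun i _ => ha i) (Finset.mem_univ k)) hsum
          have e1 : a k ^ q = a k ^ (q - 1) * a k := by
            have := Real.rpow_add' (ha k) (show (q-1) + 1 ≠ 0 by linarith) (y := q - 1) (z := 1)
            rw [sub_add_cancel] at this
            simpa [Real.rpow_one] using this
          rw [e1]
          exact mul_le_mul_of_nonneg_right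
            (Real.rpow_le_rpow (ha k) hak (by linarith)) (ha k)
      _ = S ^ (q-1) * ∑ k, a k := by rw [Finset.mul_sum]
      _ ≤ S ^ (q-1) * S := by
          exact mul_le_mul_of_nonneg_left hsum (Real.rpow_nonneg hS _)
      _ = S ^ q := hS1.symm
  · -- q < 1
    have h1q : 1 < 1/q := by
      rw [lt_div_iff₀ hq]; linarith
    have hm : max (1/q - 1) 0 = 1/q - 1 := max_eq_left (by linarith)
    rw [hm]
    rcases Nat.eq_zero_or_pos N with hN | hN
    · subst hN
      simp
      exact Real.rpow_nonneg (mul_nonneg (Real.rpow_nonneg (by norm_num) _) hS) _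
    have hN0 : (0:ℝ) < (N:ℝ) := by exact_mod_cast hN
    -- mean inequality
    have hmean := Real.rpow_arith_mean_le_arith_mean_rpow Finset.univ
      (fun _ : Fin N => 1/(N:ℝ)) (fun k => a k ^ q)
      (fun i _ => by positivity)
      (by simp [Finset.sum_const]; field_simp)
      (fun i _ => Real.rpow_nonneg (ha i) _)
      (le_of_lt h1q)
    have hz : ∀ k : Fin N, (a k ^ q) ^ (1/q) = a k := by
      intro k
      rw [← Real.rpow_mul (ha k), mul_one_div_cancel hq.ne', Real.rpow_one]
    have hmean2 : ((1/(N:ℝ)) * ∑ k, a k ^ q) ^ (1/q) ≤ S / N := by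
      calc ((1/(N:ℝ)) * ∑ k, a k ^ q) ^ (1/q)
          = (∑ k, (1/(N:ℝ)) * a k ^ q) ^ (1/q) := by rw [Finset.mul_sum]
        _ ≤ ∑ k, (1/(N:ℝ)) * (a k ^ q) ^ (1/q) := hmean
        _ = (1/(N:ℝ)) * ∑ k, a k := by
            rw [← Finset.mul_sum]
            congr 1
            exact Finset.sum_congr rfl fun k _ => hz k
        _ ≤ S / N := by
            rw [one_div, inv_mul_eq_div]
            gcongr
    have hsum0 : 0 ≤ ∑ k, a k ^ q :=
      Finset.sum_nonneg fun k _ => Real.rpow_nonneg (ha k) _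
    have hT : (1/(N:ℝ)) * ∑ k, a k ^ q ≤ (S / N) ^ q := by
      have := Real.rpow_le_rpow (Real.rpow_nonneg (by positivity) _) hmean2 hq.le
      rwa [← Real.rpow_mul (by positivity), one_div_mul_cancel hq.ne', Real.rpow_one] at this
    have hfin : (N:ℝ) * (S/N) ^ q = ((N:ℝ) ^ (1/q - 1) * S) ^ q := by
      have hNq : (0:ℝ) < (N:ℝ) ^ q := Real.rpow_pos_of_pos hN0 q
      rw [Real.mul_rpow (Real.rpow_nonneg hN0.le _) hS,
        ← Real.rpow_mul hN0.le,
        show (1/q - 1) * q = 1 - q by field_simp,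
        Real.rpow_sub hN0, Real.rpow_one,
        Real.div_rpow hS hN0.le]
      field_simp
    calc ∑ k, a k ^ q = (N:ℝ) * ((1/(N:ℝ)) * ∑ k, a k ^ q) := by field_simp
      _ ≤ (N:ℝ) * (S/N) ^ q := mul_le_mul_of_nonneg_left hT hN0.le
      _ = ((N:ℝ) ^ (1/q - 1) * S) ^ q := hfin

lemma qbfs_pairs_aux {P : ℕ × ℕ → Prop} (h : ∀ N : ℕ, ∃ p : ℕ × ℕ, N ≤ p.1 ∧ p.1 < p.2 ∧ P p) :
    ∃ s : ℕ → ℕ × ℕ, (∀ k, (s k).1 < (s k).2) ∧ (∀ k, P (s k)) ∧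
      (∀ k, (s k).2 ≤ (s (k+1)).1) := by
  choose pick h1 h2 h3 using h
  refine ⟨fun k => Nat.rec (pick 0) (fun _ prev => pick prev.2) k,
    fun k => ?_, fun k => ?_, fun k => ?_⟩
  · cases k with
    | zero => exact h2 0
    | succ k => exact h2 _
  · cases k with
    | zero => exact h3 0
    | succ k => exact h3 _
  · exact h1 _

/-- A `q`-concave quasi-Banach function space is σ-order continuous. -/
theorem sigmaOC_of_qConcave (μ : Measure Ω) (X : QBFS μ) (q : ℝ) (hq : 0 < q)
    (hX : SpaceQConcave X.Mem X.nrm q) :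
    SigmaOC μ X.Mem X.nrm := by

  obtain ⟨C, hC, hconc⟩ := hX
  intro F hF hanti htend
  have hsubmem : ∀ {u v : Ω → ℝ}, X.Mem u → X.Mem v → X.Mem (u - v) := by
    intro u v hu hv
    have h := X.add_mem hu (X.smul_mem (-1) hv)
    have e : u + (-1 : ℝ) • v = u - v := by
      funext ω; simp [sub_eq_add_neg]
    rwa [e] at h
  have hnrmneg : ∀ {u : Ω → ℝ}, X.Mem u → X.nrm (-u) = X.nrm u := by
    intro u hu
    have h := X.nrm_smul (-1) hu
    have e : (-1 : ℝ) • u = -u := by funext ω; simp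
    rw [e] at h
    simpa using h
  have hnrm0 : X.nrm 0 = 0 :=
    (X.nrm_eq_zero_iff X.zero_mem).mpr (Filter.EventuallyEq.refl _ _)
  have hpos : ∀ᵐ ω ∂μ, ∀ n, 0 ≤ F n ω := by
    filter_upwards [hanti, htend] with ω h1 h2
    intro n
    exact le_of_tendsto h2 (Filter.eventually_atTop.2 ⟨n, fun m hm => h1 hm⟩)
  -- Step A : the sequence is Cauchy in the quasi-norm
  have hcauchy : ∀ ε : ℝ, 0 < ε → ∃ N : ℕ, ∀ m ≥ N, ∀ n ≥ N, X.nrm (F m - F n) < ε := by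
    by_contra hcon
    push_neg at hcon
    obtain ⟨ε, hε, hbad⟩ := hcon
    have hpick : ∀ N : ℕ, ∃ p : ℕ × ℕ, N ≤ p.1 ∧ p.1 < p.2 ∧ ε ≤ X.nrm (F p.1 - F p.2) := by
      intro N
      obtain ⟨m, hm, n, hn, hval⟩ := hbad N
      rcases lt_trichotomy m n with h | h | h
      · exact ⟨(m, n), hm, h, hval⟩
      · exfalso
        subst h
        have e : F m - F m = 0 := by funext ω; simp
        rw [e, hnrm0] at hval
        linarith
      · refine ⟨(n, m), hn, h, ?_⟩
        have e : F n - F m = -(F m - F n) := by funext ω; simp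
        rw [e, hnrmneg (hsubmem (hF m) (hF n))]
        exact hval
    obtain ⟨s, hs1, hs2, hs3⟩ := qbfs_pairs_aux hpick
    set B := X.nrm (F 0) with hBdef
    have hB0 : 0 ≤ B := X.nrm_nonneg _
    set m' : ℝ := max (1/q - 1) 0 with hm'def
    have hm'0 : 0 ≤ m' := le_max_right _ _
    set β : ℝ := 1/q - m' with hβdef
    have hβ : 0 < β := by
      rcases max_cases (1/q - 1) 0 with ⟨h, _⟩ | ⟨h, _⟩
      · rw [hβdef, hm'def, h]; norm_num
      · rw [hβdef, hm'def, h, sub_zero]; positivity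
    obtain ⟨N, hN⟩ := exists_nat_gt (max 1 ((C * B / ε + 1) ^ (1/β)))
    have hN1 : (1:ℝ) < (N:ℝ) := lt_of_le_of_lt (le_max_left _ _) hN
    have hN0 : (0:ℝ) < (N:ℝ) := by linarith
    set g : ℕ → Ω → ℝ := fun k => F (s k).1 - F (s k).2 with hgdef
    have hgval : ∀ k ω, g k ω = F (s k).1 ω - F (s k).2 ω := fun k ω => rfl
    have hgmem : ∀ k, X.Mem (g k) := fun k => hsubmem (hF _) (hF _)
    have hgnrm : ∀ k, ε ≤ X.nrm (g k) := hs2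
    have hptwise : ∀ᵐ ω ∂μ, (∀ k, 0 ≤ g k ω) ∧
        ∀ M : ℕ, ∑ k ∈ Finset.range M, g k ω ≤ F 0 ω := by
      filter_upwards [hanti, hpos] with ω h1 h2
      have hg0 : ∀ k, 0 ≤ g k ω := by
        intro k
        rw [hgval]
        have := h1 (le_of_lt (hs1 k))
        linarith
      refine ⟨hg0, ?_⟩
      have key : ∀ M : ℕ, ∑ k ∈ Finset.range M, g k ω ≤ F 0 ω - F (s M).1 ω := by
        intro M
        induction M with
        | zero => simpa using sub_nonneg.mpr (h1 (Nat.zero_le (s 0).1))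
        | succ M ih =>
          rw [Finset.sum_range_succ, hgval]
          have e1 : F (s (M+1)).1 ω ≤ F (s M).2 ω := h1 (hs3 M)
          linarith
      intro M
      have := key M
      linarith [h2 (s M).1]
    set gg : Fin N → Ω → ℝ := fun j => g (j : ℕ) with hggdef
    have hmain := hconc N gg (fun j => hgmem (j : ℕ))
    set φ : Ω → ℝ := fun ω => (∑ j : Fin N, |gg j ω| ^ q) ^ (1/q) with hφdef
    have hφmeas : AEStronglyMeasurable φ μ := by
      apply (Real.continuous_rpow_const (by positivity : (0:ℝ) ≤ 1/q)).comp_aestronglyMeasurable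
      apply Finset.aestronglyMeasurable_fun_sum
      intro j _
      exact (Real.continuous_rpow_const hq.le).comp_aestronglyMeasurable
        (continuous_abs.comp_aestronglyMeasurable (X.mem_meas (hgmem (j : ℕ))))
    set c : ℝ := (N:ℝ) ^ m' with hcdef
    have hc0 : 0 ≤ c := Real.rpow_nonneg hN0.le _
    have hdom : ∀ᵐ ω ∂μ, |φ ω| ≤ |(c • F 0) ω| := by
      filter_upwards [hptwise, hpos] with ω hω h2
      obtain ⟨hg0, hsum⟩ := hω
      have hsum' : ∑ j : Fin N, g (j : ℕ) ω ≤ F 0 ω := by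
        rw [Fin.sum_univ_eq_sum_range (fun k => g k ω) N]
        exact hsum N
      have haux := qbfs_sum_rpow_aux hq (fun j : Fin N => g (j : ℕ) ω)
        (fun j => hg0 (j : ℕ)) (h2 0) hsum'
      have hsum0 : 0 ≤ ∑ j : Fin N, |gg j ω| ^ q :=
        Finset.sum_nonneg fun j _ => Real.rpow_nonneg (abs_nonneg _) _
      have hφ0 : 0 ≤ φ ω := Real.rpow_nonneg hsum0 _
      have hcF : 0 ≤ c * F 0 ω := mul_nonneg hc0 (h2 0)
      have hφω : φ ω ≤ c * F 0 ω := by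
        have habs : ∑ j : Fin N, |gg j ω| ^ q = ∑ j : Fin N, g (j : ℕ) ω ^ q :=
          Finset.sum_congr rfl fun j _ => by
            rw [hggdef]; rw [abs_of_nonneg (hg0 (j : ℕ))]
        have h3 : ∑ j : Fin N, |gg j ω| ^ q ≤ (c * F 0 ω) ^ q := by
          rw [habs, hcdef, hm'def]
          exact haux
        calc φ ω = (∑ j : Fin N, |gg j ω| ^ q) ^ (1/q) := rfl
          _ ≤ ((c * F 0 ω) ^ q) ^ (1/q) := Real.rpow_le_rpow hsum0 h3 (by positivity)
          _ = c * F 0 ω := by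
              rw [← Real.rpow_mul hcF, mul_one_div_cancel hq.ne', Real.rpow_one]
      calc |φ ω| = φ ω := abs_of_nonneg hφ0
        _ ≤ c * F 0 ω := hφω
        _ = |(c • F 0) ω| := by
            rw [Pi.smul_apply, smul_eq_mul, abs_of_nonneg (mul_nonneg hc0 (h2 0))]
    have hφmem : X.Mem φ := X.ideal_mem (X.smul_mem c (hF 0)) hφmeas hdom
    have hφnrm : X.nrm φ ≤ c * B := by
      have h := X.ideal_nrm (X.smul_mem c (hF 0)) hφmem hdom
      rwa [X.nrm_smul c (hF 0), abs_of_nonneg hc0] at h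
    have hlow : (N:ℝ) ^ (1/q) * ε ≤ (∑ j : Fin N, X.nrm (gg j) ^ q) ^ (1/q) := by
      have h1 : (N:ℝ) * ε ^ q ≤ ∑ j : Fin N, X.nrm (gg j) ^ q := by
        calc (N:ℝ) * ε ^ q = ∑ _j : Fin N, ε ^ q := by
              simp [Finset.sum_const, Finset.card_univ, mul_comm]
          _ ≤ _ := Finset.sum_le_sum fun j _ =>
              Real.rpow_le_rpow hε.le (hgnrm (j : ℕ)) hq.le
      have h2 := Real.rpow_le_rpow (by positivity) h1 (by positivity : (0:ℝ) ≤ 1/q)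
      calc (N:ℝ) ^ (1/q) * ε = ((N:ℝ) * ε ^ q) ^ (1/q) := by
            rw [Real.mul_rpow hN0.le (Real.rpow_nonneg hε.le _),
              ← Real.rpow_mul hε.le, mul_one_div_cancel hq.ne', Real.rpow_one]
        _ ≤ _ := h2
    have hchain : (N:ℝ) ^ (1/q) * ε ≤ C * (c * B) := by
      refine hlow.trans (hmain.trans ?_)
      exact mul_le_mul_of_nonneg_left hφnrm hC.le
    have hcpos : 0 < c := Real.rpow_pos_of_pos hN0 _
    have hsplit : (N:ℝ) ^ (1/q) = c * (N:ℝ) ^ β := by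
      rw [hcdef, ← Real.rpow_add hN0]
      congr 1
      rw [hβdef]; ring
    have hfin1 : (N:ℝ) ^ β * ε ≤ C * B := by
      rw [hsplit] at hchain
      have h' : c * ((N:ℝ) ^ β * ε) ≤ c * (C * B) := by
        calc c * ((N:ℝ) ^ β * ε) = c * (N:ℝ) ^ β * ε := by ring
          _ ≤ C * (c * B) := hchain
          _ = c * (C * B) := by ring
      exact le_of_mul_le_mul_left h' hcpos
    have hNβ : (N:ℝ) ^ β ≤ C * B / ε := by
      rw [le_div_iff₀ hε]; exact hfin1
    have hR : (0:ℝ) ≤ C * B / ε := by positivity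
    have hcontra : C * B / ε + 1 ≤ (N:ℝ) ^ β := by
      have h5 : (C * B / ε + 1) ^ (1/β) ≤ (N:ℝ) :=
        le_of_lt (lt_of_le_of_lt (le_max_right _ _) hN)
      have h6 := Real.rpow_le_rpow (Real.rpow_nonneg (by linarith) _) h5 hβ.le
      rwa [← Real.rpow_mul (by linarith : (0:ℝ) ≤ C * B / ε + 1),
        one_div_mul_cancel hβ.ne', Real.rpow_one] at h6
    linarith
  -- Step B : pass to the limit
  obtain ⟨f, hfmem, hftend⟩ := X.complete F hF hcauchy
  have hfmeas := X.mem_meas hfmem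
  have key : ∀ m : ℕ, (fun ω => max (|f ω| - F m ω) 0) =ᵐ[μ] 0 := by
    intro m
    set u : Ω → ℝ := fun ω => max (|f ω| - F m ω) 0 with hudef
    have humeas : AEStronglyMeasurable u μ := by
      have hsub : AEStronglyMeasurable (fun ω => |f ω| - F m ω) μ :=
        (continuous_abs.comp_aestronglyMeasurable hfmeas).sub (X.mem_meas (hF m))
      exact (continuous_id.max continuous_const).comp_aestronglyMeasurable hsub
    have hdom : ∀ n, m ≤ n → ∀ᵐ ω ∂μ, |u ω| ≤ |(f - F n) ω| := by
      intro n hn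
      filter_upwards [hanti, hpos] with ω h1 h2
      have h3 : F n ω ≤ F m ω := h1 hn
      have h4 : |f ω| ≤ |f ω - F n ω| + F n ω := by
        have h := abs_add_le (f ω - F n ω) (F n ω)
        simpa [abs_of_nonneg (h2 n)] using h
      have h5 : u ω ≤ |f ω - F n ω| := by
        apply max_le _ (abs_nonneg _)
        linarith
      have h6 : (0:ℝ) ≤ u ω := le_max_right _ _
      calc |u ω| = u ω := abs_of_nonneg h6
        _ ≤ |f ω - F n ω| := h5
        _ = |(f - F n) ω| := by simp
    have humem : X.Mem u := X.ideal_mem (hsubmem hfmem (hF m)) humeas (hdom m le_rfl)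
    have hle : ∀ n, m ≤ n → X.nrm u ≤ X.nrm (f - F n) :=
      fun n hn => X.ideal_nrm (hsubmem hfmem (hF n)) humem (hdom n hn)
    have h7 : X.nrm u ≤ 0 :=
      ge_of_tendsto hftend (Filter.eventually_atTop.2 ⟨m, hle⟩)
    exact (X.nrm_eq_zero_iff humem).mp (le_antisymm h7 (X.nrm_nonneg u))
  have hf0 : f =ᵐ[μ] 0 := by
    have hall : ∀ᵐ ω ∂μ, ∀ m : ℕ, max (|f ω| - F m ω) 0 = 0 := by
      rw [MeasureTheory.ae_all_iff]
      intro m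
      filter_upwards [key m] with ω h
      simpa using h
    filter_upwards [hall, htend] with ω h1 h2
    have h3 : ∀ m, |f ω| ≤ F m ω := by
      intro m
      have h := h1 m
      by_contra hcon
      push_neg at hcon
      have hgt : 0 < max (|f ω| - F m ω) 0 := lt_max_iff.mpr (Or.inl (by linarith))
      linarith
    have h4 : |f ω| ≤ 0 := ge_of_tendsto h2 (Filter.Eventually.of_forall h3)
    have h5 : f ω = 0 := abs_nonpos_iff.mp h4
    simpa using h5
  have hcong : ∀ n, X.nrm (F n) = X.nrm (f - F n) := by
    intro n
    have h1 : F n =ᵐ[μ] -(f - F n) := by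
      filter_upwards [hf0] with ω h
      have h' : f ω = 0 := by simpa using h
      simp [h']
    calc X.nrm (F n) = X.nrm (-(f - F n)) := X.nrm_congr h1
      _ = X.nrm (f - F n) := hnrmneg (hsubmem hfmem (hF n))
  exact hftend.congr fun n => (hcong n).symm
end

section
/- Let X(μ) be a quasi-Banach function space and p ∈ (0,∞). Then the p-power X(μ)^p is σ-order continuous if and only if X(μ) is σ-order continuous. -/
open MeasureTheory Filter Topology

variable {Ω : Type*} [MeasurableSpace Ω]

/-- Membership in the `p`-power of a function space. -/
def powMem (Mem : (Ω → ℝ) → Prop) (p : ℝ) (f : Ω → ℝ) : Prop :=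
  Mem (fun ω => |f ω| ^ p)

/-- The quasi-norm of the `p`-power of a function space. -/
noncomputable def powNrm (nrm : (Ω → ℝ) → ℝ) (p : ℝ) (f : Ω → ℝ) : ℝ :=
  nrm (fun ω => |f ω| ^ p) ^ (1 / p)

private lemma tendsto_rpow_aux {a : ℕ → ℝ} {b : ℝ} (hb : 0 < b)
    (h : Tendsto a atTop (𝓝 0)) : Tendsto (fun n => a n ^ b) atTop (𝓝 0) := by
  have hc := (Real.continuousAt_rpow_const 0 b (Or.inr hb.le)).tendsto.comp h
  simpa [Function.comp_def, Real.zero_rpow hb.ne'] using hc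

/-- The `p`-power `X(μ)^p` is σ-order continuous iff `X(μ)` is. -/
theorem powSpace_sigmaOC_iff (μ : Measure Ω) (X : QBFS μ) (p : ℝ) (hp : 0 < p) :
    SigmaOC μ (powMem X.Mem p) (powNrm X.nrm p) ↔ SigmaOC μ X.Mem X.nrm := by
  constructor
  · -- X^p σ-OC → X σ-OC
    intro hP F hF hanti htend
    set H : ℕ → Ω → ℝ := fun n ω => |F n ω| ^ (1 / p) with hH
    have hHp : ∀ n, (fun ω => |H n ω| ^ p) = fun ω => |F n ω| := by
      intro n
      funext ω
      have h1 : |H n ω| = |F n ω| ^ (1 / p) :=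
        abs_of_nonneg (Real.rpow_nonneg (abs_nonneg _) _)
      rw [h1, ← Real.rpow_mul (abs_nonneg _), one_div_mul_cancel hp.ne', Real.rpow_one]
    have hmemH : ∀ n, powMem X.Mem p (H n) := by
      intro n
      unfold powMem
      rw [hHp n]
      refine X.ideal_mem (hF n) ?_ ?_
      · simpa [Real.norm_eq_abs] using (X.mem_meas (hF n)).norm
      · filter_upwards with ω using by rw [abs_abs]
    have hkey := hP H hmemH ?_ ?_
    · -- conclude
      have hnn : ∀ᵐ ω ∂μ, ∀ n, 0 ≤ F n ω := by
        filter_upwards [hanti, htend] with ω h1 h2 n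
        exact le_of_tendsto h2 (eventually_atTop.2 ⟨n, fun m hm => h1 hm⟩)
      have heq : ∀ n, powNrm X.nrm p (H n) = X.nrm (F n) ^ (1 / p) := by
        intro n
        unfold powNrm
        rw [hHp n]
        congr 1
        refine X.nrm_congr ?_
        filter_upwards [hnn] with ω h using abs_of_nonneg (h n)
      rw [funext heq] at hkey
      have := tendsto_rpow_aux hp hkey
      have heq2 : ∀ n, (X.nrm (F n) ^ (1 / p)) ^ p = X.nrm (F n) := by
        intro n
        rw [← Real.rpow_mul (X.nrm_nonneg _), one_div_mul_cancel hp.ne', Real.rpow_one]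
      exact this.congr heq2
    · -- antitone
      filter_upwards [hanti, htend] with ω h1 h2
      intro m n hmn
      have hnn : ∀ k, 0 ≤ F k ω := fun k =>
        le_of_tendsto h2 (eventually_atTop.2 ⟨k, fun l hl => h1 hl⟩)
      simp only [hH]
      have : |F n ω| ≤ |F m ω| := by
        rw [abs_of_nonneg (hnn n), abs_of_nonneg (hnn m)]; exact h1 hmn
      exact Real.rpow_le_rpow (abs_nonneg _) this (by positivity)
    · -- tendsto
      filter_upwards [htend] with ω h2
      exact tendsto_rpow_aux (by positivity) (by simpa using h2.abs)
  · -- X σ-OC → X^p σ-OC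
    intro hX F hF hanti htend
    have hkey := hX (fun n ω => |F n ω| ^ p) hF ?_ ?_
    · have : Tendsto (fun n => X.nrm (fun ω => |F n ω| ^ p) ^ (1 / p)) atTop (𝓝 0) :=
        tendsto_rpow_aux (by positivity) hkey
      exact this
    · filter_upwards [hanti, htend] with ω h1 h2
      intro m n hmn
      have hnn : ∀ k, 0 ≤ F k ω := fun k =>
        le_of_tendsto h2 (eventually_atTop.2 ⟨k, fun l hl => h1 hl⟩)
      have : |F n ω| ≤ |F m ω| := by
        rw [abs_of_nonneg (hnn n), abs_of_nonneg (hnn m)]; exact h1 hmn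
      exact Real.rpow_le_rpow (abs_nonneg _) this hp.le
    · filter_upwards [htend] with ω h2
      exact tendsto_rpow_aux hp (by simpa using h2.abs)
end

section
/- Let X(μ) be a σ-order continuous quasi-Banach function space and q ∈ (0,∞). Then qX(μ) endowed with ‖·‖_{qX(μ)} is a quasi-Banach function space over μ: it has the ideal property (if f ∈ qX(μ), g ∈ L⁰(μ), |g| ≤ |f| μ-a.e. then g ∈ qX(μ) and ‖g‖_{qX(μ)} ≤ ‖f‖_{qX(μ)}), ‖·‖_{qX(μ)} is a quasi-norm with triangle constant 2^{1+|1−1/q|}K (where K is the quasi-norm constant of X(μ)), qX(μ) is complete, and ‖f‖_{X(μ)} ≤ ‖f‖_{qX(μ)} for every f ∈ qX(μ). -/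
open MeasureTheory Filter Topology

variable {Ω : Type*} [MeasurableSpace Ω]

private lemma rqi {q : ℝ} (hq : 0 < q) {x : ℝ} (hx : 0 ≤ x) : (x ^ q) ^ (1/q) = x := by
  rw [one_div, Real.rpow_rpow_inv hx hq.ne']

private lemma riq {q : ℝ} (hq : 0 < q) {x : ℝ} (hx : 0 ≤ x) : (x ^ (1/q)) ^ q = x := by
  rw [one_div, Real.rpow_inv_rpow hx hq.ne']

private lemma sum_abs_rpow_nonneg {q : ℝ} {n : ℕ} (g : Fin n → Ω → ℝ) (ω : Ω) :
    0 ≤ ∑ j, |g j ω| ^ q :=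
  Finset.sum_nonneg fun j _ => Real.rpow_nonneg (abs_nonneg _) _

private lemma frac_le {x y z : ℝ} (hx : 0 ≤ x) (hy : 0 ≤ y) (hz : 0 ≤ z) :
    x * y / (y + z) ≤ x := by
  rcases eq_or_lt_of_le (add_nonneg hy hz) with h | h
  · rw [← h, div_zero]; exact hx
  · rw [div_le_iff₀ h]; nlinarith

private lemma frac_le' {w y z : ℝ} (hw : 0 ≤ w) (hwyz : w ≤ y + z) (hy : 0 ≤ y) (hz : 0 ≤ z) :
    w * y / (y + z) ≤ y := by
  rcases eq_or_lt_of_le (add_nonneg hy hz) with h | h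
  · rw [← h, div_zero]; exact hy
  · rw [div_le_iff₀ h]; nlinarith

private lemma frac_le3 {x t d : ℝ} (ht : 0 ≤ t) (htd : t ≤ d) : |x * t / d| ≤ |x| := by
  rcases eq_or_lt_of_le (ht.trans htd) with h | h
  · have : t = 0 := le_antisymm (h ▸ htd) ht
    simp [← h, this]
  · rw [abs_div, abs_of_pos h, div_le_iff₀ h, abs_mul, abs_of_nonneg ht]
    nlinarith [abs_nonneg x]

private lemma real_rpow_add_le {q : ℝ} (hq0 : 0 < q) (hq1 : q ≤ 1) {x y : ℝ}
    (hx : 0 ≤ x) (hy : 0 ≤ y) : (x + y) ^ q ≤ x ^ q + y ^ q := by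
  lift x to NNReal using hx
  lift y to NNReal using hy
  exact_mod_cast NNReal.rpow_add_le_add_rpow x y hq0.le hq1

private lemma smul_sum_rpow {q : ℝ} (hq : 0 < q) {n : ℕ} {c : ℝ} (hc : 0 ≤ c) (v : Fin n → ℝ)
    (hv : ∀ j, 0 ≤ v j) :
    (∑ j, (c * v j) ^ q) ^ (1/q) = c * (∑ j, v j ^ q) ^ (1/q) := by
  have h1 : ∀ j : Fin n, (c * v j) ^ q = c ^ q * v j ^ q := fun j => Real.mul_rpow hc (hv j)
  simp_rw [h1, ← Finset.mul_sum]
  rw [Real.mul_rpow (Real.rpow_nonneg hc _) (Finset.sum_nonneg fun j _ => Real.rpow_nonneg (hv j) _),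
    rqi hq hc]

private lemma two_rpow_ge_one {e : ℝ} (he : 0 ≤ e) : (1:ℝ) ≤ 2 ^ e := by
  calc (1:ℝ) = (2:ℝ) ^ (0:ℝ) := (Real.rpow_zero 2).symm
  _ ≤ 2 ^ e := Real.rpow_le_rpow_of_exponent_le one_le_two he

private lemma L0 {q : ℝ} (hq : 0 < q) {n : ℕ} (u v : Fin n → ℝ) (hu : ∀ j, 0 ≤ u j)
    (hv : ∀ j, 0 ≤ v j) :
    (∑ j, (u j + v j) ^ q) ^ (1/q) ≤
      2 ^ (1 + |1 - 1/q|) * ((∑ j, u j ^ q) ^ (1/q) + (∑ j, v j ^ q) ^ (1/q)) := by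
  set A := (∑ j, u j ^ q) ^ (1/q) with hA
  set B := (∑ j, v j ^ q) ^ (1/q) with hB
  have hAnn : 0 ≤ A := Real.rpow_nonneg (Finset.sum_nonneg fun j _ => Real.rpow_nonneg (hu j) _) _
  have hBnn : 0 ≤ B := Real.rpow_nonneg (Finset.sum_nonneg fun j _ => Real.rpow_nonneg (hv j) _) _
  have he : 0 ≤ 1 + |1 - 1/q| := by positivity
  rcases le_total 1 q with hq1 | hq1
  · have hmink : (∑ j, (u j + v j) ^ q) ^ (1/q) ≤ A + B := by
      have h := Real.Lp_add_le Finset.univ u v hq1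
      simpa [hA, hB, fun j => abs_of_nonneg (hu j), fun j => abs_of_nonneg (hv j),
        fun j => abs_of_nonneg (add_nonneg (hu j) (hv j))] using h
    calc (∑ j, (u j + v j) ^ q) ^ (1/q) ≤ A + B := hmink
    _ = 1 * (A + B) := (one_mul _).symm
    _ ≤ 2 ^ (1 + |1 - 1/q|) * (A + B) :=
        mul_le_mul_of_nonneg_right (two_rpow_ge_one he) (add_nonneg hAnn hBnn)
  · -- q ≤ 1
    have hsub : (∑ j, (u j + v j) ^ q) ≤ (∑ j, u j ^ q) + (∑ j, v j ^ q) := by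
      rw [← Finset.sum_add_distrib]
      exact Finset.sum_le_sum fun j _ => real_rpow_add_le hq hq1 (hu j) (hv j)
    set S := ∑ j, u j ^ q with hS
    set T := ∑ j, v j ^ q with hT
    have hSnn : 0 ≤ S := Finset.sum_nonneg fun j _ => Real.rpow_nonneg (hu j) _
    have hTnn : 0 ≤ T := Finset.sum_nonneg fun j _ => Real.rpow_nonneg (hv j) _
    have h1 : (∑ j, (u j + v j) ^ q) ^ (1/q) ≤ (S + T) ^ (1/q) :=
      Real.rpow_le_rpow (Finset.sum_nonneg fun j _ =>
        Real.rpow_nonneg (add_nonneg (hu j) (hv j)) _) hsub (by positivity)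
    have h2 : (S + T) ^ (1/q) ≤ (2 * max S T) ^ (1/q) := by
      apply Real.rpow_le_rpow (add_nonneg hSnn hTnn) _ (by positivity)
      rcases le_total S T with h | h
      · calc S + T ≤ T + T := by linarith
        _ = 2 * T := by ring
        _ ≤ 2 * max S T := by have := le_max_right S T; linarith
      · calc S + T ≤ S + S := by linarith
        _ = 2 * S := by ring
        _ ≤ 2 * max S T := by have := le_max_left S T; linarith
    have h3 : (2 * max S T) ^ (1/q) = 2 ^ (1/q) * (max S T) ^ (1/q) :=
      Real.mul_rpow (by norm_num) (le_max_of_le_left hSnn)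
    have h4 : (max S T) ^ (1/q) ≤ A + B := by
      rcases max_cases S T with ⟨h, -⟩ | ⟨h, -⟩
      · rw [h, hA, hS]; linarith
      · rw [h, hB, hT]; linarith
    have h5 : (2:ℝ) ^ (1/q) = 2 ^ (1 + |1 - 1/q|) := by
      congr 1
      have : (1:ℝ) ≤ 1/q := by
        rw [le_div_iff₀ hq]; linarith
      rw [abs_of_nonpos (by linarith)]
      ring
    calc (∑ j, (u j + v j) ^ q) ^ (1/q) ≤ 2 ^ (1/q) * (max S T) ^ (1/q) := by
          rw [← h3]; exact h1.trans h2
    _ ≤ 2 ^ (1/q) * (A + B) := mul_le_mul_of_nonneg_left h4 (by positivity)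
    _ = 2 ^ (1 + |1 - 1/q|) * (A + B) := by rw [h5]

set_option linter.unusedSectionVars false
set_option linter.unusedVariables false
set_option linter.deprecated false

/-- The set of values `(∑‖g_j‖^q)^{1/q}` over all finite `q`-decompositions of `|f|`. -/
def coreSet (μ : Measure Ω) (Mem : (Ω → ℝ) → Prop) (nrm : (Ω → ℝ) → ℝ) (q : ℝ)
    (f : Ω → ℝ) : Set ℝ :=
  {a : ℝ | ∃ (n : ℕ) (g : Fin n → Ω → ℝ), (∀ j, Mem (g j)) ∧
    (∀ᵐ ω ∂μ, |f ω| = (∑ j, |g j ω| ^ q) ^ (1 / q)) ∧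
    a = (∑ j, nrm (g j) ^ q) ^ (1 / q)}

/-- Membership in `qX(μ)`, the `q`-concave core. -/
def coreMem (μ : Measure Ω) (Mem : (Ω → ℝ) → Prop) (nrm : (Ω → ℝ) → ℝ) (q : ℝ)
    (f : Ω → ℝ) : Prop :=
  Mem f ∧ BddAbove (coreSet μ Mem nrm q f)

/-- The quasi-norm of `qX(μ)`. -/
noncomputable def coreNrm (μ : Measure Ω) (Mem : (Ω → ℝ) → Prop) (nrm : (Ω → ℝ) → ℝ)
    (q : ℝ) (f : Ω → ℝ) : ℝ :=
  sSup (coreSet μ Mem nrm q f)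

section Core

variable {μ : Measure Ω} {q : ℝ}

private lemma coreSet_nonneg (X : QBFS μ) {f : Ω → ℝ} {a : ℝ}
    (ha : a ∈ coreSet μ X.Mem X.nrm q f) : 0 ≤ a := by
  obtain ⟨n, g, -, -, rfl⟩ := ha
  exact Real.rpow_nonneg (Finset.sum_nonneg fun j _ => Real.rpow_nonneg (X.nrm_nonneg _) _) _

private lemma coreNrm_nonneg (X : QBFS μ) (f : Ω → ℝ) : 0 ≤ coreNrm μ X.Mem X.nrm q f :=
  Real.sSup_nonneg fun _ ha => coreSet_nonneg X ha

private lemma nrm_mem_coreSet (X : QBFS μ) (hq : 0 < q) {f : Ω → ℝ} (hf : X.Mem f) :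
    X.nrm f ∈ coreSet μ X.Mem X.nrm q f := by
  refine ⟨1, fun _ => f, fun _ => hf, ae_of_all μ fun ω => ?_, ?_⟩
  · rw [Fin.sum_univ_one, rqi hq (abs_nonneg _)]
  · rw [Fin.sum_univ_one, rqi hq (X.nrm_nonneg f)]

private lemma coreSet_congr {Mem : (Ω → ℝ) → Prop} {nrm : (Ω → ℝ) → ℝ} {f g : Ω → ℝ}
    (h : f =ᵐ[μ] g) : coreSet μ Mem nrm q f = coreSet μ Mem nrm q g := by
  ext a
  constructor
  · rintro ⟨n, G, h1, h2, h3⟩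
    exact ⟨n, G, h1, by filter_upwards [h2, h] with ω h2 h; rw [← h]; exact h2, h3⟩
  · rintro ⟨n, G, h1, h2, h3⟩
    exact ⟨n, G, h1, by filter_upwards [h2, h] with ω h2 h; rw [h]; exact h2, h3⟩

private lemma X_aemeas (X : QBFS μ) {f : Ω → ℝ} (hf : X.Mem f) : AEMeasurable f μ :=
  aestronglyMeasurable_iff_aemeasurable.1 (X.mem_meas hf)

/-- Key domination lemma: any decomposition value of a dominated function is bounded by
the core norm of the dominating function. -/
private lemma dom_le (X : QBFS μ) (hq : 0 < q) {f g : Ω → ℝ}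
    (hf : coreMem μ X.Mem X.nrm q f) (hgm : AEMeasurable g μ)
    (hle : ∀ᵐ ω ∂μ, |g ω| ≤ |f ω|) :
    ∀ a ∈ coreSet μ X.Mem X.nrm q g, a ≤ coreNrm μ X.Mem X.nrm q f := by
  rintro a ⟨n, G, hG, hae, rfl⟩
  have hfm : AEMeasurable f μ := X_aemeas X hf.1
  set h : Ω → ℝ := fun ω => (max (|f ω| ^ q - ∑ j, |G j ω| ^ q) 0) ^ (1/q) with hhdef
  have hGm : ∀ j, AEMeasurable (G j) μ := fun j => X_aemeas X (hG j)
  have hhm : AEMeasurable h μ := by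
    apply AEMeasurable.pow _ aemeasurable_const
    apply AEMeasurable.max _ aemeasurable_const
    exact (hfm.norm.pow aemeasurable_const).sub
      (Finset.aemeasurable_fun_sum _ fun j _ => (hGm j).norm.pow aemeasurable_const)
  have key : ∀ᵐ ω ∂μ, |f ω| = ((∑ j, |G j ω| ^ q) + |h ω| ^ q) ^ (1/q) ∧ |h ω| ≤ |f ω| := by
    filter_upwards [hae, hle] with ω h1 h2
    have hs : 0 ≤ ∑ j, |G j ω| ^ q := sum_abs_rpow_nonneg G ω
    have hsle : (∑ j, |G j ω| ^ q) ≤ |f ω| ^ q := by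
      calc ∑ j, |G j ω| ^ q = |g ω| ^ q := by rw [h1, riq hq hs]
      _ ≤ |f ω| ^ q := Real.rpow_le_rpow (abs_nonneg _) h2 hq.le
    have hmax : max (|f ω| ^ q - ∑ j, |G j ω| ^ q) 0 = |f ω| ^ q - ∑ j, |G j ω| ^ q :=
      max_eq_left (by linarith)
    have hh0 : 0 ≤ h ω := Real.rpow_nonneg (le_max_right _ _) _
    have hhq : |h ω| ^ q = |f ω| ^ q - ∑ j, |G j ω| ^ q := by
      rw [abs_of_nonneg hh0, hhdef]
      simp only
      rw [riq hq (le_max_right _ _), hmax]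
    constructor
    · have e1 : (∑ j, |G j ω| ^ q) + |h ω| ^ q = |f ω| ^ q := by rw [hhq]; ring
      rw [e1, rqi hq (abs_nonneg _)]
    · have : |h ω| ^ q ≤ |f ω| ^ q := by rw [hhq]; linarith
      exact (Real.rpow_le_rpow_iff (abs_nonneg _) (abs_nonneg _) hq).1 this
  have hmemh : X.Mem h := X.ideal_mem hf.1 (aestronglyMeasurable_iff_aemeasurable.2 hhm)
    (key.mono fun ω hω => hω.2)
  set G' : Fin (n+1) → Ω → ℝ := Fin.snoc G h with hG'def
  have hmem' : (∑ j : Fin (n+1), X.nrm (G' j) ^ q) ^ (1/q) ∈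
      coreSet μ X.Mem X.nrm q f := by
    refine ⟨n+1, G', fun j => ?_, ?_, rfl⟩
    · refine Fin.lastCases ?_ (fun i => ?_) j
      · rw [hG'def, Fin.snoc_last]; exact hmemh
      · rw [hG'def, Fin.snoc_castSucc]; exact hG i
    · filter_upwards [key] with ω hω
      rw [Fin.sum_univ_castSucc]
      simp only [hG'def, Fin.snoc_castSucc, Fin.snoc_last]
      exact hω.1
  refine le_trans ?_ (le_csSup hf.2 hmem')
  apply Real.rpow_le_rpow (Finset.sum_nonneg fun j _ => Real.rpow_nonneg (X.nrm_nonneg _) _)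
    ?_ (by positivity)
  rw [Fin.sum_univ_castSucc]
  simp only [hG'def, Fin.snoc_castSucc, Fin.snoc_last]
  have : 0 ≤ X.nrm h ^ q := Real.rpow_nonneg (X.nrm_nonneg _) _
  linarith

private lemma dom_coreMem (X : QBFS μ) (hq : 0 < q) {f g : Ω → ℝ}
    (hf : coreMem μ X.Mem X.nrm q f) (hgm : AEStronglyMeasurable g μ)
    (hle : ∀ᵐ ω ∂μ, |g ω| ≤ |f ω|) :
    coreMem μ X.Mem X.nrm q g ∧ coreNrm μ X.Mem X.nrm q g ≤ coreNrm μ X.Mem X.nrm q f := by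
  have hgm' := aestronglyMeasurable_iff_aemeasurable.1 hgm
  exact ⟨⟨X.ideal_mem hf.1 hgm hle, ⟨_, fun a ha => dom_le X hq hf hgm' hle a ha⟩⟩,
    Real.sSup_le (dom_le X hq hf hgm' hle) (coreNrm_nonneg X f)⟩

/-- Every decomposition value of an a.e.-zero function is zero. -/
private lemma coreSet_zero (X : QBFS μ) (hq : 0 < q) {f : Ω → ℝ} (hf0 : f =ᵐ[μ] 0) :
    ∀ a ∈ coreSet μ X.Mem X.nrm q f, a = 0 := by
  rintro a ⟨n, G, hG, hae, rfl⟩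
  have hz : ∀ j : Fin n, G j =ᵐ[μ] 0 := by
    intro j
    filter_upwards [hae, hf0] with ω h1 h2
    have hs : 0 ≤ ∑ i, |G i ω| ^ q := sum_abs_rpow_nonneg G ω
    have h0 : (∑ i, |G i ω| ^ q) = 0 := by
      have h3 : (∑ i, |G i ω| ^ q) ^ (1/q) = 0 := by
        rw [← h1, h2]; simp
      have h4 := congrArg (fun x : ℝ => x ^ q) h3
      rwa [riq hq hs, Real.zero_rpow hq.ne'] at h4
    have hterm : |G j ω| ^ q = 0 := by
      have := (Finset.sum_eq_zero_iff_of_nonneg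
        (fun i _ => Real.rpow_nonneg (abs_nonneg (G i ω)) q)).1 h0 j (Finset.mem_univ j)
      exact this
    have : |G j ω| = 0 := by
      by_contra hc
      have hpos : 0 < |G j ω| := lt_of_le_of_ne (abs_nonneg _) (Ne.symm hc)
      have := Real.rpow_pos_of_pos hpos q
      linarith
    simpa [abs_eq_zero] using this
  have : ∀ j : Fin n, X.nrm (G j) = 0 := fun j => (X.nrm_eq_zero_iff (hG j)).2 (hz j)
  simp only [this, Real.zero_rpow hq.ne', Finset.sum_const_zero, one_div]
  exact Real.zero_rpow (inv_ne_zero hq.ne')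

private lemma coreMem_zero (X : QBFS μ) (hq : 0 < q) : coreMem μ X.Mem X.nrm q (0 : Ω → ℝ) :=
  ⟨X.zero_mem, ⟨0, fun a ha => le_of_eq (coreSet_zero X hq (by rfl) a ha)⟩⟩

private lemma coreNrm_zero_of_ae (X : QBFS μ) (hq : 0 < q) {f : Ω → ℝ} (hf0 : f =ᵐ[μ] 0) :
    coreNrm μ X.Mem X.nrm q f = 0 := by
  apply le_antisymm
  · exact Real.sSup_le (fun a ha => le_of_eq (coreSet_zero X hq hf0 a ha)) le_rfl
  · exact coreNrm_nonneg X f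

/-- Bound for decomposition values of a scalar multiple. -/
private lemma smul_bound (X : QBFS μ) (hq : 0 < q) {f : Ω → ℝ}
    (hf : coreMem μ X.Mem X.nrm q f) (c : ℝ) :
    ∀ a ∈ coreSet μ X.Mem X.nrm q (c • f), a ≤ |c| * coreNrm μ X.Mem X.nrm q f := by
  intro a ha
  rcases eq_or_ne c 0 with rfl | hc
  · have h0 : (0 : ℝ) • f =ᵐ[μ] 0 := by
      filter_upwards with ω; simp
    have := coreSet_zero X hq h0 a ha
    simp [this, abs_nonneg, mul_nonneg (abs_nonneg (0:ℝ)) (coreNrm_nonneg X f)]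
  · obtain ⟨n, G, hG, hae, rfl⟩ := ha
    have hcpos : 0 < |c| := abs_pos.2 hc
    set G' : Fin n → Ω → ℝ := fun j => c⁻¹ • G j with hG'def
    have hG' : ∀ j, X.Mem (G' j) := fun j => X.smul_mem _ (hG j)
    have hae' : ∀ᵐ ω ∂μ, |f ω| = (∑ j, |G' j ω| ^ q) ^ (1/q) := by
      filter_upwards [hae] with ω h1
      have e1 : ∀ j : Fin n, |G' j ω| = |c|⁻¹ * |G j ω| := by
        intro j
        simp [hG'def, abs_mul, abs_inv]
      simp_rw [e1]
      rw [smul_sum_rpow hq (by positivity) _ (fun j => abs_nonneg _), ← h1]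
      have : |(c • f) ω| = |c| * |f ω| := by simp [abs_mul]
      rw [this] at h1 ⊢
      field_simp
    have hval : (∑ j, X.nrm (G' j) ^ q) ^ (1/q) =
        |c|⁻¹ * (∑ j, X.nrm (G j) ^ q) ^ (1/q) := by
      have e1 : ∀ j : Fin n, X.nrm (G' j) = |c|⁻¹ * X.nrm (G j) := by
        intro j
        rw [hG'def]
        simp only
        rw [X.nrm_smul _ (hG j), abs_inv]
      simp_rw [e1]
      exact smul_sum_rpow hq (by positivity) _ (fun j => X.nrm_nonneg _)
    have hmem : (∑ j, X.nrm (G' j) ^ q) ^ (1/q) ∈ coreSet μ X.Mem X.nrm q f :=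
      ⟨n, G', hG', hae', rfl⟩
    have := le_csSup hf.2 hmem
    rw [hval] at this
    calc (∑ j, X.nrm (G j) ^ q) ^ (1/q)
        = |c| * (|c|⁻¹ * (∑ j, X.nrm (G j) ^ q) ^ (1/q)) := by field_simp
    _ ≤ |c| * coreNrm μ X.Mem X.nrm q f := mul_le_mul_of_nonneg_left this hcpos.le

/-- Bound for decomposition values of a sum. -/
private lemma add_bound (X : QBFS μ) (hq : 0 < q) {f g : Ω → ℝ}
    (hf : coreMem μ X.Mem X.nrm q f) (hg : coreMem μ X.Mem X.nrm q g) :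
    ∀ a ∈ coreSet μ X.Mem X.nrm q (f + g),
      a ≤ 2 ^ (1 + |1 - 1/q|) * X.K * (coreNrm μ X.Mem X.nrm q f + coreNrm μ X.Mem X.nrm q g) := by
  rintro a ⟨n, H, hH, hae, rfl⟩
  have hfm : AEMeasurable f μ := X_aemeas X hf.1
  have hgm : AEMeasurable g μ := X_aemeas X hg.1
  have hHm : ∀ j, AEMeasurable (H j) μ := fun j => X_aemeas X (hH j)
  set Ff : Fin n → Ω → ℝ := fun j ω => |H j ω| * |f ω| / (|f ω| + |g ω|) with hFfdef
  set Gg : Fin n → Ω → ℝ := fun j ω => |H j ω| * |g ω| / (|f ω| + |g ω|) with hGgdef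
  have hFfle : ∀ j ω, |Ff j ω| ≤ |H j ω| := by
    intro j ω
    rw [hFfdef]
    simp only
    rw [abs_div, abs_mul, abs_abs, abs_abs,
      abs_of_nonneg (add_nonneg (abs_nonneg (f ω)) (abs_nonneg (g ω)))]
    exact frac_le (abs_nonneg _) (abs_nonneg _) (abs_nonneg _)
  have hGgle : ∀ j ω, |Gg j ω| ≤ |H j ω| := by
    intro j ω
    rw [hGgdef]
    simp only
    rw [abs_div, abs_mul, abs_abs, abs_abs,
      abs_of_nonneg (add_nonneg (abs_nonneg (f ω)) (abs_nonneg (g ω)))]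
    have := frac_le (abs_nonneg (H j ω)) (abs_nonneg (g ω)) (abs_nonneg (f ω))
    rw [add_comm] at this
    exact this
  have hFfmem : ∀ j, X.Mem (Ff j) := by
    intro j
    apply X.ideal_mem (hH j) _ (ae_of_all μ fun ω => hFfle j ω)
    apply aestronglyMeasurable_iff_aemeasurable.2
    exact ((hHm j).norm.mul hfm.norm).div (hfm.norm.add hgm.norm)
  have hGgmem : ∀ j, X.Mem (Gg j) := by
    intro j
    apply X.ideal_mem (hH j) _ (ae_of_all μ fun ω => hGgle j ω)
    apply aestronglyMeasurable_iff_aemeasurable.2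
    exact ((hHm j).norm.mul hgm.norm).div (hfm.norm.add hgm.norm)
  -- Ff decomposes φf, a function dominated by f
  have keyf : ∀ᵐ ω ∂μ, |(|f ω + g ω| * |f ω| / (|f ω| + |g ω|))| = (∑ j, |Ff j ω| ^ q) ^ (1/q) := by
    filter_upwards [hae] with ω h1
    simp only [Pi.add_apply] at h1
    set c : ℝ := |f ω| / (|f ω| + |g ω|) with hc
    have hcnn : 0 ≤ c := by positivity
    have e1 : ∀ j : Fin n, |Ff j ω| = c * |H j ω| := by
      intro j
      rw [hFfdef]
      simp only
      rw [abs_div, abs_mul, abs_abs, abs_abs,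
        abs_of_nonneg (add_nonneg (abs_nonneg (f ω)) (abs_nonneg (g ω))), hc]
      ring
    simp_rw [e1]
    rw [smul_sum_rpow hq hcnn _ (fun j => abs_nonneg _), ← h1]
    rw [abs_of_nonneg (by positivity : (0:ℝ) ≤ |f ω + g ω| * |f ω| / (|f ω| + |g ω|)), hc]
    ring
  have keyg : ∀ᵐ ω ∂μ, |(|f ω + g ω| * |g ω| / (|f ω| + |g ω|))| = (∑ j, |Gg j ω| ^ q) ^ (1/q) := by
    filter_upwards [hae] with ω h1
    simp only [Pi.add_apply] at h1
    set c : ℝ := |g ω| / (|f ω| + |g ω|) with hc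
    have hcnn : 0 ≤ c := by positivity
    have e1 : ∀ j : Fin n, |Gg j ω| = c * |H j ω| := by
      intro j
      rw [hGgdef]
      simp only
      rw [abs_div, abs_mul, abs_abs, abs_abs,
        abs_of_nonneg (add_nonneg (abs_nonneg (f ω)) (abs_nonneg (g ω))), hc]
      ring
    simp_rw [e1]
    rw [smul_sum_rpow hq hcnn _ (fun j => abs_nonneg _), ← h1]
    rw [abs_of_nonneg (by positivity : (0:ℝ) ≤ |f ω + g ω| * |g ω| / (|f ω| + |g ω|)), hc]
    ring
  have hφfle : ∀ᵐ ω ∂μ, |(|f ω + g ω| * |f ω| / (|f ω| + |g ω|))| ≤ |f ω| := by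
    filter_upwards with ω
    rw [abs_of_nonneg (by positivity : (0:ℝ) ≤ |f ω + g ω| * |f ω| / (|f ω| + |g ω|))]
    exact frac_le' (abs_nonneg _) (abs_add_le _ _) (abs_nonneg _) (abs_nonneg _)
  have hφgle : ∀ᵐ ω ∂μ, |(|f ω + g ω| * |g ω| / (|f ω| + |g ω|))| ≤ |g ω| := by
    filter_upwards with ω
    rw [abs_of_nonneg (by positivity : (0:ℝ) ≤ |f ω + g ω| * |g ω| / (|f ω| + |g ω|))]
    have h := frac_le' (abs_nonneg (f ω + g ω))
      (le_trans (abs_add_le (f ω) (g ω)) (le_of_eq (add_comm _ _))) (abs_nonneg (g ω)) (abs_nonneg (f ω))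
    rwa [add_comm (|g ω|) (|f ω|)] at h
  have hAf : (∑ j, X.nrm (Ff j) ^ q) ^ (1/q) ≤ coreNrm μ X.Mem X.nrm q f := by
    apply dom_le X hq hf (((hfm.add hgm).norm.mul hfm.norm).div (hfm.norm.add hgm.norm)) hφfle
    exact ⟨n, Ff, hFfmem, keyf, rfl⟩
  have hAg : (∑ j, X.nrm (Gg j) ^ q) ^ (1/q) ≤ coreNrm μ X.Mem X.nrm q g := by
    apply dom_le X hq hg (((hfm.add hgm).norm.mul hgm.norm).div (hfm.norm.add hgm.norm)) hφgle
    exact ⟨n, Gg, hGgmem, keyg, rfl⟩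
  -- nrm (H j) ≤ K * (nrm (Ff j) + nrm (Gg j))
  have hnrmH : ∀ j, X.nrm (H j) ≤ X.K * (X.nrm (Ff j) + X.nrm (Gg j)) := by
    intro j
    have hle : ∀ᵐ ω ∂μ, |H j ω| ≤ |Ff j ω + Gg j ω| := by
      filter_upwards [hae] with ω h1
      simp only [Pi.add_apply] at h1
      rw [hFfdef, hGgdef]
      simp only
      by_cases hr : |f ω| + |g ω| = 0
      · have hf0 : |f ω| = 0 := by
          have := abs_nonneg (f ω); have := abs_nonneg (g ω); linarith
        have hg0 : |g ω| = 0 := by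
          have := abs_nonneg (f ω); have := abs_nonneg (g ω); linarith
        have hfg0 : |f ω + g ω| = 0 := by
          have := abs_add_le (f ω) (g ω); have := abs_nonneg (f ω + g ω); linarith
        have hs : 0 ≤ ∑ i, |H i ω| ^ q := sum_abs_rpow_nonneg H ω
        have hsum0 : (∑ i, |H i ω| ^ q) = 0 := by
          have h4 := congrArg (fun x : ℝ => x ^ q) (h1.symm)
          rwa [riq hq hs, hfg0, Real.zero_rpow hq.ne'] at h4
        have hterm : |H j ω| ^ q = 0 :=
          (Finset.sum_eq_zero_iff_of_nonneg
            (fun i _ => Real.rpow_nonneg (abs_nonneg (H i ω)) q)).1 hsum0 j (Finset.mem_univ j)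
        have hH0 : |H j ω| = 0 := by
          by_contra hcon
          have hpos : 0 < |H j ω| := lt_of_le_of_ne (abs_nonneg _) (Ne.symm hcon)
          have := Real.rpow_pos_of_pos hpos q
          linarith
        rw [hH0]
        positivity
      · have : |H j ω| * |f ω| / (|f ω| + |g ω|) + |H j ω| * |g ω| / (|f ω| + |g ω|)
            = |H j ω| := by field_simp
        rw [this, abs_abs]
    have hmemsum : X.Mem (Ff j + Gg j) := X.add_mem (hFfmem j) (hGgmem j)
    calc X.nrm (H j) ≤ X.nrm (Ff j + Gg j) := X.ideal_nrm hmemsum (hH j) hle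
    _ ≤ X.K * (X.nrm (Ff j) + X.nrm (Gg j)) := X.nrm_add_le (hFfmem j) (hGgmem j)
  -- numeric chain
  have hKnn : (0:ℝ) ≤ X.K := le_trans zero_le_one X.one_le_K
  have step1 : (∑ j, X.nrm (H j) ^ q) ^ (1/q) ≤
      (∑ j, (X.K * (X.nrm (Ff j) + X.nrm (Gg j))) ^ q) ^ (1/q) := by
    apply Real.rpow_le_rpow (Finset.sum_nonneg fun j _ => Real.rpow_nonneg (X.nrm_nonneg _) _)
      ?_ (by positivity)
    apply Finset.sum_le_sum
    intro j _
    exact Real.rpow_le_rpow (X.nrm_nonneg _) (hnrmH j) hq.le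
  have step2 : (∑ j, (X.K * (X.nrm (Ff j) + X.nrm (Gg j))) ^ q) ^ (1/q) =
      X.K * (∑ j, (X.nrm (Ff j) + X.nrm (Gg j)) ^ q) ^ (1/q) :=
    smul_sum_rpow hq hKnn _ (fun j => add_nonneg (X.nrm_nonneg _) (X.nrm_nonneg _))
  have step3 : (∑ j, (X.nrm (Ff j) + X.nrm (Gg j)) ^ q) ^ (1/q) ≤
      2 ^ (1 + |1 - 1/q|) * ((∑ j, X.nrm (Ff j) ^ q) ^ (1/q) + (∑ j, X.nrm (Gg j) ^ q) ^ (1/q)) :=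
    L0 hq _ _ (fun j => X.nrm_nonneg _) (fun j => X.nrm_nonneg _)
  have h2e : (0:ℝ) ≤ 2 ^ (1 + |1 - 1/q|) := by positivity
  calc (∑ j, X.nrm (H j) ^ q) ^ (1/q)
      ≤ X.K * (∑ j, (X.nrm (Ff j) + X.nrm (Gg j)) ^ q) ^ (1/q) := by rw [← step2]; exact step1
  _ ≤ X.K * (2 ^ (1 + |1 - 1/q|) *
        ((∑ j, X.nrm (Ff j) ^ q) ^ (1/q) + (∑ j, X.nrm (Gg j) ^ q) ^ (1/q))) :=
      mul_le_mul_of_nonneg_left step3 hKnn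
  _ ≤ X.K * (2 ^ (1 + |1 - 1/q|) *
        (coreNrm μ X.Mem X.nrm q f + coreNrm μ X.Mem X.nrm q g)) := by
      apply mul_le_mul_of_nonneg_left _ hKnn
      exact mul_le_mul_of_nonneg_left (add_le_add hAf hAg) h2e
  _ = 2 ^ (1 + |1 - 1/q|) * X.K *
        (coreNrm μ X.Mem X.nrm q f + coreNrm μ X.Mem X.nrm q g) := by ring

private lemma one_le_Cq (X : QBFS μ) : (1:ℝ) ≤ 2 ^ (1 + |1 - 1/q|) * X.K := by
  have h1 : (1:ℝ) ≤ 2 ^ (1 + |1 - 1/q|) := two_rpow_ge_one (by positivity)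
  nlinarith [X.one_le_K]

private lemma coreMem_add (X : QBFS μ) (hq : 0 < q) {f g : Ω → ℝ}
    (hf : coreMem μ X.Mem X.nrm q f) (hg : coreMem μ X.Mem X.nrm q g) :
    coreMem μ X.Mem X.nrm q (f + g) :=
  ⟨X.add_mem hf.1 hg.1, ⟨_, fun a ha => add_bound X hq hf hg a ha⟩⟩

private lemma coreNrm_add_le (X : QBFS μ) (hq : 0 < q) {f g : Ω → ℝ}
    (hf : coreMem μ X.Mem X.nrm q f) (hg : coreMem μ X.Mem X.nrm q g) :
    coreNrm μ X.Mem X.nrm q (f + g) ≤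
      2 ^ (1 + |1 - 1/q|) * X.K * (coreNrm μ X.Mem X.nrm q f + coreNrm μ X.Mem X.nrm q g) := by
  apply Real.sSup_le (add_bound X hq hf hg)
  have h1 : (0:ℝ) ≤ 2 ^ (1 + |1 - 1/q|) * X.K := le_trans zero_le_one (one_le_Cq X)
  have h2 := coreNrm_nonneg (q := q) X f
  have h3 := coreNrm_nonneg (q := q) X g
  positivity

private lemma coreMem_smul (X : QBFS μ) (hq : 0 < q) (c : ℝ) {f : Ω → ℝ}
    (hf : coreMem μ X.Mem X.nrm q f) : coreMem μ X.Mem X.nrm q (c • f) :=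
  ⟨X.smul_mem c hf.1, ⟨_, fun a ha => smul_bound X hq hf c a ha⟩⟩

private lemma coreNrm_smul (X : QBFS μ) (hq : 0 < q) (c : ℝ) {f : Ω → ℝ}
    (hf : coreMem μ X.Mem X.nrm q f) :
    coreNrm μ X.Mem X.nrm q (c • f) = |c| * coreNrm μ X.Mem X.nrm q f := by
  rcases eq_or_ne c 0 with rfl | hc
  · rw [coreNrm_zero_of_ae X hq (f := (0:ℝ) • f) (by filter_upwards with ω; simp)]
    simp
  · apply le_antisymm
    · exact Real.sSup_le (smul_bound X hq hf c)
        (mul_nonneg (abs_nonneg c) (coreNrm_nonneg X f))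
    · have hinv : coreNrm μ X.Mem X.nrm q (c⁻¹ • (c • f)) ≤
          |c⁻¹| * coreNrm μ X.Mem X.nrm q (c • f) :=
        Real.sSup_le (smul_bound X hq (coreMem_smul X hq c hf) c⁻¹)
          (mul_nonneg (abs_nonneg _) (coreNrm_nonneg X _))
      rw [inv_smul_smul₀ hc] at hinv
      have hcpos : 0 < |c| := abs_pos.2 hc
      rw [abs_inv] at hinv
      calc |c| * coreNrm μ X.Mem X.nrm q f
          ≤ |c| * (|c|⁻¹ * coreNrm μ X.Mem X.nrm q (c • f)) :=
            mul_le_mul_of_nonneg_left hinv hcpos.le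
      _ = coreNrm μ X.Mem X.nrm q (c • f) := by field_simp

private lemma coreMem_sub (X : QBFS μ) (hq : 0 < q) {f g : Ω → ℝ}
    (hf : coreMem μ X.Mem X.nrm q f) (hg : coreMem μ X.Mem X.nrm q g) :
    coreMem μ X.Mem X.nrm q (f - g) := by
  have : f - g = f + (-1 : ℝ) • g := by ext ω; simp; ring
  rw [this]
  exact coreMem_add X hq hf (coreMem_smul X hq (-1) hg)

private lemma nrm_le_coreNrm (X : QBFS μ) (hq : 0 < q) {f : Ω → ℝ}
    (hf : coreMem μ X.Mem X.nrm q f) : X.nrm f ≤ coreNrm μ X.Mem X.nrm q f :=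
  le_csSup hf.2 (nrm_mem_coreSet X hq hf.1)

private lemma X_sub_mem (X : QBFS μ) {f g : Ω → ℝ} (hf : X.Mem f) (hg : X.Mem g) :
    X.Mem (f - g) := by
  have e : f - g = f + (-1 : ℝ) • g := by ext ω; simp; ring
  rw [e]
  exact X.add_mem hf (X.smul_mem _ hg)

private lemma core_complete (X : QBFS μ) (hq : 0 < q) (F : ℕ → Ω → ℝ)
    (hF : ∀ n, coreMem μ X.Mem X.nrm q (F n))
    (hC : ∀ ε : ℝ, 0 < ε → ∃ N, ∀ m ≥ N, ∀ n ≥ N, coreNrm μ X.Mem X.nrm q (F m - F n) < ε) :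
    ∃ f, coreMem μ X.Mem X.nrm q f ∧
      Tendsto (fun n => coreNrm μ X.Mem X.nrm q (f - F n)) atTop (𝓝 0) := by
  set C : ℝ := 2 ^ (1 + |1 - 1/q|) * X.K with hCdef
  have hC1 : (1:ℝ) ≤ C := one_le_Cq X
  have hC0 : (0:ℝ) < C := lt_of_lt_of_le zero_lt_one hC1
  have hKnn : (0:ℝ) ≤ X.K := le_trans zero_le_one X.one_le_K
  have hFsub : ∀ m n, coreMem μ X.Mem X.nrm q (F m - F n) :=
    fun m n => coreMem_sub X hq (hF m) (hF n)
  have hXC : ∀ ε : ℝ, 0 < ε → ∃ N, ∀ m ≥ N, ∀ n ≥ N, X.nrm (F m - F n) < ε := by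
    intro ε hε
    obtain ⟨N, hN⟩ := hC ε hε
    exact ⟨N, fun m hm n hn => lt_of_le_of_lt (nrm_le_coreNrm X hq (hFsub m n)) (hN m hm n hn)⟩
  obtain ⟨f, hfmem, hftend⟩ := X.complete F (fun n => (hF n).1) hXC
  have hfm : AEMeasurable f μ := X_aemeas X hfmem
  have hFm : ∀ n, AEMeasurable (F n) μ := fun n => X_aemeas X (hF n).1
  have hfFn : ∀ n, X.Mem (f - F n) := fun n => X_sub_mem X hfmem (hF n).1
  -- key estimate
  have key : ∀ ε : ℝ, 0 < ε → ∃ N, ∀ m ≥ N,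
      ∀ a ∈ coreSet μ X.Mem X.nrm q (f - F m), a ≤ C * ε := by
    intro ε hε
    obtain ⟨N, hN⟩ := hC ε hε
    refine ⟨N, fun m hm => ?_⟩
    rintro a ⟨k, G, hG, hae, rfl⟩
    have hGm : ∀ j, AEMeasurable (G j) μ := fun j => X_aemeas X (hG j)
    have hGle : ∀ᵐ ω ∂μ, ∀ j : Fin k, |G j ω| ≤ |f ω - F m ω| := by
      filter_upwards [hae] with ω h1
      simp only [Pi.sub_apply] at h1
      intro j
      have h2 : |G j ω| ^ q ≤ ∑ i, |G i ω| ^ q :=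
        Finset.single_le_sum (f := fun i => |G i ω| ^ q)
          (fun i _ => Real.rpow_nonneg (abs_nonneg _) _) (Finset.mem_univ j)
      have h3 : (|G j ω| ^ q) ^ (1/q) ≤ (∑ i, |G i ω| ^ q) ^ (1/q) :=
        Real.rpow_le_rpow (Real.rpow_nonneg (abs_nonneg _) _) h2 (by positivity)
      rwa [rqi hq (abs_nonneg _), ← h1] at h3
    set Gn : ℕ → Fin k → Ω → ℝ :=
      fun n j ω => G j ω * min (|F n ω - F m ω|) (|f ω - F m ω|) / |f ω - F m ω| with hGndef
    have hGnle : ∀ n j ω, |Gn n j ω| ≤ |G j ω| := fun n j ω =>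
      frac_le3 (le_min (abs_nonneg _) (abs_nonneg _)) (min_le_right _ _)
    have hGnmem : ∀ n j, X.Mem (Gn n j) := by
      intro n j
      apply X.ideal_mem (hG j) _ (ae_of_all μ fun ω => hGnle n j ω)
      apply aestronglyMeasurable_iff_aemeasurable.2
      exact ((hGm j).mul (((hFm n).sub (hFm m)).norm.min (hfm.sub (hFm m)).norm)).div
        (hfm.sub (hFm m)).norm
    -- Gn n decomposes the min function, dominated by F n - F m
    have hφdec : ∀ n : ℕ, ∀ᵐ ω ∂μ,
        |min (|F n ω - F m ω|) (|f ω - F m ω|)| = (∑ j, |Gn n j ω| ^ q) ^ (1/q) := by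
      intro n
      filter_upwards [hae] with ω h1
      simp only [Pi.sub_apply] at h1
      have htnn : 0 ≤ min (|F n ω - F m ω|) (|f ω - F m ω|) := le_min (abs_nonneg _) (abs_nonneg _)
      have htd : min (|F n ω - F m ω|) (|f ω - F m ω|) ≤ |f ω - F m ω| := min_le_right _ _
      have e1 : ∀ j : Fin k, |Gn n j ω| =
          (min (|F n ω - F m ω|) (|f ω - F m ω|) / |f ω - F m ω|) * |G j ω| := by
        intro j
        rw [hGndef]
        simp only
        rw [abs_div, abs_mul, abs_of_nonneg htnn, abs_abs]
        ring
      simp_rw [e1]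
      rw [smul_sum_rpow hq (div_nonneg htnn (abs_nonneg _)) _ (fun j => abs_nonneg _), ← h1]
      rw [abs_of_nonneg htnn]
      rcases eq_or_lt_of_le (abs_nonneg (f ω - F m ω)) with hd0 | hd0
      · have ht0 : min (|F n ω - F m ω|) (|f ω - F m ω|) = 0 :=
          le_antisymm (hd0 ▸ htd) htnn
        rw [ht0, ← hd0]
        simp
      · field_simp
    have hφle : ∀ n : ℕ, ∀ᵐ ω ∂μ,
        |min (|F n ω - F m ω|) (|f ω - F m ω|)| ≤ |(F n - F m) ω| := by
      intro n
      filter_upwards with ω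
      rw [abs_of_nonneg (le_min (abs_nonneg _) (abs_nonneg _)), Pi.sub_apply]
      exact min_le_left _ _
    have hφmeas : ∀ n : ℕ, AEMeasurable
        (fun ω => min (|F n ω - F m ω|) (|f ω - F m ω|)) μ := fun n =>
      ((hFm n).sub (hFm m)).norm.min (hfm.sub (hFm m)).norm
    have hvn : ∀ n, n ≥ N → (∑ j, X.nrm (Gn n j) ^ q) ^ (1/q) ≤ ε := by
      intro n hn
      have h := dom_le X hq (hFsub n m) (hφmeas n) (hφle n) _ ⟨k, Gn n, hGnmem n, hφdec n, rfl⟩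
      exact le_trans h (le_of_lt (hN n hn m hm))
    -- difference bound
    have hdiff : ∀ n : ℕ, ∀ j : Fin k, ∀ᵐ ω ∂μ, |G j ω - Gn n j ω| ≤ |(f - F n) ω| := by
      intro n j
      filter_upwards [hGle] with ω h1
      have hGj := h1 j
      rw [hGndef]
      simp only [Pi.sub_apply]
      set x : ℝ := |F n ω - F m ω| with hx
      set d : ℝ := |f ω - F m ω| with hd
      set t : ℝ := min x d with ht
      have htnn : 0 ≤ t := le_min (abs_nonneg _) (abs_nonneg _)
      have htd : t ≤ d := min_le_right _ _
      rcases eq_or_lt_of_le (abs_nonneg (f ω - F m ω)) with hd0 | hd0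
      · have hG0 : G j ω = 0 := by
          have h2 : |G j ω| ≤ 0 := by rw [hd] at hGj; rw [← hd0] at hGj; exact hGj
          exact abs_eq_zero.1 (le_antisymm h2 (abs_nonneg _))
        rw [hG0]
        simp
      · have hdpos : 0 < d := by rw [hd]; exact hd0
        have e2 : G j ω - G j ω * t / d = G j ω * ((d - t)/d) := by field_simp
        rw [e2, abs_mul, abs_of_nonneg (div_nonneg (by linarith) hdpos.le)]
        have h3 : |G j ω| * ((d - t)/d) ≤ d * ((d - t)/d) :=
          mul_le_mul_of_nonneg_right hGj (div_nonneg (by linarith) hdpos.le)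
        have h4 : d * ((d - t)/d) = d - t := by field_simp
        have h5 : d - t ≤ |f ω - F n ω| := by
          rcases min_cases x d with ⟨hmin, -⟩ | ⟨hmin, -⟩
          · rw [ht, hmin, hd, hx]
            have h6 := abs_sub_abs_le_abs_sub (f ω - F m ω) (F n ω - F m ω)
            have h7 : (f ω - F m ω) - (F n ω - F m ω) = f ω - F n ω := by ring
            rw [h7] at h6
            exact h6
          · rw [ht, hmin]
            have := abs_nonneg (f ω - F n ω)
            linarith
        linarith
    set δ : ℕ → ℝ := fun n => X.nrm (f - F n) with hδdef
    have hδnn : ∀ n, 0 ≤ δ n := fun n => X.nrm_nonneg _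
    have hnrmdiff : ∀ n j, X.nrm (G j - Gn n j) ≤ δ n := fun n j =>
      X.ideal_nrm (hfFn n) (X_sub_mem X (hG j) (hGnmem n j)) (hdiff n j)
    have hnrmG : ∀ n j, X.nrm (G j) ≤ X.K * (X.nrm (Gn n j) + δ n) := by
      intro n j
      have e : G j = Gn n j + (G j - Gn n j) := by ext ω; simp
      calc X.nrm (G j) = X.nrm (Gn n j + (G j - Gn n j)) := by rw [← e]
      _ ≤ X.K * (X.nrm (Gn n j) + X.nrm (G j - Gn n j)) :=
          X.nrm_add_le (hGnmem n j) (X_sub_mem X (hG j) (hGnmem n j))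
      _ ≤ X.K * (X.nrm (Gn n j) + δ n) :=
          mul_le_mul_of_nonneg_left (add_le_add_right (hnrmdiff n j) _) hKnn
    have hchain : ∀ n, n ≥ N →
        (∑ j, X.nrm (G j) ^ q) ^ (1/q) ≤ C * (ε + (k:ℝ) ^ (1/q) * δ n) := by
      intro n hn
      have s1 : (∑ j, X.nrm (G j) ^ q) ^ (1/q) ≤
          (∑ j, (X.K * (X.nrm (Gn n j) + δ n)) ^ q) ^ (1/q) := by
        apply Real.rpow_le_rpow (Finset.sum_nonneg fun j _ =>
          Real.rpow_nonneg (X.nrm_nonneg _) _) ?_ (by positivity)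
        exact Finset.sum_le_sum fun j _ =>
          Real.rpow_le_rpow (X.nrm_nonneg _) (hnrmG n j) hq.le
      have s2 : (∑ j, (X.K * (X.nrm (Gn n j) + δ n)) ^ q) ^ (1/q) =
          X.K * (∑ j, (X.nrm (Gn n j) + δ n) ^ q) ^ (1/q) :=
        smul_sum_rpow hq hKnn _ (fun j => add_nonneg (X.nrm_nonneg _) (hδnn n))
      have s3 : (∑ j, (X.nrm (Gn n j) + δ n) ^ q) ^ (1/q) ≤
          2 ^ (1 + |1 - 1/q|) *
            ((∑ j, X.nrm (Gn n j) ^ q) ^ (1/q) + (∑ _j : Fin k, δ n ^ q) ^ (1/q)) :=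
        L0 hq _ (fun _ => δ n) (fun j => X.nrm_nonneg _) (fun _ => hδnn n)
      have s4 : (∑ _j : Fin k, δ n ^ q) ^ (1/q) = (k:ℝ) ^ (1/q) * δ n := by
        rw [Finset.sum_const, Finset.card_univ, Fintype.card_fin, nsmul_eq_mul,
          Real.mul_rpow (Nat.cast_nonneg k) (Real.rpow_nonneg (hδnn n) _), rqi hq (hδnn n)]
      have h2e : (0:ℝ) ≤ 2 ^ (1 + |1 - 1/q|) := by positivity
      have s5 : (∑ j, X.nrm (Gn n j) ^ q) ^ (1/q) + (∑ _j : Fin k, δ n ^ q) ^ (1/q) ≤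
          ε + (k:ℝ) ^ (1/q) * δ n := by
        rw [s4]
        exact add_le_add_left (hvn n hn) _
      calc (∑ j, X.nrm (G j) ^ q) ^ (1/q)
          ≤ X.K * (∑ j, (X.nrm (Gn n j) + δ n) ^ q) ^ (1/q) := by rw [← s2]; exact s1
      _ ≤ X.K * (2 ^ (1 + |1 - 1/q|) *
            ((∑ j, X.nrm (Gn n j) ^ q) ^ (1/q) + (∑ _j : Fin k, δ n ^ q) ^ (1/q))) :=
          mul_le_mul_of_nonneg_left s3 hKnn
      _ ≤ X.K * (2 ^ (1 + |1 - 1/q|) * (ε + (k:ℝ) ^ (1/q) * δ n)) :=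
          mul_le_mul_of_nonneg_left (mul_le_mul_of_nonneg_left s5 h2e) hKnn
      _ = C * (ε + (k:ℝ) ^ (1/q) * δ n) := by rw [hCdef]; ring
    have hlim : Tendsto (fun n => C * (ε + (k:ℝ) ^ (1/q) * δ n)) atTop
        (𝓝 (C * (ε + (k:ℝ) ^ (1/q) * 0))) :=
      ((hftend.const_mul ((k:ℝ) ^ (1/q))).const_add ε).const_mul C
    have hfin : (∑ j, X.nrm (G j) ^ q) ^ (1/q) ≤ C * (ε + (k:ℝ) ^ (1/q) * 0) :=
      ge_of_tendsto hlim (eventually_atTop.2 ⟨N, fun n hn => hchain n hn⟩)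
    simpa using hfin
  -- conclude
  obtain ⟨N1, hN1⟩ := key 1 one_pos
  have hfFmem : coreMem μ X.Mem X.nrm q (f - F N1) :=
    ⟨hfFn N1, ⟨C * 1, fun a ha => hN1 N1 le_rfl a ha⟩⟩
  have hfcore : coreMem μ X.Mem X.nrm q f := by
    have e : f = (f - F N1) + F N1 := by ext ω; simp
    rw [e]
    exact coreMem_add X hq hfFmem (hF N1)
  refine ⟨f, hfcore, ?_⟩
  rw [Metric.tendsto_atTop]
  intro ε hε
  have hε2 : 0 < ε / (2 * C) := by positivity
  obtain ⟨N, hN⟩ := key (ε / (2 * C)) hε2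
  refine ⟨N, fun n hn => ?_⟩
  have hb : coreNrm μ X.Mem X.nrm q (f - F n) ≤ C * (ε / (2 * C)) :=
    Real.sSup_le (hN n hn) (by positivity)
  have hnn : 0 ≤ coreNrm μ X.Mem X.nrm q (f - F n) := coreNrm_nonneg X _
  have he : C * (ε / (2 * C)) = ε / 2 := by field_simp
  rw [he] at hb
  rw [Real.dist_eq, sub_zero, abs_of_nonneg hnn]
  linarith

private lemma coreNrm_eq_zero_iff (X : QBFS μ) (hq : 0 < q) {f : Ω → ℝ}
    (hf : coreMem μ X.Mem X.nrm q f) :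
    coreNrm μ X.Mem X.nrm q f = 0 ↔ f =ᵐ[μ] 0 := by
  constructor
  · intro h0
    have h1 : X.nrm f ≤ 0 := h0 ▸ nrm_le_coreNrm X hq hf
    exact (X.nrm_eq_zero_iff hf.1).1 (le_antisymm h1 (X.nrm_nonneg f))
  · exact coreNrm_zero_of_ae X hq

private lemma core_ideal_nrm (X : QBFS μ) (hq : 0 < q) {f g : Ω → ℝ}
    (hf : coreMem μ X.Mem X.nrm q f) (hg : coreMem μ X.Mem X.nrm q g)
    (hle : ∀ᵐ ω ∂μ, |g ω| ≤ |f ω|) :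
    coreNrm μ X.Mem X.nrm q g ≤ coreNrm μ X.Mem X.nrm q f :=
  Real.sSup_le (dom_le X hq hf (X_aemeas X hg.1) hle) (coreNrm_nonneg X f)

end Core

/-- `qX(μ)` with `‖·‖_{qX(μ)}` is a quasi-Banach function space: it has the ideal property,
the quasi-norm has triangle constant `2^(1+|1-1/q|) K`, it is complete, and its quasi-norm
dominates that of `X(μ)`. -/
theorem core_is_qBFS (μ : Measure Ω) (X : QBFS μ) (hoc : SigmaOC μ X.Mem X.nrm)
    (q : ℝ) (hq : 0 < q) :
    (∀ f g : Ω → ℝ, coreMem μ X.Mem X.nrm q f → AEStronglyMeasurable g μ →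
      (∀ᵐ ω ∂μ, |g ω| ≤ |f ω|) →
      coreMem μ X.Mem X.nrm q g ∧ coreNrm μ X.Mem X.nrm q g ≤ coreNrm μ X.Mem X.nrm q f) ∧
    (∀ f g : Ω → ℝ, coreMem μ X.Mem X.nrm q f → coreMem μ X.Mem X.nrm q g →
      coreNrm μ X.Mem X.nrm q (f + g) ≤
        2 ^ (1 + |1 - 1 / q|) * X.K *
          (coreNrm μ X.Mem X.nrm q f + coreNrm μ X.Mem X.nrm q g)) ∧
    (∀ F : ℕ → Ω → ℝ, (∀ n, coreMem μ X.Mem X.nrm q (F n)) →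
      (∀ ε : ℝ, 0 < ε → ∃ N : ℕ, ∀ m ≥ N, ∀ n ≥ N, coreNrm μ X.Mem X.nrm q (F m - F n) < ε) →
      ∃ f : Ω → ℝ, coreMem μ X.Mem X.nrm q f ∧
        Tendsto (fun n => coreNrm μ X.Mem X.nrm q (f - F n)) atTop (𝓝 0)) ∧
    (∀ f : Ω → ℝ, coreMem μ X.Mem X.nrm q f → X.nrm f ≤ coreNrm μ X.Mem X.nrm q f) ∧
    (∃ Z : QBFS μ, (∀ f : Ω → ℝ, Z.Mem f ↔ coreMem μ X.Mem X.nrm q f) ∧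
      (∀ f : Ω → ℝ, Z.Mem f → Z.nrm f = coreNrm μ X.Mem X.nrm q f)) := by
  refine ⟨fun f g hf hgm hle => dom_coreMem X hq hf hgm hle,
    fun f g hf hg => coreNrm_add_le X hq hf hg,
    fun F hF hC => core_complete X hq F hF hC,
    fun f hf => nrm_le_coreNrm X hq hf, ?_⟩
  refine ⟨{
    Mem := coreMem μ X.Mem X.nrm q
    nrm := coreNrm μ X.Mem X.nrm q
    mem_congr := fun {f g} hf hfg =>
      ⟨X.mem_congr hf.1 hfg, by rw [← coreSet_congr hfg]; exact hf.2⟩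
    nrm_congr := fun {f g} hfg => by unfold coreNrm; rw [coreSet_congr hfg]
    mem_meas := fun {f} hf => X.mem_meas hf.1
    zero_mem := coreMem_zero X hq
    add_mem := fun {f g} hf hg => coreMem_add X hq hf hg
    smul_mem := fun c {f} hf => coreMem_smul X hq c hf
    nrm_nonneg := fun f => coreNrm_nonneg X f
    nrm_eq_zero_iff := fun {f} hf => coreNrm_eq_zero_iff X hq hf
    nrm_smul := fun c {f} hf => coreNrm_smul X hq c hf
    K := 2 ^ (1 + |1 - 1 / q|) * X.K
    one_le_K := one_le_Cq X
    nrm_add_le := fun {f g} hf hg => coreNrm_add_le X hq hf hg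
    ideal_mem := fun {f g} hf hgm hle => (dom_coreMem X hq hf hgm hle).1
    ideal_nrm := fun {f g} hf hg hle => core_ideal_nrm X hq hf hg hle
    complete := fun F hF hC => core_complete X hq F hF hC
  }, fun f => Iff.rfl, fun f _ => rfl⟩
end

section
/- Let X(μ) be a σ-order continuous quasi-Banach function space and q ∈ (0,∞). Then the space qX(μ) is q-concave (indeed, Σ_{j=1}^n ‖f_j‖_{qX(μ)}^q ≤ ‖(Σ_{j=1}^n |f_j|^q)^{1/q}‖_{qX(μ)}^q for every finite family in qX(μ)); in consequence, qX(μ) is σ-order continuous. -/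
open MeasureTheory Filter Topology

variable {Ω : Type*} [MeasurableSpace Ω]

namespace QCoreAux

lemma continuous_rpow_const {c : ℝ} (hc : 0 ≤ c) : Continuous fun x : ℝ => x ^ c :=
  continuous_iff_continuousAt.mpr fun x => Real.continuousAt_rpow_const x c (Or.inr hc)

lemma aemeas_rpow {Ω : Type*} [MeasurableSpace Ω] {μ : MeasureTheory.Measure Ω}
    {f : Ω → ℝ} (hf : AEMeasurable f μ) {c : ℝ} (hc : 0 ≤ c) :
    AEMeasurable (fun ω => f ω ^ c) μ :=
  (continuous_rpow_const hc).measurable.comp_aemeasurable hf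

lemma rpow_rinv {q a : ℝ} (hq : 0 < q) (ha : 0 ≤ a) : (a ^ q) ^ (1/q) = a := by
  rw [← Real.rpow_mul ha, mul_one_div_cancel hq.ne', Real.rpow_one]

lemma rinv_rpow {q a : ℝ} (hq : 0 < q) (ha : 0 ≤ a) : (a ^ (1/q)) ^ q = a := by
  rw [← Real.rpow_mul ha, one_div_mul_cancel hq.ne', Real.rpow_one]

lemma rpow_sum_le {n : ℕ} {q : ℝ} (hq : 0 < q) (a : Fin n → ℝ) (ha : ∀ j, 0 ≤ a j) :
    (∑ j, a j ^ q) ^ (1/q) ≤ (n:ℝ) ^ (1/q) * ∑ j, a j := by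
  have hS : 0 ≤ ∑ j, a j := Finset.sum_nonneg fun j _ => ha j
  have h1 : ∑ j, a j ^ q ≤ (n:ℝ) * (∑ j, a j) ^ q := by
    calc ∑ j, a j ^ q ≤ ∑ _j : Fin n, (∑ j, a j) ^ q := by
          refine Finset.sum_le_sum fun j _ => ?_
          exact Real.rpow_le_rpow (ha j) (Finset.single_le_sum (fun i _ => ha i) (Finset.mem_univ j)) hq.le
      _ = (n:ℝ) * (∑ j, a j) ^ q := by simp [mul_comm]
  calc (∑ j, a j ^ q) ^ (1/q) ≤ ((n:ℝ) * (∑ j, a j) ^ q) ^ (1/q) := by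
        refine Real.rpow_le_rpow (Finset.sum_nonneg fun j _ => Real.rpow_nonneg (ha j) q) h1 (by positivity)
    _ = (n:ℝ) ^ (1/q) * ∑ j, a j := by
        rw [Real.mul_rpow (by positivity) (Real.rpow_nonneg hS q), rpow_rinv hq hS]

lemma sum_rpow_le {n : ℕ} {q : ℝ} (hq : 0 < q) (a : Fin n → ℝ) (ha : ∀ j, 0 ≤ a j) :
    (∑ j, a j) ^ q ≤ (n:ℝ) ^ q * ∑ j, a j ^ q := by
  have hT : 0 ≤ (∑ j, a j ^ q) := Finset.sum_nonneg fun j _ => Real.rpow_nonneg (ha j) q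
  have h1 : ∑ j, a j ≤ (n:ℝ) * (∑ j, a j ^ q) ^ (1/q) := by
    calc ∑ j, a j ≤ ∑ _j : Fin n, (∑ j, a j ^ q) ^ (1/q) := by
          refine Finset.sum_le_sum fun j _ => ?_
          calc a j = (a j ^ q) ^ (1/q) := (rpow_rinv hq (ha j)).symm
            _ ≤ (∑ j, a j ^ q) ^ (1/q) := Real.rpow_le_rpow (Real.rpow_nonneg (ha j) q)
                (Finset.single_le_sum (fun i _ => Real.rpow_nonneg (ha i) q) (Finset.mem_univ j)) (by positivity)
      _ = (n:ℝ) * (∑ j, a j ^ q) ^ (1/q) := by simp [mul_comm]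
  calc (∑ j, a j) ^ q ≤ ((n:ℝ) * (∑ j, a j ^ q) ^ (1/q)) ^ q :=
        Real.rpow_le_rpow (Finset.sum_nonneg fun j _ => ha j) h1 hq.le
    _ = (n:ℝ) ^ q * ∑ j, a j ^ q := by
        rw [Real.mul_rpow (by positivity) (Real.rpow_nonneg hT _), rinv_rpow hq hT]

lemma csSup_rpow {q : ℝ} (hq : 0 < q) (s : Set ℝ) (hne : s.Nonempty) (hbdd : BddAbove s)
    (hpos : ∀ a ∈ s, 0 ≤ a) : sSup ((fun a => a ^ q) '' s) = sSup s ^ q := by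
  have h0 : 0 ≤ sSup s := Real.sSup_nonneg hpos
  have h1 : 0 ≤ sSup ((fun a => a ^ q) '' s) :=
    Real.sSup_nonneg (by rintro b ⟨a, ha, rfl⟩; exact Real.rpow_nonneg (hpos a ha) q)
  have hibdd : BddAbove ((fun a => a ^ q) '' s) := by
    refine ⟨sSup s ^ q, ?_⟩
    rintro b ⟨a, ha, rfl⟩
    exact Real.rpow_le_rpow (hpos a ha) (le_csSup hbdd ha) hq.le
  refine le_antisymm (csSup_le (hne.image _) ?_) ?_
  · rintro b ⟨a, ha, rfl⟩
    exact Real.rpow_le_rpow (hpos a ha) (le_csSup hbdd ha) hq.le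
  · have h2 : sSup s ≤ sSup ((fun a => a ^ q) '' s) ^ (1/q) := by
      refine csSup_le hne fun a ha => ?_
      calc a = (a ^ q) ^ (1/q) := (rpow_rinv hq (hpos a ha)).symm
        _ ≤ _ := Real.rpow_le_rpow (Real.rpow_nonneg (hpos a ha) q)
            (le_csSup hibdd ⟨a, ha, rfl⟩) (by positivity)
    calc sSup s ^ q ≤ (sSup ((fun a => a ^ q) '' s) ^ (1/q)) ^ q :=
          Real.rpow_le_rpow h0 h2 hq.le
      _ = _ := rinv_rpow hq h1

lemma sum_csSup_le {n : ℕ} (T : Fin n → Set ℝ) (hne : ∀ j, (T j).Nonempty)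
    (hbdd : ∀ j, BddAbove (T j)) (M : ℝ)
    (h : ∀ b : Fin n → ℝ, (∀ j, b j ∈ T j) → ∑ j, b j ≤ M) :
    ∑ j, sSup (T j) ≤ M := by
  refine le_of_forall_pos_le_add fun ε hε => ?_
  have hch : ∀ j, ∃ x ∈ T j, sSup (T j) - ε / (n+1) < x := by
    intro j
    refine exists_lt_of_lt_csSup (hne j) ?_
    have : 0 < ε / ((n:ℝ)+1) := by positivity
    linarith
  choose b hb hlt using hch
  have h1 : ∑ j, sSup (T j) ≤ ∑ j, (b j + ε / (n+1)) :=
    Finset.sum_le_sum fun j _ => by have := hlt j; linarith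
  have h2 : ∑ j, (b j + ε / (n+1)) = ∑ j, b j + (n:ℝ) * (ε / (n+1)) := by
    rw [Finset.sum_add_distrib]; simp [mul_comm]
  have h3 : (n:ℝ) * (ε / (n+1)) ≤ ε := by
    rw [mul_div_assoc']
    rw [div_le_iff₀ (by positivity)]
    nlinarith [Nat.cast_nonneg (α := ℝ) n]
  have := h b hb
  linarith

end QCoreAux
section XLemmas
variable {Ω : Type*} [MeasurableSpace Ω] {μ : MeasureTheory.Measure Ω} (X : QBFS μ) {q : ℝ}

namespace QCoreAux

lemma mem_abs {f : Ω → ℝ} (hf : X.Mem f) : X.Mem (fun ω => |f ω|) := by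
  refine X.ideal_mem hf ?_ (Filter.Eventually.of_forall fun ω => by simp)
  simpa [Real.norm_eq_abs] using (X.mem_meas hf).norm

lemma nrm_abs {f : Ω → ℝ} (hf : X.Mem f) : X.nrm (fun ω => |f ω|) = X.nrm f := by
  refine le_antisymm (X.ideal_nrm hf (mem_abs X hf) ?_) (X.ideal_nrm (mem_abs X hf) hf ?_) <;>
    exact Filter.Eventually.of_forall fun ω => by simp

lemma nrm_zero' : X.nrm 0 = 0 :=
  (X.nrm_eq_zero_iff X.zero_mem).mpr Filter.EventuallyEq.rfl

lemma mem_sum {n : ℕ} (g : Fin n → Ω → ℝ) (hg : ∀ j, X.Mem (g j)) :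
    X.Mem (fun ω => ∑ j, g j ω) := by
  induction n with
  | zero =>
    refine X.mem_congr X.zero_mem (Filter.Eventually.of_forall fun ω => ?_)
    simp
  | succ n ih =>
    have h1 : X.Mem (fun ω => g 0 ω + ∑ j : Fin n, g j.succ ω) :=
      X.add_mem (hg 0) (ih _ fun j => hg j.succ)
    refine X.mem_congr h1 (Filter.Eventually.of_forall fun ω => ?_)
    simp [Fin.sum_univ_succ]

lemma nrm_sum_le {n : ℕ} (g : Fin n → Ω → ℝ) (hg : ∀ j, X.Mem (g j)) :
    X.nrm (fun ω => ∑ j, g j ω) ≤ X.K ^ n * ∑ j, X.nrm (g j) := by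
  have hK0 : (0:ℝ) < X.K := lt_of_lt_of_le one_pos X.one_le_K
  induction n with
  | zero =>
    have : X.nrm (fun ω => ∑ j : Fin 0, g j ω) = 0 := by
      rw [X.nrm_congr (g := (0 : Ω → ℝ)) (Filter.Eventually.of_forall fun ω => by simp)]
      exact nrm_zero' X
    rw [this]; positivity
  | succ n ih =>
    have hrest : X.Mem (fun ω => ∑ j : Fin n, g j.succ ω) := mem_sum X _ fun j => hg j.succ
    have h1 : X.nrm (fun ω => ∑ j, g j ω)
        = X.nrm (g 0 + fun ω => ∑ j : Fin n, g j.succ ω) := by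
      refine X.nrm_congr (Filter.Eventually.of_forall fun ω => ?_)
      simp [Fin.sum_univ_succ]
    have h2 := X.nrm_add_le (hg 0) hrest
    have h3 := ih (fun j => g j.succ) (fun j => hg j.succ)
    have hK1 : X.K ≤ X.K ^ (n+1) := by
      calc X.K = X.K ^ 1 := (pow_one _).symm
        _ ≤ X.K ^ (n+1) := pow_le_pow_right₀ X.one_le_K (by omega)
    have hg0 : 0 ≤ X.nrm (g 0) := X.nrm_nonneg _
    have hsum0 : 0 ≤ ∑ j : Fin n, X.nrm (g j.succ) :=
      Finset.sum_nonneg fun j _ => X.nrm_nonneg _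
    calc X.nrm (fun ω => ∑ j, g j ω) ≤ X.K * (X.nrm (g 0) + X.nrm (fun ω => ∑ j : Fin n, g j.succ ω)) := by
          rw [h1]; exact h2
      _ ≤ X.K * (X.nrm (g 0) + X.K ^ n * ∑ j : Fin n, X.nrm (g j.succ)) := by
          have := mul_le_mul_of_nonneg_left (add_le_add (le_refl (X.nrm (g 0))) h3) hK0.le
          exact this
      _ ≤ X.K ^ (n+1) * ∑ j : Fin (n+1), X.nrm (g j) := by
          rw [Fin.sum_univ_succ]
          have hKn : X.K * X.K ^ n = X.K ^ (n+1) := by ring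
          have : X.K * (X.nrm (g 0) + X.K ^ n * ∑ j : Fin n, X.nrm (g j.succ))
              = X.K * X.nrm (g 0) + X.K ^ (n+1) * ∑ j : Fin n, X.nrm (g j.succ) := by ring
          rw [this]
          have h4 : X.K * X.nrm (g 0) ≤ X.K ^ (n+1) * X.nrm (g 0) :=
            mul_le_mul_of_nonneg_right hK1 hg0
          nlinarith [mul_le_mul_of_nonneg_right hK1 hg0]

end QCoreAux
end XLemmas
section CoreBasic
variable {Ω : Type*} [MeasurableSpace Ω] {μ : MeasureTheory.Measure Ω} (X : QBFS μ) {q : ℝ}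

namespace QCoreAux

lemma core_nonneg {f : Ω → ℝ} {a : ℝ} (ha : a ∈ coreSet μ X.Mem X.nrm q f) : 0 ≤ a := by
  obtain ⟨n, g, -, -, rfl⟩ := ha
  exact Real.rpow_nonneg (Finset.sum_nonneg fun j _ => Real.rpow_nonneg (X.nrm_nonneg _) q) _

lemma self_mem_core (hq : 0 < q) {f : Ω → ℝ} (hf : X.Mem f) :
    X.nrm f ∈ coreSet μ X.Mem X.nrm q f := by
  refine ⟨1, fun _ => f, fun _ => hf, Filter.Eventually.of_forall fun ω => ?_, ?_⟩
  · rw [Fin.sum_univ_one, rpow_rinv hq (abs_nonneg _)]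
  · rw [Fin.sum_univ_one, rpow_rinv hq (X.nrm_nonneg _)]

lemma coreNrm_nonneg (f : Ω → ℝ) : 0 ≤ coreNrm μ X.Mem X.nrm q f :=
  Real.sSup_nonneg fun _ ha => core_nonneg X ha

lemma core_nonempty (hq : 0 < q) {f : Ω → ℝ} (hf : X.Mem f) :
    (coreSet μ X.Mem X.nrm q f).Nonempty := ⟨_, self_mem_core X hq hf⟩

/-- Transfer of a decomposition of `f` to a decomposition of a dominated function `u`. -/
lemma transfer (hq : 0 < q) {f u : Ω → ℝ} (hf_meas : MeasureTheory.AEStronglyMeasurable f μ)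
    (hu_meas : MeasureTheory.AEStronglyMeasurable u μ)
    (hle : ∀ᵐ ω ∂μ, |u ω| ≤ |f ω|)
    {p : ℕ} (g : Fin p → Ω → ℝ) (hg : ∀ i, X.Mem (g i))
    (hdec : ∀ᵐ ω ∂μ, |f ω| = (∑ i, |g i ω| ^ q) ^ (1/q)) :
    (∀ i, X.Mem (fun ω => g i ω * (|u ω| / |f ω|))) ∧
    (∀ i, ∀ᵐ ω ∂μ, |g i ω * (|u ω| / |f ω|)| ≤ |g i ω|) ∧
    (∀ᵐ ω ∂μ, |u ω| = (∑ i, |g i ω * (|u ω| / |f ω|)| ^ q) ^ (1/q)) := by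
  have hfrac : ∀ᵐ ω ∂μ, 0 ≤ |u ω| / |f ω| ∧ |u ω| / |f ω| ≤ 1 := by
    filter_upwards [hle] with ω h
    refine ⟨div_nonneg (abs_nonneg _) (abs_nonneg _), ?_⟩
    rcases eq_or_lt_of_le (abs_nonneg (f ω)) with h0 | h0
    · rw [← h0, div_zero]; norm_num
    · exact div_le_one_of_le₀ h h0.le
  have habs : ∀ i, ∀ᵐ ω ∂μ, |g i ω * (|u ω| / |f ω|)| ≤ |g i ω| := by
    intro i
    filter_upwards [hfrac] with ω ⟨h0, h1⟩
    rw [abs_mul, abs_of_nonneg h0]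
    calc |g i ω| * (|u ω| / |f ω|) ≤ |g i ω| * 1 := by
          exact mul_le_mul_of_nonneg_left h1 (abs_nonneg _)
      _ = |g i ω| := mul_one _
  have hmeas : ∀ i, X.Mem (fun ω => g i ω * (|u ω| / |f ω|)) := by
    intro i
    refine X.ideal_mem (hg i) ?_ (habs i)
    have h1 : MeasureTheory.AEStronglyMeasurable (fun ω => |u ω| / |f ω|) μ :=
      aestronglyMeasurable_iff_aemeasurable.mpr
        (hu_meas.aemeasurable.norm.div hf_meas.aemeasurable.norm)
    exact (X.mem_meas (hg i)).mul h1
  refine ⟨hmeas, habs, ?_⟩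
  filter_upwards [hle, hdec, hfrac] with ω h1 h2 ⟨h3, h4⟩
  have hsumnn : 0 ≤ ∑ i, |g i ω| ^ q :=
    Finset.sum_nonneg fun i _ => Real.rpow_nonneg (abs_nonneg _) q
  have hfq : ∑ i, |g i ω| ^ q = |f ω| ^ q := by
    rw [h2, rinv_rpow hq hsumnn]
  have hterm : ∀ i, |g i ω * (|u ω| / |f ω|)| ^ q = |g i ω| ^ q * (|u ω| / |f ω|) ^ q := by
    intro i
    rw [abs_mul, abs_of_nonneg h3, Real.mul_rpow (abs_nonneg _) h3]
  have hsum2 : ∑ i, |g i ω * (|u ω| / |f ω|)| ^ q = |f ω| ^ q * (|u ω| / |f ω|) ^ q := by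
    simp only [hterm]
    rw [← Finset.sum_mul, hfq]
  have hkey : |f ω| ^ q * (|u ω| / |f ω|) ^ q = |u ω| ^ q := by
    rw [← Real.mul_rpow (abs_nonneg (f ω)) h3]
    congr 1
    rcases eq_or_ne (|f ω|) 0 with h0 | h0
    · rw [h0, zero_mul]
      have : |u ω| = 0 := le_antisymm (h0 ▸ h1) (abs_nonneg _)
      rw [this]
    · field_simp
  rw [hsum2, hkey, rpow_rinv hq (abs_nonneg _)]

end QCoreAux
end CoreBasic
section CoreComb
variable {Ω : Type*} [MeasurableSpace Ω] {μ : MeasureTheory.Measure Ω} (X : QBFS μ) {q : ℝ}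

namespace QCoreAux

lemma combine (hq : 0 < q) {f : Ω → ℝ} {n : ℕ} (u : Fin n → Ω → ℝ)
    (hsum : ∀ᵐ ω ∂μ, |f ω| = (∑ j, |u j ω| ^ q) ^ (1/q))
    (a : Fin n → ℝ) (ha : ∀ j, a j ∈ coreSet μ X.Mem X.nrm q (u j)) :
    (∑ j, a j ^ q) ^ (1/q) ∈ coreSet μ X.Mem X.nrm q f := by
  classical
  choose p g hgmem hgdec hgval using ha
  let e := Fintype.equivFin ((j : Fin n) × Fin (p j))
  have hsig : ∀ (φ : (j : Fin n) → Fin (p j) → ℝ),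
      ∑ k, φ (e.symm k).1 (e.symm k).2 = ∑ j, ∑ i, φ j i := by
    intro φ
    rw [Equiv.sum_comp e.symm (fun σ : (j : Fin n) × Fin (p j) => φ σ.1 σ.2)]
    rw [← Finset.univ_sigma_univ, Finset.sum_sigma]
  refine ⟨Fintype.card ((j : Fin n) × Fin (p j)), fun k => g (e.symm k).1 (e.symm k).2,
    fun k => hgmem _ _, ?_, ?_⟩
  · have hall : ∀ᵐ ω ∂μ, ∀ j, |u j ω| = (∑ i, |g j i ω| ^ q) ^ (1/q) := ae_all_iff.mpr hgdec
    filter_upwards [hsum, hall] with ω h1 h2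
    rw [hsig (fun j i => |g j i ω| ^ q)]
    rw [h1]
    congr 1
    refine Finset.sum_congr rfl fun j _ => ?_
    rw [h2 j, rinv_rpow hq (Finset.sum_nonneg fun i _ => Real.rpow_nonneg (abs_nonneg _) q)]
  · rw [hsig (fun j i => X.nrm (g j i) ^ q)]
    congr 1
    refine Finset.sum_congr rfl fun j _ => ?_
    rw [hgval j, rinv_rpow hq (Finset.sum_nonneg fun i _ => Real.rpow_nonneg (X.nrm_nonneg _) q)]

lemma core_mono (hq : 0 < q) {f u : Ω → ℝ} (hf : X.Mem f)
    (hum : MeasureTheory.AEStronglyMeasurable u μ)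
    (hle : ∀ᵐ ω ∂μ, |u ω| ≤ |f ω|) (hbdd : BddAbove (coreSet μ X.Mem X.nrm q f)) :
    X.Mem u ∧ BddAbove (coreSet μ X.Mem X.nrm q u) ∧
      coreNrm μ X.Mem X.nrm q u ≤ coreNrm μ X.Mem X.nrm q f := by
  have hu : X.Mem u := X.ideal_mem hf hum hle
  set v : Ω → ℝ := fun ω => (|f ω| ^ q - |u ω| ^ q) ^ (1/q) with hv
  have hvmeas : MeasureTheory.AEStronglyMeasurable v μ :=
    aestronglyMeasurable_iff_aemeasurable.mpr
      (aemeas_rpow ((aemeas_rpow (X.mem_meas hf).aemeasurable.norm hq.le).sub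
        (aemeas_rpow hum.aemeasurable.norm hq.le)) (by positivity))
  have hvfacts : ∀ᵐ ω ∂μ, 0 ≤ v ω ∧ |v ω| ≤ |f ω| ∧ |u ω| ^ q + |v ω| ^ q = |f ω| ^ q := by
    filter_upwards [hle] with ω h
    have hd0 : 0 ≤ |f ω| ^ q - |u ω| ^ q := by
      have := Real.rpow_le_rpow (abs_nonneg (u ω)) h hq.le
      linarith
    have hv0 : 0 ≤ v ω := Real.rpow_nonneg hd0 _
    have hvq : |v ω| ^ q = |f ω| ^ q - |u ω| ^ q := by
      rw [abs_of_nonneg hv0]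
      exact rinv_rpow hq hd0
    refine ⟨hv0, ?_, by linarith⟩
    rw [abs_of_nonneg hv0]
    calc v ω = (|f ω| ^ q - |u ω| ^ q) ^ (1/q) := rfl
      _ ≤ (|f ω| ^ q) ^ (1/q) :=
          Real.rpow_le_rpow hd0 (by nlinarith [Real.rpow_nonneg (abs_nonneg (u ω)) q]) (by positivity)
      _ = |f ω| := rpow_rinv hq (abs_nonneg _)
  have hvmem : X.Mem v := X.ideal_mem hf hvmeas (by filter_upwards [hvfacts] with ω h; exact h.2.1)
  have hdec2 : ∀ᵐ ω ∂μ, |f ω| = (∑ j : Fin 2, |(![u, v] j) ω| ^ q) ^ (1/q) := by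
    filter_upwards [hvfacts] with ω ⟨h1, h2, h3⟩
    rw [Fin.sum_univ_two]
    simp only [Matrix.cons_val_zero, Matrix.cons_val_one, Matrix.head_cons]
    rw [h3, rpow_rinv hq (abs_nonneg _)]
  have hkey : ∀ a ∈ coreSet μ X.Mem X.nrm q u, a ≤ coreNrm μ X.Mem X.nrm q f := by
    intro a ha
    have hmem2 : ∀ j : Fin 2, (![a, X.nrm v] j) ∈ coreSet μ X.Mem X.nrm q (![u, v] j) := by
      intro j
      refine Fin.cases ?_ (fun i => ?_) j
      · simpa using ha
      · have : i = 0 := Subsingleton.elim _ _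
        subst this
        simpa using self_mem_core X hq hvmem
    have hc := combine X hq (f := f) ![u, v] hdec2 ![a, X.nrm v] hmem2
    have hc2 : (∑ j : Fin 2, (![a, X.nrm v] j) ^ q) ^ (1/q) ≤ coreNrm μ X.Mem X.nrm q f :=
      le_csSup hbdd hc
    have ha0 : 0 ≤ a := core_nonneg X ha
    calc a = (a ^ q) ^ (1/q) := (rpow_rinv hq ha0).symm
      _ ≤ (∑ j : Fin 2, (![a, X.nrm v] j) ^ q) ^ (1/q) := by
          refine Real.rpow_le_rpow (Real.rpow_nonneg ha0 q) ?_ (by positivity)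
          rw [Fin.sum_univ_two]
          simp only [Matrix.cons_val_zero, Matrix.cons_val_one, Matrix.head_cons]
          nlinarith [Real.rpow_nonneg (X.nrm_nonneg v) q]
      _ ≤ _ := hc2
  exact ⟨hu, ⟨_, fun a ha => hkey a ha⟩,
    csSup_le (core_nonempty X hq hu) hkey⟩

lemma superadd (hq : 0 < q) {f : Ω → ℝ} (hf : X.Mem f) {n : ℕ} (u : Fin n → Ω → ℝ)
    (hmem : ∀ j, X.Mem (u j))
    (hsum : ∀ᵐ ω ∂μ, |f ω| = (∑ j, |u j ω| ^ q) ^ (1/q))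
    (hbdd : BddAbove (coreSet μ X.Mem X.nrm q f)) :
    ∑ j, coreNrm μ X.Mem X.nrm q (u j) ^ q ≤ coreNrm μ X.Mem X.nrm q f ^ q := by
  classical
  have hle : ∀ j, ∀ᵐ ω ∂μ, |u j ω| ≤ |f ω| := by
    intro j
    filter_upwards [hsum] with ω h
    have h1 : |u j ω| ^ q ≤ ∑ i, |u i ω| ^ q :=
      Finset.single_le_sum (f := fun i => |u i ω| ^ q)
        (fun i _ => Real.rpow_nonneg (abs_nonneg _) q) (Finset.mem_univ j)
    calc |u j ω| = (|u j ω| ^ q) ^ (1/q) := (rpow_rinv hq (abs_nonneg _)).symm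
      _ ≤ (∑ i, |u i ω| ^ q) ^ (1/q) :=
          Real.rpow_le_rpow (Real.rpow_nonneg (abs_nonneg _) q) h1 (by positivity)
      _ = |f ω| := h.symm
  have hbddj : ∀ j, BddAbove (coreSet μ X.Mem X.nrm q (u j)) := fun j =>
    (core_mono X hq hf (X.mem_meas (hmem j)) (hle j) hbdd).2.1
  have hTS : ∀ j, sSup ((fun a => a ^ q) '' coreSet μ X.Mem X.nrm q (u j))
      = coreNrm μ X.Mem X.nrm q (u j) ^ q := fun j =>
    csSup_rpow hq _ (core_nonempty X hq (hmem j)) (hbddj j) (fun a ha => core_nonneg X ha)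
  have hmain : ∑ j, sSup ((fun a => a ^ q) '' coreSet μ X.Mem X.nrm q (u j))
      ≤ coreNrm μ X.Mem X.nrm q f ^ q := by
    refine sum_csSup_le _ (fun j => (core_nonempty X hq (hmem j)).image _)
      (fun j => ?_) _ ?_
    · refine ⟨coreNrm μ X.Mem X.nrm q (u j) ^ q, ?_⟩
      rintro b ⟨a, ha, rfl⟩
      exact Real.rpow_le_rpow (core_nonneg X ha) (le_csSup (hbddj j) ha) hq.le
    · intro b hb
      have : ∀ j, ∃ a ∈ coreSet μ X.Mem X.nrm q (u j), b j = a ^ q := by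
        intro j
        obtain ⟨a, ha, h⟩ := hb j
        exact ⟨a, ha, h.symm⟩
      choose a hamem hval using this
      have hc := combine X hq (f := f) u hsum a hamem
      have hc2 : (∑ j, a j ^ q) ^ (1/q) ≤ coreNrm μ X.Mem X.nrm q f := le_csSup hbdd hc
      have hs0 : 0 ≤ ∑ j, a j ^ q :=
        Finset.sum_nonneg fun j _ => Real.rpow_nonneg (core_nonneg X (hamem j)) q
      calc ∑ j, b j = ∑ j, a j ^ q := Finset.sum_congr rfl fun j _ => hval j
        _ = ((∑ j, a j ^ q) ^ (1/q)) ^ q := (rinv_rpow hq hs0).symm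
        _ ≤ coreNrm μ X.Mem X.nrm q f ^ q :=
          Real.rpow_le_rpow (Real.rpow_nonneg hs0 _) hc2 hq.le
  calc ∑ j, coreNrm μ X.Mem X.nrm q (u j) ^ q
      = ∑ j, sSup ((fun a => a ^ q) '' coreSet μ X.Mem X.nrm q (u j)) :=
        Finset.sum_congr rfl fun j _ => (hTS j).symm
    _ ≤ _ := hmain

end QCoreAux
end CoreComb
section BddF
variable {Ω : Type*} [MeasurableSpace Ω] {μ : MeasureTheory.Measure Ω} (X : QBFS μ) {q : ℝ}

namespace QCoreAux

lemma bdd_F (hq : 0 < q) {n : ℕ} (f : Fin n → Ω → ℝ)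
    (hf : ∀ j, coreMem μ X.Mem X.nrm q (f j)) :
    X.Mem (fun ω => (∑ j, |f j ω| ^ q) ^ (1/q)) ∧
    BddAbove (coreSet μ X.Mem X.nrm q (fun ω => (∑ j, |f j ω| ^ q) ^ (1/q))) := by
  classical
  set F : Ω → ℝ := fun ω => (∑ j, |f j ω| ^ q) ^ (1/q) with hFdef
  have hsumnn : ∀ ω, 0 ≤ ∑ j, |f j ω| ^ q :=
    fun ω => Finset.sum_nonneg fun j _ => Real.rpow_nonneg (abs_nonneg _) q
  have hF0 : ∀ ω, 0 ≤ F ω := fun ω => Real.rpow_nonneg (hsumnn ω) _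
  have hFq : ∀ ω, |F ω| ^ q = ∑ j, |f j ω| ^ q := by
    intro ω
    rw [abs_of_nonneg (hF0 ω)]
    exact rinv_rpow hq (hsumnn ω)
  have hFmeas : MeasureTheory.AEStronglyMeasurable F μ := by
    refine aestronglyMeasurable_iff_aemeasurable.mpr (aemeas_rpow ?_ (by positivity))
    exact Finset.aemeasurable_fun_sum _ fun j _ =>
      aemeas_rpow (X.mem_meas (hf j).1).aemeasurable.norm hq.le
  have habs_mem : ∀ j, X.Mem (fun ω => |f j ω|) := fun j => mem_abs X (hf j).1
  have hSmem : X.Mem (fun ω => ∑ j, |f j ω|) := mem_sum X _ habs_mem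
  have hgmem : X.Mem ((n:ℝ) ^ (1/q) • fun ω => ∑ j, |f j ω|) := X.smul_mem _ hSmem
  have hFle : ∀ ω, F ω ≤ (n:ℝ) ^ (1/q) * ∑ j, |f j ω| := fun ω =>
    rpow_sum_le hq (fun j => |f j ω|) fun j => abs_nonneg _
  have hFmem : X.Mem F := by
    refine X.ideal_mem hgmem hFmeas (Filter.Eventually.of_forall fun ω => ?_)
    have h1 : ((n:ℝ) ^ (1/q) • fun ω => ∑ j, |f j ω|) ω = (n:ℝ) ^ (1/q) * ∑ j, |f j ω| := rfl
    rw [abs_of_nonneg (hF0 ω), h1, abs_of_nonneg (by positivity)]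
    exact hFle ω
  refine ⟨hFmem, ?_⟩
  set D : ℝ := ((n:ℝ) ^ (1/q) * X.K ^ n) ^ q * (n:ℝ) ^ q with hDdef
  have hD0 : 0 ≤ D := by
    have hK0 : (0:ℝ) ≤ X.K := le_trans zero_le_one X.one_le_K
    positivity
  have hcN0 : 0 ≤ ∑ j, coreNrm μ X.Mem X.nrm q (f j) ^ q :=
    Finset.sum_nonneg fun j _ => Real.rpow_nonneg (coreNrm_nonneg X _) q
  refine ⟨(D * ∑ j, coreNrm μ X.Mem X.nrm q (f j) ^ q) ^ (1/q), ?_⟩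
  rintro a ⟨p, h, hhmem, hhdec, rfl⟩
  -- transferred decompositions
  have hlej : ∀ j, ∀ᵐ ω ∂μ, |f j ω| ≤ |F ω| := by
    intro j
    refine Filter.Eventually.of_forall fun ω => ?_
    have h1 : |f j ω| ^ q ≤ ∑ i, |f i ω| ^ q :=
      Finset.single_le_sum (f := fun i => |f i ω| ^ q)
        (fun i _ => Real.rpow_nonneg (abs_nonneg _) q) (Finset.mem_univ j)
    calc |f j ω| = (|f j ω| ^ q) ^ (1/q) := (rpow_rinv hq (abs_nonneg _)).symm
      _ ≤ (∑ i, |f i ω| ^ q) ^ (1/q) :=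
          Real.rpow_le_rpow (Real.rpow_nonneg (abs_nonneg _) q) h1 (by positivity)
      _ = |F ω| := (abs_of_nonneg (hF0 ω)).symm
  have htr := fun j => transfer X hq hFmeas (X.mem_meas (hf j).1) (hlej j) h hhmem hhdec
  set h' : Fin n → Fin p → Ω → ℝ := fun j i ω => h i ω * (|f j ω| / |F ω|) with hh'def
  have hmem' : ∀ j i, X.Mem (h' j i) := fun j i => (htr j).1 i
  -- each j: sum over i of nrm^q bounded by coreNrm (f j) ^ q
  have hforj : ∀ j, ∑ i, X.nrm (h' j i) ^ q ≤ coreNrm μ X.Mem X.nrm q (f j) ^ q := by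
    intro j
    have hval : (∑ i, X.nrm (h' j i) ^ q) ^ (1/q) ∈ coreSet μ X.Mem X.nrm q (f j) :=
      ⟨p, h' j, hmem' j, (htr j).2.2, rfl⟩
    have h1 : (∑ i, X.nrm (h' j i) ^ q) ^ (1/q) ≤ coreNrm μ X.Mem X.nrm q (f j) :=
      le_csSup (hf j).2 hval
    have h2 : 0 ≤ ∑ i, X.nrm (h' j i) ^ q :=
      Finset.sum_nonneg fun i _ => Real.rpow_nonneg (X.nrm_nonneg _) q
    calc ∑ i, X.nrm (h' j i) ^ q = ((∑ i, X.nrm (h' j i) ^ q) ^ (1/q)) ^ q :=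
          (rinv_rpow hq h2).symm
      _ ≤ _ := Real.rpow_le_rpow (Real.rpow_nonneg h2 _) h1 hq.le
  -- per-i estimate
  have hperi : ∀ i, X.nrm (h i) ^ q ≤ D * ∑ j, X.nrm (h' j i) ^ q := by
    intro i
    -- pointwise bound
    have hpt : ∀ᵐ ω ∂μ, |h i ω| ≤ (n:ℝ) ^ (1/q) * ∑ j, |h' j i ω| := by
      filter_upwards [hhdec] with ω hd
      have hsq : ∑ k, |h k ω| ^ q = |F ω| ^ q := by
        rw [hd]
        exact (rinv_rpow hq (Finset.sum_nonneg fun k _ =>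
          Real.rpow_nonneg (abs_nonneg (h k ω)) q)).symm
      rcases eq_or_ne (|F ω|) 0 with h0 | h0
      · have hz : |h i ω| ^ q = 0 := by
          have h1 : ∑ k, |h k ω| ^ q = 0 := by rw [hsq, h0, Real.zero_rpow hq.ne']
          have := (Finset.sum_eq_zero_iff_of_nonneg
            (fun k _ => Real.rpow_nonneg (abs_nonneg (h k ω)) q)).mp h1 i (Finset.mem_univ i)
          exact this
        have : |h i ω| = 0 := by
          by_contra hc
          have : 0 < |h i ω| := lt_of_le_of_ne (abs_nonneg _) (Ne.symm hc)
          exact absurd hz (ne_of_gt (Real.rpow_pos_of_pos this q))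
        rw [this]
        positivity
      · have hsum' : ∑ j, |h' j i ω| ^ q = |h i ω| ^ q := by
          have hterm : ∀ j, |h' j i ω| ^ q = |h i ω| ^ q * (|f j ω| ^ q / |F ω| ^ q) := by
            intro j
            show |h i ω * (|f j ω| / |F ω|)| ^ q = _
            rw [abs_mul, abs_of_nonneg (div_nonneg (abs_nonneg (f j ω)) (abs_nonneg (F ω))),
              Real.mul_rpow (abs_nonneg _) (div_nonneg (abs_nonneg _) (abs_nonneg _)),
              Real.div_rpow (abs_nonneg _) (abs_nonneg _)]
          simp only [hterm]
          rw [← Finset.mul_sum, ← Finset.sum_div, ← hFq ω, div_self ?hne, mul_one]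
          case hne => exact fun hc => h0 (by
            have := Real.rpow_natCast -- dummy
            nlinarith [Real.rpow_pos_of_pos (lt_of_le_of_ne (abs_nonneg (F ω)) (Ne.symm h0)) q])
        calc |h i ω| = (∑ j, |h' j i ω| ^ q) ^ (1/q) := by
              rw [hsum', rpow_rinv hq (abs_nonneg _)]
          _ ≤ (n:ℝ) ^ (1/q) * ∑ j, |h' j i ω| :=
              rpow_sum_le hq (fun j => |h' j i ω|) fun j => abs_nonneg _
    -- nrm bound
    have habs'mem : ∀ j, X.Mem (fun ω => |h' j i ω|) := fun j => mem_abs X (hmem' j i)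
    have hGmem0 : X.Mem (fun ω => ∑ j, |h' j i ω|) := mem_sum X _ habs'mem
    have hGmem : X.Mem ((n:ℝ) ^ (1/q) • fun ω => ∑ j, |h' j i ω|) := X.smul_mem _ hGmem0
    have h1 : X.nrm (h i) ≤ X.nrm ((n:ℝ) ^ (1/q) • fun ω => ∑ j, |h' j i ω|) := by
      refine X.ideal_nrm hGmem (hhmem i) ?_
      filter_upwards [hpt] with ω hω
      have h2 : ((n:ℝ) ^ (1/q) • fun ω => ∑ j, |h' j i ω|) ω
          = (n:ℝ) ^ (1/q) * ∑ j, |h' j i ω| := rfl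
      rw [h2, abs_of_nonneg (show (0:ℝ) ≤ (n:ℝ) ^ (1/q) * ∑ j, |h' j i ω| by positivity)]
      exact hω
    have h2 : X.nrm ((n:ℝ) ^ (1/q) • fun ω => ∑ j, |h' j i ω|)
        = (n:ℝ) ^ (1/q) * X.nrm (fun ω => ∑ j, |h' j i ω|) := by
      rw [X.nrm_smul _ hGmem0, abs_of_nonneg (by positivity)]
    have h3 : X.nrm (fun ω => ∑ j, |h' j i ω|) ≤ X.K ^ n * ∑ j, X.nrm (h' j i) := by
      have := nrm_sum_le X (fun j ω => |h' j i ω|) habs'mem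
      calc X.nrm (fun ω => ∑ j, |h' j i ω|) ≤ X.K ^ n * ∑ j, X.nrm (fun ω => |h' j i ω|) := this
        _ = X.K ^ n * ∑ j, X.nrm (h' j i) := by
            congr 1
            exact Finset.sum_congr rfl fun j _ => nrm_abs X (hmem' j i)
    have hKn0 : (0:ℝ) ≤ X.K ^ n := pow_nonneg (le_trans zero_le_one X.one_le_K) n
    have h4 : X.nrm (h i) ≤ ((n:ℝ) ^ (1/q) * X.K ^ n) * ∑ j, X.nrm (h' j i) := by
      calc X.nrm (h i) ≤ (n:ℝ) ^ (1/q) * X.nrm (fun ω => ∑ j, |h' j i ω|) := by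
            rw [← h2]; exact h1
        _ ≤ (n:ℝ) ^ (1/q) * (X.K ^ n * ∑ j, X.nrm (h' j i)) :=
            mul_le_mul_of_nonneg_left h3 (by positivity)
        _ = _ := by ring
    have hsum0 : 0 ≤ ∑ j, X.nrm (h' j i) := Finset.sum_nonneg fun j _ => X.nrm_nonneg _
    calc X.nrm (h i) ^ q ≤ (((n:ℝ) ^ (1/q) * X.K ^ n) * ∑ j, X.nrm (h' j i)) ^ q :=
          Real.rpow_le_rpow (X.nrm_nonneg _) h4 hq.le
      _ = ((n:ℝ) ^ (1/q) * X.K ^ n) ^ q * (∑ j, X.nrm (h' j i)) ^ q :=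
          Real.mul_rpow (by positivity) hsum0
      _ ≤ ((n:ℝ) ^ (1/q) * X.K ^ n) ^ q * ((n:ℝ) ^ q * ∑ j, X.nrm (h' j i) ^ q) :=
          mul_le_mul_of_nonneg_left (sum_rpow_le hq _ fun j => X.nrm_nonneg _) (by positivity)
      _ = D * ∑ j, X.nrm (h' j i) ^ q := by rw [hDdef]; ring
  -- put together
  have hA0 : 0 ≤ ∑ i, X.nrm (h i) ^ q :=
    Finset.sum_nonneg fun i _ => Real.rpow_nonneg (X.nrm_nonneg _) q
  have hmain : ∑ i, X.nrm (h i) ^ q ≤ D * ∑ j, coreNrm μ X.Mem X.nrm q (f j) ^ q := by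
    calc ∑ i, X.nrm (h i) ^ q ≤ ∑ i, (D * ∑ j, X.nrm (h' j i) ^ q) :=
          Finset.sum_le_sum fun i _ => hperi i
      _ = D * ∑ j, ∑ i, X.nrm (h' j i) ^ q := by
          rw [← Finset.mul_sum, Finset.sum_comm]
      _ ≤ D * ∑ j, coreNrm μ X.Mem X.nrm q (f j) ^ q :=
          mul_le_mul_of_nonneg_left (Finset.sum_le_sum fun j _ => hforj j) hD0
  exact Real.rpow_le_rpow hA0 hmain (by positivity)

end QCoreAux
end BddF
section Parts
variable {Ω : Type*} [MeasurableSpace Ω] {μ : MeasureTheory.Measure Ω} (X : QBFS μ) {q : ℝ}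

namespace QCoreAux

lemma dec_zero {p : ℕ} (hq : 0 < q) {c : Fin p → ℝ}
    (h0 : (∑ i, |c i| ^ q) ^ (1/q) = 0) (i : Fin p) : c i = 0 := by
  have hS0 : 0 ≤ ∑ i, |c i| ^ q :=
    Finset.sum_nonneg fun i _ => Real.rpow_nonneg (abs_nonneg _) q
  have hS : ∑ i, |c i| ^ q = 0 := by
    have := rinv_rpow hq hS0
    rw [h0, Real.zero_rpow hq.ne'] at this
    linarith
  have hterm : |c i| ^ q = 0 :=
    (Finset.sum_eq_zero_iff_of_nonneg
      (fun k _ => Real.rpow_nonneg (abs_nonneg (c k)) q)).mp hS i (Finset.mem_univ i)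
  by_contra hc
  have h1 : 0 < |c i| := abs_pos.mpr hc
  exact absurd hterm (ne_of_gt (Real.rpow_pos_of_pos h1 q))

lemma part1 (hq : 0 < q) {n : ℕ} (f : Fin n → Ω → ℝ)
    (hf : ∀ j, coreMem μ X.Mem X.nrm q (f j)) :
    ∑ j, coreNrm μ X.Mem X.nrm q (f j) ^ q ≤
      coreNrm μ X.Mem X.nrm q (fun ω => (∑ j, |f j ω| ^ q) ^ (1/q)) ^ q := by
  obtain ⟨hFmem, hFbdd⟩ := bdd_F X hq f hf
  refine superadd X hq hFmem f (fun j => (hf j).1) ?_ hFbdd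
  refine Filter.Eventually.of_forall fun ω => ?_
  exact abs_of_nonneg (Real.rpow_nonneg
    (Finset.sum_nonneg fun j _ => Real.rpow_nonneg (abs_nonneg _) q) _)

lemma part2 (hq : 0 < q) :
    SpaceQConcave (coreMem μ X.Mem X.nrm q) (coreNrm μ X.Mem X.nrm q) q := by
  refine ⟨1, one_pos, fun n f hf => ?_⟩
  rw [one_mul]
  have h1 := part1 X hq f hf
  have h0 : 0 ≤ ∑ j, coreNrm μ X.Mem X.nrm q (f j) ^ q :=
    Finset.sum_nonneg fun j _ => Real.rpow_nonneg (coreNrm_nonneg X _) q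
  calc (∑ j, coreNrm μ X.Mem X.nrm q (f j) ^ q) ^ (1/q)
      ≤ (coreNrm μ X.Mem X.nrm q (fun ω => (∑ j, |f j ω| ^ q) ^ (1/q)) ^ q) ^ (1/q) :=
        Real.rpow_le_rpow h0 h1 (by positivity)
    _ = _ := rpow_rinv hq (coreNrm_nonneg X _)

lemma core_soc (hq : 0 < q) (hoc : SigmaOC μ X.Mem X.nrm) :
    SigmaOC μ (coreMem μ X.Mem X.nrm q) (coreNrm μ X.Mem X.nrm q) := by
  intro F hmem hanti hlim
  have hpos : ∀ᵐ ω ∂μ, ∀ n, 0 ≤ F n ω := by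
    filter_upwards [hanti, hlim] with ω h1 h2
    intro n
    exact le_of_tendsto h2 (Filter.eventually_atTop.mpr ⟨n, fun k hk => h1 hk⟩)
  have hmono : ∀ m n : ℕ, m ≤ n →
      X.Mem (F n) ∧ BddAbove (coreSet μ X.Mem X.nrm q (F n)) ∧
        coreNrm μ X.Mem X.nrm q (F n) ≤ coreNrm μ X.Mem X.nrm q (F m) := by
    intro m n hmn
    refine core_mono X hq (hmem m).1 (X.mem_meas (hmem n).1) ?_ (hmem m).2
    filter_upwards [hanti, hpos] with ω h1 h2
    rw [abs_of_nonneg (h2 n), abs_of_nonneg (h2 m)]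
    exact h1 hmn
  have hφanti : Antitone fun n => coreNrm μ X.Mem X.nrm q (F n) :=
    fun m n hmn => (hmono m n hmn).2.2
  have hφ0 : ∀ n, 0 ≤ coreNrm μ X.Mem X.nrm q (F n) := fun n => coreNrm_nonneg X _
  have hbelow : BddBelow (Set.range fun n => coreNrm μ X.Mem X.nrm q (F n)) :=
    ⟨0, by rintro x ⟨n, rfl⟩; exact hφ0 n⟩
  set L : ℝ := ⨅ n, coreNrm μ X.Mem X.nrm q (F n) with hLdef
  have hφL : Filter.Tendsto (fun n => coreNrm μ X.Mem X.nrm q (F n)) atTop (𝓝 L) :=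
    tendsto_atTop_ciInf hφanti hbelow
  have hL0 : 0 ≤ L := le_ciInf hφ0
  have hLle : ∀ n, L ≤ coreNrm μ X.Mem X.nrm q (F n) := fun n => ciInf_le hbelow n
  have hK0 : (0:ℝ) < X.K := lt_of_lt_of_le one_pos X.one_le_K
  suffices hLz : L = 0 by rw [hLz] at hφL; exact hφL
  have key : ∀ m : ℕ, X.K ^ q * L ^ q ≤
      (X.K ^ q - 1) * coreNrm μ X.Mem X.nrm q (F m) ^ q := by
    intro m
    have hkey0 : coreNrm μ X.Mem X.nrm q (F m) ^ q ≤
        X.K ^ q * (coreNrm μ X.Mem X.nrm q (F m) ^ q - L ^ q) := by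
      refine le_of_forall_pos_le_add fun ε hε => ?_
      have hset := csSup_rpow hq _ (core_nonempty X hq (hmem m).1) (hmem m).2
        (fun a ha => core_nonneg X (q := q) ha)
      obtain ⟨b, hbmem, hblt⟩ := exists_lt_of_lt_csSup
        ((core_nonempty X hq (hmem m).1).image _)
        (by rw [hset]; exact sub_lt_self _ hε)
      obtain ⟨a, hamem, rfl⟩ := hbmem
      obtain ⟨p, h, hhmem, hhdec, rfl⟩ := hamem
      have hA0 : 0 ≤ ∑ i, X.nrm (h i) ^ q :=
        Finset.sum_nonneg fun i _ => Real.rpow_nonneg (X.nrm_nonneg _) q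
      have hblt : coreNrm μ X.Mem X.nrm q (F m) ^ q - ε < ∑ i, X.nrm (h i) ^ q := by
        have hblt2 : coreNrm μ X.Mem X.nrm q (F m) ^ q - ε
            < ((∑ i, X.nrm (h i) ^ q) ^ (1/q)) ^ q := hblt
        rwa [rinv_rpow hq hA0] at hblt2
      clear hset
      set s : ℕ → Ω → ℝ := fun k ω => (|F m ω| ^ q - |F (m+k) ω| ^ q) ^ (1/q) with hsdef
      have hsmeas : ∀ k, MeasureTheory.AEStronglyMeasurable (s k) μ := by
        intro k
        refine aestronglyMeasurable_iff_aemeasurable.mpr (aemeas_rpow ?_ (by positivity))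
        exact ((aemeas_rpow (X.mem_meas (hmem m).1).aemeasurable.norm hq.le).sub
          (aemeas_rpow (X.mem_meas (hmem (m+k)).1).aemeasurable.norm hq.le))
      have hsfacts : ∀ᵐ ω ∂μ, ∀ k,
          0 ≤ s k ω ∧ |s k ω| ≤ |F m ω| ∧ |F (m+k) ω| ^ q + |s k ω| ^ q = |F m ω| ^ q := by
        filter_upwards [hanti, hpos] with ω h1 h2
        intro k
        have hk1 : F (m+k) ω ≤ F m ω := h1 (Nat.le_add_right m k)
        have hd0 : 0 ≤ |F m ω| ^ q - |F (m+k) ω| ^ q := by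
          have hxy : |F (m+k) ω| ≤ |F m ω| := by
            rw [abs_of_nonneg (h2 (m+k)), abs_of_nonneg (h2 m)]; exact hk1
          have := Real.rpow_le_rpow (abs_nonneg (F (m+k) ω)) hxy hq.le
          linarith
        have hs0 : 0 ≤ s k ω := Real.rpow_nonneg hd0 _
        have hsq : |s k ω| ^ q = |F m ω| ^ q - |F (m+k) ω| ^ q := by
          rw [abs_of_nonneg hs0]
          exact rinv_rpow hq hd0
        refine ⟨hs0, ?_, by linarith⟩
        rw [abs_of_nonneg hs0]
        calc s k ω ≤ (|F m ω| ^ q) ^ (1/q) :=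
              Real.rpow_le_rpow hd0
                (by nlinarith [Real.rpow_nonneg (abs_nonneg (F (m+k) ω)) q]) (by positivity)
          _ = |F m ω| := rpow_rinv hq (abs_nonneg _)
      have hsle : ∀ k, ∀ᵐ ω ∂μ, |s k ω| ≤ |F m ω| := fun k => by
        filter_upwards [hsfacts] with ω hω; exact (hω k).2.1
      have hsmem : ∀ k, X.Mem (s k) := fun k =>
        X.ideal_mem (hmem m).1 (hsmeas k) (hsle k)
      have hsbdd : ∀ k, BddAbove (coreSet μ X.Mem X.nrm q (s k)) := fun k =>
        (core_mono X hq (hmem m).1 (hsmeas k) (hsle k) (hmem m).2).2.1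
      have hsup : ∀ k, coreNrm μ X.Mem X.nrm q (F (m+k)) ^ q +
          coreNrm μ X.Mem X.nrm q (s k) ^ q ≤ coreNrm μ X.Mem X.nrm q (F m) ^ q := by
        intro k
        have hdec2 : ∀ᵐ ω ∂μ, |F m ω| = (∑ j : Fin 2, |(![F (m+k), s k] j) ω| ^ q) ^ (1/q) := by
          filter_upwards [hsfacts] with ω hω
          obtain ⟨h1, h2, h3⟩ := hω k
          rw [Fin.sum_univ_two]
          simp only [Matrix.cons_val_zero, Matrix.cons_val_one, Matrix.head_cons]
          rw [h3, rpow_rinv hq (abs_nonneg _)]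
        have hmem2 : ∀ j : Fin 2, X.Mem (![F (m+k), s k] j) := by
          intro j
          refine Fin.cases ?_ (fun i => ?_) j
          · simpa using (hmem (m+k)).1
          · have : i = 0 := Subsingleton.elim _ _
            subst this
            simpa using hsmem k
        have h4 := superadd X hq (hmem m).1 ![F (m+k), s k] hmem2 hdec2 (hmem m).2
        rw [Fin.sum_univ_two] at h4
        simpa using h4
      have hsNle : ∀ k, coreNrm μ X.Mem X.nrm q (s k) ^ q ≤
          coreNrm μ X.Mem X.nrm q (F m) ^ q - L ^ q := by
        intro k
        have h1 : L ^ q ≤ coreNrm μ X.Mem X.nrm q (F (m+k)) ^ q :=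
          Real.rpow_le_rpow hL0 (hLle (m+k)) hq.le
        have := hsup k
        linarith
      have htr := fun k => transfer X hq (X.mem_meas (hmem m).1) (hsmeas k) (hsle k)
        h hhmem hhdec
      set h' : ℕ → Fin p → Ω → ℝ := fun k i ω => h i ω * (|s k ω| / |F m ω|) with hh'def
      have hBle : ∀ k, ∑ i, X.nrm (h' k i) ^ q ≤
          coreNrm μ X.Mem X.nrm q (F m) ^ q - L ^ q := by
        intro k
        have hval : (∑ i, X.nrm (h' k i) ^ q) ^ (1/q) ∈ coreSet μ X.Mem X.nrm q (s k) :=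
          ⟨p, h' k, (htr k).1, (htr k).2.2, rfl⟩
        have h1 : (∑ i, X.nrm (h' k i) ^ q) ^ (1/q) ≤ coreNrm μ X.Mem X.nrm q (s k) :=
          le_csSup (hsbdd k) hval
        have h2 : 0 ≤ ∑ i, X.nrm (h' k i) ^ q :=
          Finset.sum_nonneg fun i _ => Real.rpow_nonneg (X.nrm_nonneg _) q
        calc ∑ i, X.nrm (h' k i) ^ q = ((∑ i, X.nrm (h' k i) ^ q) ^ (1/q)) ^ q :=
              (rinv_rpow hq h2).symm
          _ ≤ coreNrm μ X.Mem X.nrm q (s k) ^ q :=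
              Real.rpow_le_rpow (Real.rpow_nonneg h2 _) h1 hq.le
          _ ≤ _ := hsNle k
      -- pointwise facts for the index family
      have hptfacts : ∀ᵐ ω ∂μ, ∀ i : Fin p,
          (∀ k l : ℕ, k ≤ l → |h' k i ω| ≤ |h' l i ω|) ∧
          (Antitone fun k => |h i ω - h' k i ω|) ∧
          Filter.Tendsto (fun k => |h i ω - h' k i ω|) atTop (𝓝 0) := by
        filter_upwards [hsfacts, hhdec, hanti, hlim, hpos] with ω hs hd h1 h2 h3
        intro i
        rcases eq_or_ne (|F m ω|) 0 with h0 | h0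
        · have hz : h i ω = 0 := by
            refine dec_zero hq (c := fun i => h i ω) ?_ i
            rw [← hd]; exact h0
          have hck : ∀ k, h' k i ω = 0 := by
            intro k
            show h i ω * (|s k ω| / |F m ω|) = 0
            rw [hz, zero_mul]
          refine ⟨?_, ?_, ?_⟩
          · intro k l _
            rw [hck k, hck l]
          · intro k l _
            show |h i ω - h' l i ω| ≤ |h i ω - h' k i ω|
            simp [hck, hz]
          · refine Filter.Tendsto.congr (fun k => ?_) tendsto_const_nhds
            rw [hck k, hz]
            simp
        · have hF0pos : 0 < |F m ω| := lt_of_le_of_ne (abs_nonneg _) (Ne.symm h0)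
          have hsmono : ∀ k l : ℕ, k ≤ l → |s k ω| ≤ |s l ω| := by
            intro k l hkl
            have hFq : |F (m+l) ω| ^ q ≤ |F (m+k) ω| ^ q := by
              refine Real.rpow_le_rpow (abs_nonneg _) ?_ hq.le
              rw [abs_of_nonneg (h3 (m+l)), abs_of_nonneg (h3 (m+k))]
              exact h1 (by omega)
            have hkq : |s k ω| ^ q ≤ |s l ω| ^ q := by
              have e1 := (hs k).2.2
              have e2 := (hs l).2.2
              linarith
            calc |s k ω| = (|s k ω| ^ q) ^ (1/q) := (rpow_rinv hq (abs_nonneg _)).symm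
              _ ≤ (|s l ω| ^ q) ^ (1/q) :=
                  Real.rpow_le_rpow (Real.rpow_nonneg (abs_nonneg _) q) hkq (by positivity)
              _ = |s l ω| := rpow_rinv hq (abs_nonneg _)
          have ht01 : ∀ k, 0 ≤ |s k ω| / |F m ω| ∧ |s k ω| / |F m ω| ≤ 1 := fun k =>
            ⟨div_nonneg (abs_nonneg _) (abs_nonneg _), div_le_one_of_le₀ (hs k).2.1 (abs_nonneg _)⟩
          have habs' : ∀ k, |h' k i ω| = |h i ω| * (|s k ω| / |F m ω|) := by
            intro k
            show |h i ω * (|s k ω| / |F m ω|)| = _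
            rw [abs_mul, abs_of_nonneg (ht01 k).1]
          have hdiff : ∀ k, |h i ω - h' k i ω| = |h i ω| * (1 - |s k ω| / |F m ω|) := by
            intro k
            show |h i ω - h i ω * (|s k ω| / |F m ω|)| = _
            rw [show h i ω - h i ω * (|s k ω| / |F m ω|)
                = h i ω * (1 - |s k ω| / |F m ω|) by ring, abs_mul,
              abs_of_nonneg (show (0:ℝ) ≤ 1 - |s k ω| / |F m ω| by
                have := (ht01 k).2; linarith)]
          have htmono : ∀ k l : ℕ, k ≤ l → |s k ω| / |F m ω| ≤ |s l ω| / |F m ω| :=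
            fun k l hkl => (div_le_div_iff_of_pos_right hF0pos).mpr (hsmono k l hkl)
          refine ⟨?_, ?_, ?_⟩
          · intro k l hkl
            rw [habs' k, habs' l]
            exact mul_le_mul_of_nonneg_left (htmono k l hkl) (abs_nonneg _)
          · intro k l hkl
            show |h i ω - h' l i ω| ≤ |h i ω - h' k i ω|
            rw [hdiff k, hdiff l]
            refine mul_le_mul_of_nonneg_left ?_ (abs_nonneg _)
            have := htmono k l hkl
            linarith
          · have hx : Filter.Tendsto (fun k => F (m+k) ω) atTop (𝓝 0) := by
              refine Filter.Tendsto.congr (fun k => ?_)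
                (h2.comp (tendsto_add_atTop_nat m))
              show F (k + m) ω = F (m + k) ω
              rw [Nat.add_comm]
            have h5 : Filter.Tendsto (fun k => |F (m+k) ω|) atTop (𝓝 0) := by
              have := hx.abs
              simpa using this
            have hxq : Filter.Tendsto (fun k => |F (m+k) ω| ^ q) atTop (𝓝 0) := by
              have h6 := ((continuous_rpow_const hq.le).tendsto 0).comp h5
              simpa [Function.comp_def, Real.zero_rpow hq.ne'] using h6
            have h7 : Filter.Tendsto (fun k => |F m ω| ^ q - |F (m+k) ω| ^ q) atTop
                (𝓝 (|F m ω| ^ q)) := by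
              have := hxq.const_sub (|F m ω| ^ q)
              simpa using this
            have h8 := ((continuous_rpow_const (show (0:ℝ) ≤ 1/q by positivity)).tendsto
              (|F m ω| ^ q)).comp h7
            have h9 : Filter.Tendsto (fun k => s k ω) atTop (𝓝 (|F m ω|)) := by
              rw [hsdef]
              rw [show ((|F m ω| ^ q) ^ (1/q)) = |F m ω| from
                rpow_rinv hq (abs_nonneg (F m ω))] at h8
              simpa [Function.comp_def] using h8
            have h10 : Filter.Tendsto (fun k => |s k ω| / |F m ω|) atTop (𝓝 1) := by
              have h11 : Filter.Tendsto (fun k => |s k ω|) atTop (𝓝 (|F m ω|)) :=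
                Filter.Tendsto.congr (fun k => (abs_of_nonneg (hs k).1).symm) h9
              have h12 := h11.div_const (|F m ω|)
              rw [div_self h0] at h12
              exact h12
            have h13 : Filter.Tendsto (fun k => |h i ω| * (1 - |s k ω| / |F m ω|)) atTop
                (𝓝 (|h i ω| * (1 - 1))) := (h10.const_sub 1).const_mul _
            refine Filter.Tendsto.congr (fun k => (hdiff k).symm) ?_
            simpa using h13
      -- limits of the norms
      set ℓ : Fin p → ℝ := fun i => ⨆ k, X.nrm (h' k i) with hldef
      have hnb : ∀ i (k : ℕ), X.nrm (h' k i) ≤ X.nrm (h i) := fun i k =>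
        X.ideal_nrm (hhmem i) ((htr k).1 i) ((htr k).2.1 i)
      have hbddr : ∀ i, BddAbove (Set.range fun k => X.nrm (h' k i)) := fun i =>
        ⟨X.nrm (h i), by rintro x ⟨k, rfl⟩; exact hnb i k⟩
      have hnmono : ∀ i, Monotone fun k => X.nrm (h' k i) := by
        intro i k l hkl
        refine X.ideal_nrm ((htr l).1 i) ((htr k).1 i) ?_
        filter_upwards [hptfacts] with ω hω
        exact (hω i).1 k l hkl
      have hltend : ∀ i, Filter.Tendsto (fun k => X.nrm (h' k i)) atTop (𝓝 (ℓ i)) :=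
        fun i => tendsto_atTop_ciSup (hnmono i) (hbddr i)
      have hl0 : ∀ i, 0 ≤ ℓ i := fun i =>
        le_trans (X.nrm_nonneg (h' 0 i)) (le_ciSup (hbddr i) 0)
      have hdmem : ∀ (k : ℕ) i, X.Mem (fun ω => h i ω - h' k i ω) := by
        intro k i
        refine X.mem_congr (X.add_mem (hhmem i) (X.smul_mem (-1) ((htr k).1 i)))
          (Filter.Eventually.of_forall fun ω => ?_)
        show h i ω + (-1 : ℝ) • (h' k i ω) = h i ω - h' k i ω
        simp [smul_eq_mul]
        ring
      have hdnrm : ∀ i, Filter.Tendsto (fun k => X.nrm (fun ω => h i ω - h' k i ω))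
          atTop (𝓝 0) := by
        intro i
        have hG := hoc (fun k ω => |h i ω - h' k i ω|)
          (fun k => mem_abs X (hdmem k i))
          (by filter_upwards [hptfacts] with ω hω; exact (hω i).2.1)
          (by filter_upwards [hptfacts] with ω hω; exact (hω i).2.2)
        refine Filter.Tendsto.congr (fun k => ?_) hG
        exact nrm_abs X (hdmem k i)
      have hKle : ∀ i, X.nrm (h i) ≤ X.K * ℓ i := by
        intro i
        have hb : ∀ k : ℕ, X.nrm (h i) ≤
            X.K * (X.nrm (h' k i) + X.nrm (fun ω => h i ω - h' k i ω)) := by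
          intro k
          have he : X.nrm (h i) = X.nrm (h' k i + fun ω => h i ω - h' k i ω) := by
            refine X.nrm_congr (Filter.Eventually.of_forall fun ω => ?_)
            show h i ω = h' k i ω + (h i ω - h' k i ω)
            ring
          rw [he]
          exact X.nrm_add_le ((htr k).1 i) (hdmem k i)
        have htK : Filter.Tendsto
            (fun k => X.K * (X.nrm (h' k i) + X.nrm (fun ω => h i ω - h' k i ω)))
            atTop (𝓝 (X.K * (ℓ i + 0))) := ((hltend i).add (hdnrm i)).const_mul X.K
        have := ge_of_tendsto' htK hb
        rw [add_zero] at this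
        exact this
      have hsum_tend : Filter.Tendsto (fun k => ∑ i, X.nrm (h' k i) ^ q) atTop
          (𝓝 (∑ i, ℓ i ^ q)) :=
        tendsto_finset_sum _ fun i _ =>
          ((continuous_rpow_const hq.le).tendsto (ℓ i)).comp (hltend i)
      have hsum_le : ∑ i, ℓ i ^ q ≤ coreNrm μ X.Mem X.nrm q (F m) ^ q - L ^ q :=
        le_of_tendsto' hsum_tend hBle
      have hAle : ∑ i, X.nrm (h i) ^ q ≤ X.K ^ q * ∑ i, ℓ i ^ q := by
        calc ∑ i, X.nrm (h i) ^ q ≤ ∑ i, (X.K * ℓ i) ^ q :=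
              Finset.sum_le_sum fun i _ =>
                Real.rpow_le_rpow (X.nrm_nonneg _) (hKle i) hq.le
          _ = ∑ i, X.K ^ q * ℓ i ^ q := Finset.sum_congr rfl fun i _ =>
              Real.mul_rpow hK0.le (hl0 i)
          _ = X.K ^ q * ∑ i, ℓ i ^ q := (Finset.mul_sum _ _ _).symm
      have hfin : X.K ^ q * ∑ i, ℓ i ^ q ≤
          X.K ^ q * (coreNrm μ X.Mem X.nrm q (F m) ^ q - L ^ q) :=
        mul_le_mul_of_nonneg_left hsum_le (Real.rpow_nonneg hK0.le q)
      linarith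
    have hexp : (X.K ^ q - 1) * coreNrm μ X.Mem X.nrm q (F m) ^ q
        = X.K ^ q * coreNrm μ X.Mem X.nrm q (F m) ^ q
          - coreNrm μ X.Mem X.nrm q (F m) ^ q := by ring
    rw [hexp]
    rw [mul_sub] at hkey0
    linarith
  have htm : Filter.Tendsto (fun m => (X.K ^ q - 1) * coreNrm μ X.Mem X.nrm q (F m) ^ q)
      atTop (𝓝 ((X.K ^ q - 1) * L ^ q)) :=
    (((continuous_rpow_const hq.le).tendsto L).comp hφL).const_mul _
  have h2 : X.K ^ q * L ^ q ≤ (X.K ^ q - 1) * L ^ q := ge_of_tendsto' htm key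
  have hLq0 : 0 ≤ L ^ q := Real.rpow_nonneg hL0 q
  by_contra hne
  have hp : 0 < L := lt_of_le_of_ne hL0 (Ne.symm hne)
  have := Real.rpow_pos_of_pos hp q
  nlinarith

end QCoreAux
end Parts

/-- `qX(μ)` is `q`-concave (with the explicit inequality with constant `1`), and in
consequence it is σ-order continuous. -/
theorem core_qConcave (μ : Measure Ω) (X : QBFS μ) (hoc : SigmaOC μ X.Mem X.nrm)
    (q : ℝ) (hq : 0 < q) :
    (∀ (n : ℕ) (f : Fin n → Ω → ℝ), (∀ j, coreMem μ X.Mem X.nrm q (f j)) →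
      ∑ j, coreNrm μ X.Mem X.nrm q (f j) ^ q ≤
        coreNrm μ X.Mem X.nrm q (fun ω => (∑ j, |f j ω| ^ q) ^ (1 / q)) ^ q) ∧
    SpaceQConcave (coreMem μ X.Mem X.nrm q) (coreNrm μ X.Mem X.nrm q) q ∧
    SigmaOC μ (coreMem μ X.Mem X.nrm q) (coreNrm μ X.Mem X.nrm q) :=
  ⟨fun n f hf => QCoreAux.part1 X hq f hf, QCoreAux.part2 X hq, QCoreAux.core_soc X hq hoc⟩
end
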